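/- arXiv:2603.08698 — 8 statements merged into one kernel-verified Lean document; each statement's English description precedes it below -/
import Mathlib

section
/- Let R = k[x_1,...,x_n] be a polynomial ring over a field k with maximal ideal m = (x_1,...,x_n), and let q = p^e be a power of a prime. For any positive integer t, the colon ideal (m^[q] : m^t) equals R if t ≥ nq - n + 1, and equals m^[q] + m^{nq-n+1-t} if t < nq - n + 1, where m^[q] = (x_1^q,...,x_n^q). -/
open MvPolynomial

namespace Stmt0Aux

open Pointwise

variable {k : Type*} [Field k] {n : ℕ}

/-- Total degree of an exponent finsupp on `Fin n`. -/
def deg (d : Fin n →₀ ℕ) : ℕ := ∑ i, d i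

lemma deg_add (a b : Fin n →₀ ℕ) : deg (a + b) = deg a + deg b := by
  simp [deg, Finset.sum_add_distrib]

lemma deg_single (i : Fin n) (m : ℕ) : deg (Finsupp.single i m) = m := by
  simp [deg, Finsupp.single_apply]

lemma deg_zero : deg (0 : Fin n →₀ ℕ) = 0 := by simp [deg]

lemma deg_eq_zero_iff {d : Fin n →₀ ℕ} : deg d = 0 ↔ d = 0 := by
  constructor
  · intro h
    ext i
    have := Finset.sum_eq_zero_iff.mp h i (Finset.mem_univ i)
    simpa using this
  · rintro rfl; exact deg_zero

/-- sub-finsupp extraction -/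
lemma exists_le_deg_eq (m : ℕ) (d : Fin n →₀ ℕ) (h : m ≤ deg d) :
    ∃ c : Fin n →₀ ℕ, c ≤ d ∧ deg c = m := by
  induction m with
  | zero => exact ⟨0, bot_le, deg_zero⟩
  | succ m ih =>
    obtain ⟨c, hc, hdc⟩ := ih (le_of_lt (Nat.lt_of_succ_le h))
    have hlt : deg c < deg d := hdc ▸ Nat.lt_of_succ_le h
    have : ∃ i, c i < d i := by
      by_contra hcon
      push_neg at hcon
      have hcd : c = d := le_antisymm hc (Finsupp.le_def.mpr hcon)
      rw [hcd] at hlt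
      exact lt_irrefl _ hlt
    obtain ⟨i, hi⟩ := this
    refine ⟨c + Finsupp.single i 1, ?_, by rw [deg_add, deg_single, hdc]⟩
    intro j
    rcases eq_or_ne j i with rfl | hji
    · simpa [Finsupp.single_apply] using hi
    · have hcj := hc j
      simp only [Finsupp.add_apply, Finsupp.single_apply, if_neg (Ne.symm hji)]
      omega

/-- product of monomial ideals -/
lemma span_monomial_mul (S T : Set (Fin n →₀ ℕ)) :
    Ideal.span ((fun d => monomial d (1 : k)) '' S) *
        Ideal.span ((fun d => monomial d (1 : k)) '' T) =
      Ideal.span ((fun d => monomial d (1 : k)) '' (S + T)) := by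
  rw [Ideal.span_mul_span']
  congr 1
  ext z
  constructor
  · rintro ⟨x, ⟨a, ha, rfl⟩, y, ⟨b, hb, rfl⟩, rfl⟩
    exact ⟨a + b, Set.add_mem_add ha hb, by simp [monomial_mul]⟩
  · rintro ⟨c, hc, rfl⟩
    obtain ⟨a, ha, b, hb, rfl⟩ := Set.mem_add.mp hc
    exact ⟨monomial a 1, ⟨a, ha, rfl⟩, monomial b 1, ⟨b, hb, rfl⟩, by simp [monomial_mul]⟩

lemma span_Xq_eq (q : ℕ) :
    Ideal.span (Set.range fun i : Fin n => (X i : MvPolynomial (Fin n) k) ^ q) =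
    Ideal.span ((fun d => monomial d (1 : k)) '' Set.range (fun i : Fin n => Finsupp.single i q)) := by
  have hfun : (fun i : Fin n => (X i : MvPolynomial (Fin n) k) ^ q) =
      (fun d => monomial d (1 : k)) ∘ (fun i : Fin n => Finsupp.single i q) := by
    funext i
    simp [Function.comp, X_pow_eq_monomial]
  rw [hfun, Set.range_comp]

lemma span_X_eq : Ideal.span (Set.range (X : Fin n → MvPolynomial (Fin n) k)) =
    Ideal.span ((fun d => monomial d (1 : k)) '' Set.range (fun i : Fin n => Finsupp.single i 1)) := by
  have h := span_Xq_eq (k := k) (n := n) 1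
  simp only [pow_one] at h
  exact h

lemma span_X_pow (t : ℕ) :
    (Ideal.span (Set.range (X : Fin n → MvPolynomial (Fin n) k))) ^ t =
      Ideal.span ((fun d => monomial d (1 : k)) '' {d | deg d = t}) := by
  induction t with
  | zero =>
    have hset : {d : Fin n →₀ ℕ | deg d = 0} = {0} := by
      ext d; simp [deg_eq_zero_iff]
    rw [pow_zero, hset, Set.image_singleton]
    have h1 : (monomial (0 : Fin n →₀ ℕ) (1 : k)) = 1 := by simp
    rw [h1, Ideal.span_singleton_one, Ideal.one_eq_top]
  | succ t ih =>
    have hset : (Set.range fun i : Fin n => Finsupp.single i 1) + {d | deg d = t} =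
        {d : Fin n →₀ ℕ | deg d = t + 1} := by
      ext d
      constructor
      · intro hd
        obtain ⟨a, ⟨i, rfl⟩, b, hb, rfl⟩ := Set.mem_add.mp hd
        simp only [Set.mem_setOf_eq] at hb ⊢
        rw [deg_add, deg_single, hb]; omega
      · intro hd
        simp only [Set.mem_setOf_eq] at hd
        have hex : ∃ i, d i ≠ 0 := by
          by_contra hcon
          push_neg at hcon
          have h0 : d = 0 := Finsupp.ext hcon
          rw [h0, deg_zero] at hd; omega
        obtain ⟨i, hi⟩ := hex
        have hle : Finsupp.single i 1 ≤ d :=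
          Finsupp.single_le_iff.mpr (Nat.one_le_iff_ne_zero.mpr hi)
        have hadd : Finsupp.single i 1 + (d - Finsupp.single i 1) = d := add_tsub_cancel_of_le hle
        refine Set.mem_add.mpr ⟨Finsupp.single i 1, ⟨i, rfl⟩, d - Finsupp.single i 1, ?_, hadd⟩
        simp only [Set.mem_setOf_eq]
        have hd2 := deg_add (Finsupp.single i 1) (d - Finsupp.single i 1)
        rw [hadd, deg_single, hd] at hd2
        omega
    rw [pow_succ, ih, span_X_eq, mul_comm, span_monomial_mul, hset]

end Stmt0Aux

open Stmt0Aux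

/-- For `R = k[x_1,…,x_n]` with `m = (x_1,…,x_n)` and `q = p^e`,
the colon ideal `(m^[q] : m^t)` is `R` if `t ≥ nq - n + 1` and
`m^[q] + m^(nq-n+1-t)` otherwise. -/
theorem stmt0 (k : Type*) [Field k] (p : ℕ) (hp : p.Prime) [CharP k p]
    (n e : ℕ) (q : ℕ) (hq : q = p ^ e) (t : ℕ) (ht : 0 < t) :
    (Ideal.span (Set.range fun i : Fin n => (X i : MvPolynomial (Fin n) k) ^ q)).colon
        (((Ideal.span (Set.range (X : Fin n → MvPolynomial (Fin n) k))) ^ t : Ideal (MvPolynomial (Fin n) k)) :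
          Set (MvPolynomial (Fin n) k)) =
      if n * q - n + 1 ≤ t then ⊤
      else
        Ideal.span (Set.range fun i : Fin n => (X i : MvPolynomial (Fin n) k) ^ q) ⊔
          (Ideal.span (Set.range (X : Fin n → MvPolynomial (Fin n) k))) ^ (n * q - n + 1 - t) := by
  classical
  have hq1 : 1 ≤ q := hq ▸ Nat.one_le_pow _ _ hp.pos
  set I := Ideal.span (Set.range fun i : Fin n => (X i : MvPolynomial (Fin n) k) ^ q) with hI
  set M := Ideal.span (Set.range (X : Fin n → MvPolynomial (Fin n) k)) with hM
  set N := n * q - n + 1 with hN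
  have hNval : N = n * (q - 1) + 1 := by
    rw [hN]
    congr 1
    rw [Nat.mul_sub, Nat.mul_one]
  have pigeon : ∀ d : Fin n →₀ ℕ, n * (q - 1) + 1 ≤ deg d → ∃ i, q ≤ d i := by
    intro d hd
    by_contra hcon
    push_neg at hcon
    have hle : deg d ≤ ∑ _i : Fin n, (q - 1) :=
      Finset.sum_le_sum (fun i _ => by have := hcon i; omega)
    simp only [Finset.sum_const, Finset.card_univ, Fintype.card_fin, smul_eq_mul] at hle
    omega
  have hmN : M ^ N ≤ I := by
    rw [hM, hI, span_X_pow, span_Xq_eq, Ideal.span_le]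
    rintro f ⟨d, hd, rfl⟩
    rw [SetLike.mem_coe, mem_ideal_span_monomial_image]
    intro xi hxi
    rw [support_monomial, if_neg one_ne_zero, Finset.mem_singleton] at hxi
    subst hxi
    obtain ⟨i, hi⟩ := pigeon xi (by rw [Set.mem_setOf_eq.mp hd, hNval])
    exact ⟨Finsupp.single i q, ⟨i, rfl⟩, Finsupp.single_le_iff.mpr hi⟩
  by_cases hcase : N ≤ t
  · rw [if_pos hcase, eq_top_iff]
    intro f _
    rw [Submodule.mem_colon]
    intro g hg
    rw [smul_eq_mul]
    exact Ideal.mul_mem_left _ f (hmN (Ideal.pow_le_pow_right hcase hg))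
  · rw [if_neg hcase]
    push_neg at hcase
    refine le_antisymm ?_ (sup_le ?_ ?_)
    · -- hard direction
      intro f hf
      rw [hI, hM, span_Xq_eq, span_X_pow, ← Ideal.span_union, ← Set.image_union]
      rw [mem_ideal_span_monomial_image]
      intro d hd
      by_cases hqi : ∃ i, q ≤ d i
      · obtain ⟨i, hi⟩ := hqi
        exact ⟨Finsupp.single i q, Or.inl ⟨i, rfl⟩, Finsupp.single_le_iff.mpr hi⟩
      · by_cases hdeg : N - t ≤ deg d
        · obtain ⟨c, hc, hcdeg⟩ := exists_le_deg_eq (N - t) d hdeg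
          exact ⟨c, Or.inr hcdeg, hc⟩
        · exfalso
          push_neg at hqi hdeg
          set E : Fin n →₀ ℕ := Finsupp.equivFunOnFinite.symm (fun i => q - 1 - d i) with hE
          have hEapp : ∀ i, E i = q - 1 - d i := fun i => rfl
          have hdegE : deg E + deg d = n * (q - 1) := by
            rw [deg, deg, ← Finset.sum_add_distrib]
            rw [Finset.sum_congr rfl
              (fun i _ => show E i + d i = q - 1 by
                rw [hEapp]; have := hqi i; omega)]
            simp [Finset.sum_const, Finset.card_univ]
          have htE : t ≤ deg E := by omega
          obtain ⟨b, hb, hbdeg⟩ := exists_le_deg_eq t E htE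
          have hbmem : (monomial b 1 : MvPolynomial (Fin n) k) ∈ M ^ t := by
            rw [hM, span_X_pow]
            exact Ideal.subset_span ⟨b, hbdeg, rfl⟩
          have hfb : f * monomial b 1 ∈ I := by
            have h2 := Submodule.mem_colon.mp hf _ hbmem
            rwa [smul_eq_mul] at h2
          rw [hI, span_Xq_eq, mem_ideal_span_monomial_image] at hfb
          have hsupp : d + b ∈ (f * monomial b (1 : k)).support := by
            rw [MvPolynomial.mem_support_iff, coeff_mul_monomial, mul_one]
            exact MvPolynomial.mem_support_iff.mp hd
          obtain ⟨si, ⟨i, rfl⟩, hsi⟩ := hfb _ hsupp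
          have h3 : q ≤ (d + b) i := Finsupp.single_le_iff.mp hsi
          rw [Finsupp.add_apply] at h3
          have hbi : b i ≤ q - 1 - d i := by have := hb i; rwa [hEapp] at this
          have := hqi i
          omega
    · intro f hf
      rw [Submodule.mem_colon]
      intro g hg
      rw [smul_eq_mul]
      exact Ideal.mul_mem_right _ _ hf
    · intro f hf
      rw [Submodule.mem_colon]
      intro g hg
      rw [smul_eq_mul]
      have h4 : f * g ∈ M ^ (N - t) * M ^ t := Ideal.mul_mem_mul hf hg
      rw [← pow_add, Nat.sub_add_cancel (le_of_lt hcase)] at h4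
      exact hmN h4
end

section
/- Let R = k[x_1,...,x_n] be a polynomial ring over a field, let v be a monomial valuation on R with v(x_i) ≥ 0 for all i, and for real λ let a_λ = {f : v(f) ≥ λ} and a_λ^+ = {f : v(f) > λ}. Then for every positive integer q and real λ > 0, the colon ideal ((x_1^q,...,x_n^q) : a_λ) equals (x_1^q,...,x_n^q) + a^+_{(q-1)v(x_1⋯x_n) - λ}. -/
open MvPolynomial

/-- The value of a monomial valuation (with values `v i` on the variables)
on a monomial with exponent vector `a`. -/
noncomputable def monVal {n : ℕ} (v : Fin n → ℝ) (a : Fin n →₀ ℕ) : ℝ :=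
  ∑ i, (a i : ℝ) * v i

/-- The valuation ideal `a_λ = {f : v(f) ≥ λ}` of a monomial valuation, as a set. -/
def valIdeal (k : Type*) [Field k] {n : ℕ} (v : Fin n → ℝ) (l : ℝ) :
    Set (MvPolynomial (Fin n) k) :=
  {f | ∀ a ∈ f.support, l ≤ monVal v a}

/-- The valuation ideal `a_λ^+ = {f : v(f) > λ}` of a monomial valuation, as a set. -/
def valIdealPlus (k : Type*) [Field k] {n : ℕ} (v : Fin n → ℝ) (l : ℝ) :
    Set (MvPolynomial (Fin n) k) :=
  {f | ∀ a ∈ f.support, l < monVal v a}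

lemma mem_span_pow_iff {k : Type*} [Field k] {n q : ℕ} (f : MvPolynomial (Fin n) k) :
    f ∈ Ideal.span (Set.range fun i : Fin n => (X i : MvPolynomial (Fin n) k) ^ q) ↔
      ∀ a ∈ f.support, ∃ i, q ≤ a i := by
  have hr : (Set.range fun i : Fin n => (X i : MvPolynomial (Fin n) k) ^ q)
      = (fun s => monomial s (1 : k)) '' (Set.range fun i : Fin n => Finsupp.single i q) := by
    ext p
    constructor
    · rintro ⟨i, rfl⟩
      exact ⟨Finsupp.single i q, ⟨i, rfl⟩, (X_pow_eq_monomial).symm⟩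
    · rintro ⟨s, ⟨i, rfl⟩, rfl⟩
      exact ⟨i, X_pow_eq_monomial⟩
  rw [hr, mem_ideal_span_monomial_image]
  constructor <;> intro h a ha
  · obtain ⟨s, ⟨i, rfl⟩, hs⟩ := h a ha
    exact ⟨i, Finsupp.single_le_iff.mp hs⟩
  · obtain ⟨i, hi⟩ := h a ha
    exact ⟨Finsupp.single i q, ⟨i, rfl⟩, Finsupp.single_le_iff.mpr hi⟩

/-- for a monomial valuation `v ≥ 0` on `k[x_1,…,x_n]`, a positive
integer `q` and real `λ > 0`,
`((x_1^q,…,x_n^q) : a_λ) = (x_1^q,…,x_n^q) + a^+_{(q-1)·v(x_1⋯x_n) - λ}`. -/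
theorem stmt1 (k : Type*) [Field k] (n : ℕ) (v : Fin n → ℝ) (hv : ∀ i, 0 ≤ v i)
    (q : ℕ) (hq : 0 < q) (lam : ℝ) (hlam : 0 < lam) :
    {f : MvPolynomial (Fin n) k |
        ∀ g ∈ valIdeal k v lam,
          f * g ∈ Ideal.span (Set.range fun i : Fin n => (X i : MvPolynomial (Fin n) k) ^ q)} =
      {h : MvPolynomial (Fin n) k |
        ∃ u ∈ Ideal.span (Set.range fun i : Fin n => (X i : MvPolynomial (Fin n) k) ^ q),
          ∃ w ∈ valIdealPlus k v (((q : ℝ) - 1) * (∑ i, v i) - lam), h = u + w} := by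
  classical
  set μ : ℝ := ((q : ℝ) - 1) * (∑ i, v i) - lam with hμ
  ext f
  simp only [Set.mem_setOf_eq]
  constructor
  · intro hf
    -- per-monomial property
    have hprop : ∀ a ∈ f.support, (∃ i, q ≤ a i) ∨ μ < monVal v a := by
      intro a ha
      by_contra hcon
      push_neg at hcon
      obtain ⟨h1, h2⟩ := hcon
      set b : Fin n →₀ ℕ := Finsupp.equivFunOnFinite.symm (fun i => q - 1 - a i) with hbdef
      have hb : ∀ i, b i = q - 1 - a i := fun i => rfl
      have hab : ∀ i, a i + b i = q - 1 := by
        intro i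
        have := h1 i
        rw [hb i]
        omega
      have hsum : monVal v a + monVal v b = ((q : ℝ) - 1) * ∑ i, v i := by
        rw [monVal, monVal, ← Finset.sum_add_distrib, Finset.mul_sum]
        refine Finset.sum_congr rfl fun i _ => ?_
        rw [← add_mul]
        congr 1
        rw [← Nat.cast_add, hab i, Nat.cast_sub (by omega : 1 ≤ q), Nat.cast_one]
      have hg : monomial b (1 : k) ∈ valIdeal k v lam := by
        intro c hc
        rw [support_monomial, if_neg (one_ne_zero)] at hc
        rw [Finset.mem_singleton] at hc
        subst hc
        have : lam ≤ ((q : ℝ) - 1) * ∑ i, v i - monVal v a := by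
          rw [hμ] at h2; linarith
        linarith [hsum]
      have hmem := hf _ hg
      rw [mem_span_pow_iff] at hmem
      have habs : a + b ∈ (f * monomial b (1 : k)).support := by
        rw [mem_support_iff, coeff_mul_monomial, mul_one]
        exact mem_support_iff.mp ha
      obtain ⟨i, hi⟩ := hmem _ habs
      have : (a + b) i = q - 1 := by rw [Finsupp.add_apply]; exact hab i
      omega
    -- split f
    refine ⟨∑ a ∈ f.support.filter (fun a => ∃ i, q ≤ a i), monomial a (coeff a f), ?_,
            ∑ a ∈ f.support.filter (fun a => ¬ ∃ i, q ≤ a i), monomial a (coeff a f), ?_, ?_⟩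
    · rw [mem_span_pow_iff]
      intro c hc
      have := MvPolynomial.support_sum hc
      rw [Finset.mem_biUnion] at this
      obtain ⟨a, ha, hca⟩ := this
      rw [support_monomial] at hca
      by_cases h0 : coeff a f = 0
      · rw [if_pos h0] at hca; exact absurd hca (Finset.notMem_empty c)
      · rw [if_neg h0, Finset.mem_singleton] at hca
        subst hca
        exact (Finset.mem_filter.mp ha).2
    · intro c hc
      have := MvPolynomial.support_sum hc
      rw [Finset.mem_biUnion] at this
      obtain ⟨a, ha, hca⟩ := this
      rw [support_monomial] at hca
      by_cases h0 : coeff a f = 0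
      · rw [if_pos h0] at hca; exact absurd hca (Finset.notMem_empty c)
      · rw [if_neg h0, Finset.mem_singleton] at hca
        subst hca
        obtain ⟨ha', hna⟩ := Finset.mem_filter.mp ha
        rcases hprop c ha' with h | h
        · exact absurd h hna
        · exact h
    · conv_lhs => rw [f.as_sum]
      exact (Finset.sum_filter_add_sum_filter_not f.support _ _).symm
  · rintro ⟨u, hu, w, hw, rfl⟩ g hg
    rw [add_mul]
    refine Ideal.add_mem _ (Ideal.mul_mem_right g _ hu) ?_
    rw [mem_span_pow_iff]
    intro c hc
    have := MvPolynomial.support_mul w g hc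
    rw [Finset.mem_add] at this
    obtain ⟨a, ha, b, hb, rfl⟩ := this
    by_contra hcon
    push_neg at hcon
    have h1 := hw a ha
    have h2 := hg b hb
    have hle : monVal v a + monVal v b ≤ ((q : ℝ) - 1) * ∑ i, v i := by
      rw [monVal, monVal, ← Finset.sum_add_distrib, Finset.mul_sum]
      refine Finset.sum_le_sum fun i _ => ?_
      rw [← add_mul]
      refine mul_le_mul_of_nonneg_right ?_ (hv i)
      have h3 := hcon i
      rw [Finsupp.add_apply] at h3
      have h4 : a i + b i + 1 ≤ q := by omega
      have := Nat.cast_le (α := ℝ).mpr h4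
      push_cast at this
      linarith
    rw [hμ] at h1
    linarith
end

section
/- Let μ_0,...,μ_s : Z^n → Q be linear maps and U ⊆ Z^n a finite set. Then there exists a linear map μ : Z^n → Z such that for all u, v ∈ U, μ(u) < μ(v) holds if and only if there exists 0 ≤ k ≤ s with μ_k(u) < μ_k(v) and μ_ℓ(u) = μ_ℓ(v) for all 0 ≤ ℓ ≤ k-1. -/
/-- Lemma A: integerize a rational linear functional preserving order. -/
lemma lemA (n : ℕ) (μ : (Fin n → ℤ) →ₗ[ℤ] ℚ) :
    ∃ ν : (Fin n → ℤ) →ₗ[ℤ] ℤ, ∀ x y, (ν x < ν y ↔ μ x < μ y) := by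
  set c : Fin n → ℚ := fun i => μ (Pi.single i 1) with hc
  set d : ℕ := ∏ i, (c i).den with hd
  have hdpos : 0 < d := Finset.prod_pos (fun i _ => (c i).pos)
  have hdvd : ∀ i, ((c i).den : ℤ) ∣ (d : ℤ) := by
    intro i
    exact_mod_cast Int.natCast_dvd_natCast.mpr (Finset.dvd_prod_of_mem _ (Finset.mem_univ i))
  choose m hm using hdvd
  set a : Fin n → ℤ := fun i => m i * (c i).num with ha
  have key : ∀ i, (a i : ℚ) = d * c i := by
    intro i
    have h1 : (d : ℚ) = (c i).den * m i := by exact_mod_cast hm i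
    have h2 : (c i) * (c i).den = (c i).num := Rat.mul_den_eq_num _
    push_cast [ha]
    rw [h1, ← h2]; ring
  refine ⟨∑ i, a i • LinearMap.proj i, ?_⟩
  have hν : ∀ x : Fin n → ℤ, (((∑ i, a i • LinearMap.proj i : (Fin n → ℤ) →ₗ[ℤ] ℤ) x : ℤ) : ℚ)
      = d * μ x := by
    intro x
    have hx : (x : Fin n → ℤ) = ∑ i, (x i) • Pi.single i (1 : ℤ) := by
      conv_lhs => rw [← Finset.univ_sum_single x]
      congr 1; ext i j
      simp [Pi.single_apply, smul_eq_mul, mul_comm]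
    have hμx : μ x = ∑ i, (x i : ℚ) * c i := by
      conv_lhs => rw [hx]
      rw [map_sum]
      congr 1; ext i
      rw [map_smul]
      simp [zsmul_eq_mul, hc]
    simp only [LinearMap.sum_apply, LinearMap.smul_apply, LinearMap.proj_apply, smul_eq_mul]
    push_cast
    rw [hμx, Finset.mul_sum]
    congr 1; ext i
    rw [key i]; ring
  intro x y
  rw [show ((∑ i, a i • LinearMap.proj i : (Fin n → ℤ) →ₗ[ℤ] ℤ) x < (∑ i, a i • LinearMap.proj i : (Fin n → ℤ) →ₗ[ℤ] ℤ) y) ↔ (((∑ i, a i • LinearMap.proj i : (Fin n → ℤ) →ₗ[ℤ] ℤ) x : ℚ) < ((∑ i, a i • LinearMap.proj i : (Fin n → ℤ) →ₗ[ℤ] ℤ) y : ℚ)) from (Int.cast_lt).symm, hν x, hν y]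
  constructor
  · intro h
    exact lt_of_mul_lt_mul_left h (by positivity)
  · intro h
    exact mul_lt_mul_of_pos_left h (by exact_mod_cast hdpos)


lemma lemB (n : ℕ) : ∀ (s : ℕ) (νs : Fin (s + 1) → ((Fin n → ℤ) →ₗ[ℤ] ℤ))
    (U : Finset (Fin n → ℤ)),
    ∃ μ : (Fin n → ℤ) →ₗ[ℤ] ℤ, ∀ u ∈ U, ∀ v ∈ U,
      (μ u < μ v ↔
        ∃ k : Fin (s + 1), νs k u < νs k v ∧ ∀ l : Fin (s + 1), l < k → νs l u = νs l v) := by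
  intro s
  induction s with
  | zero =>
    intro νs U
    refine ⟨νs 0, fun u hu v hv => ?_⟩
    constructor
    · intro h
      exact ⟨0, h, fun l hl => absurd hl (by simp [Fin.lt_def])⟩
    · rintro ⟨k, hk, -⟩
      rwa [Fin.fin_one_eq_zero k] at hk
  | succ s ih =>
    intro νs U
    obtain ⟨μ', h'⟩ := ih (fun k => νs k.succ) U
    set B : ℤ := ∑ u ∈ U, ∑ v ∈ U, |μ' u - μ' v| with hB
    have hM : ∀ u ∈ U, ∀ v ∈ U, |μ' u - μ' v| < B + 1 := by
      intro u hu v hv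
      have h1 : |μ' u - μ' v| ≤ ∑ w ∈ U, |μ' u - μ' w| :=
        Finset.single_le_sum (f := fun w => |μ' u - μ' w|) (fun w _ => abs_nonneg _) hv
      have h2' : ∑ w ∈ U, |μ' u - μ' w| ≤ B := by
        rw [hB]
        exact Finset.single_le_sum (f := fun z => ∑ w ∈ U, |μ' z - μ' w|)
          (fun z _ => Finset.sum_nonneg (fun w _ => abs_nonneg _)) hu
      omega
    refine ⟨(B + 1) • νs 0 + μ', fun u hu v hv => ?_⟩
    have habs := hM u hu v hv
    simp only [LinearMap.add_apply, LinearMap.smul_apply, smul_eq_mul]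
    rcases lt_trichotomy (νs 0 u) (νs 0 v) with h0 | h0 | h0
    · constructor
      · intro _
        exact ⟨0, h0, fun l hl => absurd hl (by simp [Fin.lt_def])⟩
      · intro _
        have h1 : νs 0 v - νs 0 u ≥ 1 := by omega
        have habs' : |μ' u - μ' v| < B + 1 := habs
        rw [abs_lt] at habs'
        nlinarith
    · rw [h0]
      have hiff : μ' u < μ' v ↔ _ := h' u hu v hv
      constructor
      · intro h
        have h2 : μ' u < μ' v := by omega
        obtain ⟨k', hk', hl'⟩ := hiff.mp h2
        refine ⟨k'.succ, hk', fun l hl => ?_⟩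
        rcases Fin.eq_zero_or_eq_succ l with rfl | ⟨l', rfl⟩
        · exact h0
        · exact hl' l' (Fin.succ_lt_succ_iff.mp hl)
      · rintro ⟨k, hk, hl⟩
        rcases Fin.eq_zero_or_eq_succ k with rfl | ⟨k', rfl⟩
        · omega
        · have h2 : μ' u < μ' v := hiff.mpr ⟨k', hk, fun l' hl' =>
            hl l'.succ (Fin.succ_lt_succ_iff.mpr hl')⟩
          omega
    · constructor
      · intro h
        have h1 : νs 0 u - νs 0 v ≥ 1 := by omega
        rw [abs_lt] at habs
        nlinarith
      · rintro ⟨k, hk, hl⟩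
        rcases Fin.eq_zero_or_eq_succ k with rfl | ⟨k', rfl⟩
        · omega
        · have := hl 0 (Fin.succ_pos k')
          omega

/-- order-preserving maps also preserve equality -/
lemma lemEq {α : Type*} (f : α → ℤ) (g : α → ℚ)
    (h : ∀ x y, f x < f y ↔ g x < g y) (x y : α) : f x = f y ↔ g x = g y := by
  have h1 := h x y
  have h2 := h y x
  constructor
  · intro he
    rcases lt_trichotomy (g x) (g y) with hg | hg | hg
    · exact absurd (h1.mpr hg) (by omega)
    · exact hg
    · exact absurd (h2.mpr hg) (by omega)
  · intro he
    rcases lt_trichotomy (f x) (f y) with hf | hf | hf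
    · exact absurd (h1.mp hf) (by simp [he])
    · exact hf
    · exact absurd (h2.mp hf) (by simp [he])

/-- given linear maps `μ_0,…,μ_s : ℤ^n → ℚ` and a finite set
`U ⊆ ℤ^n`, there is a single integral linear functional `μ : ℤ^n → ℤ`
realizing, on `U`, the lexicographic refinement of the `μ_k`. -/
theorem stmt9 (n s : ℕ) (μs : Fin (s + 1) → ((Fin n → ℤ) →ₗ[ℤ] ℚ))
    (U : Finset (Fin n → ℤ)) :
    ∃ μ : (Fin n → ℤ) →ₗ[ℤ] ℤ, ∀ u ∈ U, ∀ v ∈ U,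
      (μ u < μ v ↔
        ∃ k : Fin (s + 1), μs k u < μs k v ∧ ∀ l : Fin (s + 1), l < k → μs l u = μs l v) := by
  choose νs hνs using fun k => lemA n (μs k)
  obtain ⟨μ, hμ⟩ := lemB n s νs U
  refine ⟨μ, fun u hu v hv => ?_⟩
  rw [hμ u hu v hv]
  constructor
  · rintro ⟨k, hk, hl⟩
    exact ⟨k, (hνs k u v).mp hk,
      fun l hlk => (lemEq (νs l) (μs l) (hνs l) u v).mp (hl l hlk)⟩
  · rintro ⟨k, hk, hl⟩
    exact ⟨k, (hνs k u v).mpr hk,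
      fun l hlk => (lemEq (νs l) (μs l) (hνs l) u v).mpr (hl l hlk)⟩
end

section
/- Let 0 < d_1 < ... < d_n be integers, d = (d_1,...,d_n), and ν_d(u) = u_1/d_1 + ... + u_n/d_n for u ∈ Z^n. Let S = S_2 ⊔ ... ⊔ S_{n-1} ⊆ Z_{≥0}^n be a finite set satisfying: (1) |u| = d_i for all u ∈ S_i; (2) for all u ∈ S, either u_1 ≥ 1 or ν_d(u) ≥ 1; (3) d_i·b_i ∉ S_i for all i; (4) some u ∈ S has ν_d(u) < 1. Then there exists a linear map λ : Z^n → Z and a unique index 2 ≤ m ≤ n-1 such that: λ(u) < λ(d_m b_m) for all u ∈ S_i with i ≠ m; max_{u ∈ S_m} λ(u) = λ(d_m b_m); and every u attaining this maximum satisfies ν_d(u) < 1 and u_1 ≥ 1. -/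
/-- `ν_d(u) = u_1/d_1 + ⋯ + u_n/d_n`. -/
noncomputable def nuD {n : ℕ} (d : Fin n → ℕ) (u : Fin n → ℕ) : ℚ :=
  ∑ i, (u i : ℚ) / (d i : ℚ)

/-- `d_i · b_i`, the `i`-th standard basis vector scaled by `d_i`. -/
def dB {n : ℕ} (d : Fin n → ℕ) (i : Fin n) : Fin n → ℕ :=
  fun j => if j = i then d i else 0

namespace Stmt10


def Dprod {n : ℕ} (d : Fin n → ℕ) : ℕ := ∏ k, d k

def Ecoef {n : ℕ} (d : Fin n → ℕ) (j : Fin n) : ℕ := ∏ k ∈ Finset.univ.erase j, d k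

def eF {n : ℕ} (d : Fin n → ℕ) (u : Fin n → ℕ) : ℤ :=
  (Dprod d : ℤ) - ∑ j, (Ecoef d j : ℤ) * (u j : ℤ)

lemma Ecoef_mul {n : ℕ} (d : Fin n → ℕ) (j : Fin n) : Ecoef d j * d j = Dprod d := by
  simpa [Ecoef, Dprod] using Finset.prod_erase_mul Finset.univ d (Finset.mem_univ j)

lemma Ecoef_pos {n : ℕ} {d : Fin n → ℕ} (hd : ∀ j, 0 < d j) (j : Fin n) : 0 < Ecoef d j :=
  Finset.prod_pos fun k _ => hd k

lemma Dprod_pos {n : ℕ} {d : Fin n → ℕ} (hd : ∀ j, 0 < d j) : 0 < Dprod d :=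
  Finset.prod_pos fun k _ => hd k

lemma eF_dB {n : ℕ} (d : Fin n → ℕ) (i : Fin n) : eF d (dB d i) = 0 := by
  have : ∑ j, (Ecoef d j : ℤ) * ((dB d i j : ℕ) : ℤ) = (Ecoef d i : ℤ) * (d i : ℤ) := by
    rw [Finset.sum_eq_single i]
    · simp [dB]
    · intro b _ hb; simp [dB, hb]
    · simp
  rw [eF, this]
  have := Ecoef_mul d i
  push_cast [← this]
  ring

lemma eF_cast {n : ℕ} {d : Fin n → ℕ} (hd : ∀ j, 0 < d j) (u : Fin n → ℕ) :
    (eF d u : ℚ) = (Dprod d : ℚ) * (1 - nuD d u) := by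
  rw [eF, nuD]
  push_cast
  rw [mul_sub, mul_one, Finset.mul_sum]
  congr 1
  refine Finset.sum_congr rfl fun j _ => ?_
  have hdj : (d j : ℚ) ≠ 0 := by exact_mod_cast (hd j).ne'
  have hE : (Ecoef d j : ℚ) * (d j : ℚ) = (Dprod d : ℚ) := by exact_mod_cast Ecoef_mul d j
  field_simp
  nlinarith [hE]

lemma eF_pos_iff {n : ℕ} {d : Fin n → ℕ} (hd : ∀ j, 0 < d j) (u : Fin n → ℕ) :
    0 < eF d u ↔ nuD d u < 1 := by
  have h := eF_cast hd u
  have hD : (0:ℚ) < (Dprod d : ℚ) := by exact_mod_cast Dprod_pos hd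
  constructor
  · intro h0
    have : (0:ℚ) < (eF d u : ℚ) := by exact_mod_cast h0
    nlinarith
  · intro h1
    have : (0:ℚ) < (eF d u : ℚ) := by nlinarith
    exact_mod_cast this

lemma eF_zero_iff {n : ℕ} {d : Fin n → ℕ} (hd : ∀ j, 0 < d j) (u : Fin n → ℕ) :
    eF d u = 0 ↔ nuD d u = 1 := by
  have h := eF_cast hd u
  have hD : (0:ℚ) < (Dprod d : ℚ) := by exact_mod_cast Dprod_pos hd
  constructor
  · intro h0
    have : (eF d u : ℚ) = 0 := by exact_mod_cast h0
    nlinarith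
  · intro h1
    have : (eF d u : ℚ) = 0 := by rw [h, h1]; ring
    exact_mod_cast this

/-- If `u` has degree `d i`, `ν(u) = 1`, and no support above `i`, then `u = d_i·b_i`. -/
lemma Zsupp {n : ℕ} {d : Fin n → ℕ} (hd : ∀ j, 0 < d j) (hdmono : StrictMono d)
    {u : Fin n → ℕ} {i : Fin n} (hsum : ∑ j, u j = d i) (hz : eF d u = 0)
    (htop : ∀ j, i < j → u j = 0) : u = dB d i := by
  have hEi : ∀ j, Ecoef d i * u j ≤ Ecoef d j * u j := by
    intro j
    rcases le_or_gt j i with hji | hij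
    · have hdj : d j ≤ d i := hdmono.monotone hji
      have h1 := Ecoef_mul d j
      have h2 := Ecoef_mul d i
      have := hd j
      exact Nat.mul_le_mul_right _ (by nlinarith)
    · rw [htop j hij]; simp
  have hsum2 : ∑ j, Ecoef d j * u j = Dprod d := by
    have : (∑ j, (Ecoef d j : ℤ) * (u j : ℤ)) = (Dprod d : ℤ) := by
      rw [eF] at hz; omega
    exact_mod_cast this
  have hlow : ∑ j, Ecoef d i * u j = Dprod d := by
    have hle : ∑ j, Ecoef d i * u j ≤ ∑ j, Ecoef d j * u j :=
      Finset.sum_le_sum fun j _ => hEi j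
    have hge : Dprod d ≤ ∑ j, Ecoef d i * u j := by
      rw [← Finset.mul_sum, hsum, Ecoef_mul d i]
    omega
  have heach : ∀ j ∈ Finset.univ, Ecoef d i * u j = Ecoef d j * u j := by
    rw [← Finset.sum_eq_sum_iff_of_le fun j _ => hEi j]
    rw [hsum2, hlow]
  have hzero : ∀ j, j ≠ i → u j = 0 := by
    intro j hj
    by_contra hu
    have hu' : 0 < u j := Nat.pos_of_ne_zero hu
    have : Ecoef d i = Ecoef d j := by
      have := heach j (Finset.mem_univ j)
      exact Nat.eq_of_mul_eq_mul_right hu' (by omega)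
    have hdd : d i = d j := by
      have h1 := Ecoef_mul d i
      have h2 := Ecoef_mul d j
      rw [this] at h1
      exact Nat.eq_of_mul_eq_mul_left (Ecoef_pos hd j) (by omega)
    exact hj (hdmono.injective hdd.symm)
  have hui : u i = d i := by
    have := hsum
    rw [Finset.sum_eq_single i (fun b _ hb => hzero b hb) (by simp)] at this
    exact this
  funext j
  rcases eq_or_ne j i with rfl | hj
  · simpa [dB] using hui
  · simp [dB, hj, hzero j hj]



def L {n : ℕ} (c : Fin n → ℤ) (u : Fin n → ℕ) : ℤ := ∑ j, c j * (u j : ℤ)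

lemma L_comb {n : ℕ} (N : ℤ) (cA c' : Fin n → ℤ) (u : Fin n → ℕ) :
    L (fun j => N * cA j + c' j) u = N * L cA u + L c' u := by
  simp only [L, Finset.mul_sum, ← Finset.sum_add_distrib]
  exact Finset.sum_congr rfl fun j _ => by ring

lemma L_dB {n : ℕ} (c : Fin n → ℤ) (d : Fin n → ℕ) (m : Fin n) :
    L c (dB d m) = c m * (d m : ℤ) := by
  rw [L, Finset.sum_eq_single m]
  · simp [dB]
  · intro b _ hb; simp [dB, hb]
  · simp

lemma COMB {n : ℕ} (U : Finset (Fin n → ℕ)) (hne : U.Nonempty)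
    (q : Fin n → ℕ) (cA c' : Fin n → ℤ)
    (hA : ∀ u ∈ U, L cA u ≤ L cA q)
    (hA0 : ∀ u ∈ U, L cA u = L cA q → L c' u ≤ L c' q) :
    ∃ c : Fin n → ℤ, (∀ u ∈ U, L c u ≤ L c q) ∧
      (∀ u ∈ U, (L c u = L c q ↔ (L cA u = L cA q ∧ L c' u = L c' q))) := by
  obtain ⟨w, hw, hwmax⟩ := Finset.exists_max_image U (fun u => L c' u - L c' q) hne
  set B : ℤ := L c' w - L c' q with hB
  set N : ℤ := 1 + max B 0 with hN
  have hNpos : 0 < N := by positivity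
  refine ⟨fun j => N * cA j + c' j, ?_, ?_⟩ <;> intro u hu
  · rw [L_comb, L_comb]
    rcases eq_or_lt_of_le (hA u hu) with h | h
    · have := hA0 u hu h
      nlinarith
    · have h1 : L cA u ≤ L cA q - 1 := by omega
      have h2 : L c' u - L c' q ≤ B := hwmax u hu
      have h3 : B ≤ max B 0 := le_max_left _ _
      nlinarith
  · rw [L_comb, L_comb]
    constructor
    · intro h
      rcases eq_or_lt_of_le (hA u hu) with he | hlt
      · exact ⟨he, by rw [he] at h; omega⟩
      · exfalso
        have h1 : L cA u ≤ L cA q - 1 := by omega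
        have h2 : L c' u - L c' q ≤ B := hwmax u hu
        have h3 : B ≤ max B 0 := le_max_left _ _
        nlinarith
    · rintro ⟨h1, h2⟩
      rw [h1, h2]

lemma CORE {n : ℕ} (hn0 : 0 < n) {d : Fin n → ℕ} (hdmono : StrictMono d) :
    ∀ k : ℕ, ∀ MP ZP : Finset (Fin n → ℕ),
    MP.Nonempty →
    (∀ u ∈ MP, 1 ≤ u ⟨0, hn0⟩ ∧
      ∃ i : Fin n, 0 < (i : ℕ) ∧ (i : ℕ) < n - 1 ∧ (i : ℕ) ≤ k ∧ ∑ j, u j = d i) →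
    (∀ u ∈ ZP, u ⟨0, hn0⟩ = 0 ∧
      ∃ i : Fin n, 0 < (i : ℕ) ∧ (i : ℕ) < n - 1 ∧ (∑ j, u j = d i) ∧ ∃ j, i < j ∧ 0 < u j) →
    ∃ m : Fin n, ∃ c : Fin n → ℤ,
      0 < (m : ℕ) ∧ (m : ℕ) < n - 1 ∧
      (∀ u ∈ MP ∪ ZP, L c u ≤ L c (dB d m)) ∧
      (∃ u ∈ MP, (∑ j, u j = d m) ∧ L c u = L c (dB d m)) ∧
      (∀ u ∈ MP ∪ ZP, L c u = L c (dB d m) → u ∈ MP ∧ ∑ j, u j = d m) := by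
  intro k
  induction k using Nat.strong_induction_on with
  | _ k IH =>
  intro MP ZP hMPne HM HZ
  set z : Fin n := ⟨0, hn0⟩ with hz
  -- maximal-degree element of MP
  obtain ⟨ut, hut, hutmax⟩ := Finset.exists_max_image MP (fun u => ∑ j, u j) hMPne
  obtain ⟨-, Mh, hMh1, hMh2, hMhk, hMhsum⟩ := HM ut hut
  -- the W functional
  set W : (Fin n → ℕ) → ℤ :=
    fun u => ∑ j : Fin n, if (Mh : ℕ) < (j : ℕ) then (u j : ℤ) else 0 with hWdef
  have hWnn : ∀ u, 0 ≤ W u := fun u =>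
    Finset.sum_nonneg fun j _ => by split <;> positivity
  have hWzero : ∀ u, W u = 0 → ∀ j : Fin n, (Mh : ℕ) < (j : ℕ) → u j = 0 := by
    intro u hWu j hj
    have h := (Finset.sum_eq_zero_iff_of_nonneg
      (fun j (_ : j ∈ Finset.univ) => by split <;> positivity)).1 hWu j (Finset.mem_univ j)
    rw [if_pos hj] at h
    exact_mod_cast h
  have hWdBzero : ∀ m : Fin n, (m : ℕ) ≤ (Mh : ℕ) → W (dB d m) = 0 := by
    intro m hm
    refine Finset.sum_eq_zero fun j _ => ?_
    split
    · next hjm =>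
      have : j ≠ m := by
        intro h; subst h; omega
      simp [dB, this]
    · rfl
  -- ratio-minimal element
  obtain ⟨u2, hu2, hu2min⟩ := Finset.exists_min_image MP
    (fun u => (W u : ℚ) / (u z : ℚ)) hMPne
  set a2 : ℤ := W u2 with ha2
  set b2 : ℤ := (u2 z : ℤ) with hb2
  have hb2pos : 0 < b2 := by
    have := (HM u2 hu2).1
    simp only [hb2]
    exact_mod_cast this
  -- level-A coefficients
  set cA : Fin n → ℤ :=
    fun j => (if j = z then a2 else 0) - b2 * (if (Mh : ℕ) < (j : ℕ) then 1 else 0) with hcA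
  have hLA : ∀ u : Fin n → ℕ, L cA u = a2 * (u z : ℤ) - b2 * W u := by
    intro u
    have : L cA u = ∑ j, ((if j = z then a2 else 0) * (u j : ℤ)
        - b2 * (if (Mh : ℕ) < (j : ℕ) then (u j : ℤ) else 0)) := by
      refine Finset.sum_congr rfl fun j _ => ?_
      simp only [hcA]
      split <;> split <;> ring
    rw [L] at this ⊢
    rw [this, Finset.sum_sub_distrib, ← Finset.mul_sum, Finset.sum_eq_single z]
    · simp [hWdef]
    · intro b _ hb; simp [hb]
    · simp
  have hcAq : ∀ m : Fin n, 0 < (m : ℕ) → (m : ℕ) ≤ (Mh : ℕ) → L cA (dB d m) = 0 := by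
    intro m hm0 hmMh
    rw [hLA, hWdBzero m hmMh]
    have : dB d m z = 0 := by
      simp only [dB]
      have : z ≠ m := by
        intro h
        rw [hz] at h
        have : (0:ℕ) = (m:ℕ) := congrArg Fin.val h
        omega
      simp [this]
    rw [this]
    ring
  have hkeyA : ∀ u ∈ MP, a2 * (u z : ℤ) ≤ b2 * W u := by
    intro u hu
    have hz2 : (0:ℚ) < ((u2 z : ℕ) : ℚ) := by
      have := (HM u2 hu2).1; positivity
    have hzu : (0:ℚ) < ((u z : ℕ) : ℚ) := by
      have h1 := (HM u hu).1
      have : 0 < u z := h1; positivity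
    have hmin := hu2min u hu
    rw [div_le_div_iff₀ hz2 hzu] at hmin
    have : (W u2 : ℚ) * ((u z : ℕ) : ℚ) ≤ ((u2 z : ℕ) : ℚ) * (W u : ℚ) := by
      nlinarith
    simp only [ha2, hb2]
    exact_mod_cast this
  have hAle : ∀ u ∈ MP ∪ ZP, L cA u ≤ 0 := by
    intro u hu
    rw [hLA]
    rcases Finset.mem_union.1 hu with hu | hu
    · have := hkeyA u hu; omega
    · have h0 := (HZ u hu).1
      rw [h0]
      have h1 := hWnn u
      have ha2nn : 0 ≤ a2 := hWnn u2
      push_cast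
      nlinarith
  -- survivors
  set M1 : Finset (Fin n → ℕ) := MP.filter (fun u => L cA u = 0) with hM1
  set Z1 : Finset (Fin n → ℕ) := ZP.filter (fun u => L cA u = 0) with hZ1
  have hu2M1 : u2 ∈ M1 := by
    rw [hM1, Finset.mem_filter]
    refine ⟨hu2, ?_⟩
    rw [hLA]; ring
  have hmemM1Z1 : ∀ u ∈ MP ∪ ZP, L cA u = 0 → u ∈ M1 ∪ Z1 := by
    intro u hu h0
    rcases Finset.mem_union.1 hu with hu | hu
    · exact Finset.mem_union_left _ (Finset.mem_filter.2 ⟨hu, h0⟩)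
    · exact Finset.mem_union_right _ (Finset.mem_filter.2 ⟨hu, h0⟩)
  have hZ1supp : ∀ u ∈ Z1, ∀ j : Fin n, (Mh : ℕ) < (j : ℕ) → u j = 0 := by
    intro u hu j hj
    rw [hZ1, Finset.mem_filter] at hu
    have h0 := (HZ u hu.1).1
    have heq := hu.2
    rw [hLA, h0] at heq
    have hbW : b2 * W u = 0 := by push_cast at heq; omega
    have hW0 : W u = 0 := by
      rcases mul_eq_zero.1 hbW with h | h
      · omega
      · exact h
    exact hWzero u hW0 j hj
  have hZ1lt : ∀ u ∈ Z1, ∑ j, u j < d Mh := by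
    intro u hu
    obtain ⟨-, i, -, -, hisum, j0, hij0, huj0⟩ := HZ u (Finset.mem_filter.1 hu).1
    have hj0le : (j0 : ℕ) ≤ (Mh : ℕ) := by
      by_contra h
      push_neg at h
      have := hZ1supp u hu j0 h
      omega
    have hiMh : (i : ℕ) < (Mh : ℕ) := lt_of_lt_of_le hij0 hj0le
    have : d i < d Mh := hdmono (by exact hiMh)
    omega
  -- maximal-degree element of M1
  have hM1ne : M1.Nonempty := ⟨u2, hu2M1⟩
  obtain ⟨ut1, hut1, hut1max⟩ := Finset.exists_max_image M1 (fun u => ∑ j, u j) hM1ne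
  have hut1MP : ut1 ∈ MP := (Finset.mem_filter.1 hut1).1
  obtain ⟨-, m1, hm11, hm12, -, hm1sum⟩ := HM ut1 hut1MP
  have hm1leMh : d m1 ≤ d Mh := by
    have := hutmax ut1 hut1MP
    omega
  by_cases hcase : d Mh ≤ d m1
  · -- finishing case : m := Mh
    have hm1Mh : m1 = Mh := hdmono.injective (le_antisymm hm1leMh hcase)
    subst hm1Mh
    set cB : Fin n → ℤ := fun _ => 1 with hcB
    have hLB : ∀ u : Fin n → ℕ, L cB u = ((∑ j, u j : ℕ) : ℤ) := by
      intro u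
      rw [L]
      push_cast
      exact Finset.sum_congr rfl fun j _ => one_mul _
    have hLBq : L cB (dB d m1) = (d m1 : ℤ) := by rw [L_dB]; ring
    have hq0 : L cA (dB d m1) = 0 := hcAq m1 hMh1 le_rfl
    obtain ⟨c, hc1, hc2⟩ := COMB (MP ∪ ZP) ⟨ut, Finset.mem_union_left _ hut⟩
      (dB d m1) cA cB
      (fun u hu => by rw [hq0]; exact hAle u hu)
      (by
        intro u hu h0
        rw [hq0] at h0
        rw [hLBq, hLB]
        rcases Finset.mem_union.1 (hmemM1Z1 u hu h0) with h | h
        · have h1 := hutmax u (Finset.mem_filter.1 h).1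
          rw [hMhsum] at h1
          exact_mod_cast h1
        · have := hZ1lt u h
          exact_mod_cast le_of_lt this)
    refine ⟨m1, c, hMh1, hMh2, hc1, ⟨ut1, hut1MP, hm1sum, ?_⟩, ?_⟩
    · rw [hc2 ut1 (Finset.mem_union_left _ hut1MP)]
      refine ⟨by rw [hq0]; exact (Finset.mem_filter.1 hut1).2, ?_⟩
      rw [hLBq, hLB, hm1sum]
    · intro u hu hequ
      obtain ⟨hA0, hB0⟩ := (hc2 u hu).1 hequ
      rw [hq0] at hA0
      rw [hLBq, hLB] at hB0
      have hsum : ∑ j, u j = d m1 := by exact_mod_cast hB0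
      rcases Finset.mem_union.1 (hmemM1Z1 u hu hA0) with h | h
      · exact ⟨(Finset.mem_filter.1 h).1, hsum⟩
      · exact absurd hsum (by have := hZ1lt u h; omega)
  · -- recursive case
    push_neg at hcase
    have hm1ltMh : (m1 : ℕ) < (Mh : ℕ) := by
      have : m1 < Mh := hdmono.lt_iff_lt.1 hcase
      exact this
    have hkk : (m1 : ℕ) < k := by omega
    have HM1 : ∀ u ∈ M1, 1 ≤ u z ∧
        ∃ i : Fin n, 0 < (i : ℕ) ∧ (i : ℕ) < n - 1 ∧ (i : ℕ) ≤ (m1 : ℕ) ∧ ∑ j, u j = d i := by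
      intro u hu
      have huMP := (Finset.mem_filter.1 hu).1
      obtain ⟨h1, i, hi1, hi2, -, hisum⟩ := HM u huMP
      refine ⟨h1, i, hi1, hi2, ?_, hisum⟩
      have hle : ∑ j, u j ≤ ∑ j, ut1 j := hut1max u hu
      rw [hm1sum] at hle
      rw [hisum] at hle
      have : i ≤ m1 := hdmono.le_iff_le.1 hle
      exact this
    have HZ1 : ∀ u ∈ Z1, u z = 0 ∧
        ∃ i : Fin n, 0 < (i : ℕ) ∧ (i : ℕ) < n - 1 ∧ (∑ j, u j = d i) ∧ ∃ j, i < j ∧ 0 < u j :=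
      fun u hu => HZ u (Finset.mem_filter.1 hu).1
    obtain ⟨m, c', hmi1, hmi2, hle', hex', hchar'⟩ := IH (m1 : ℕ) hkk M1 Z1 hM1ne HM1 HZ1
    -- m ≤ m1
    obtain ⟨u', hu'M1, hu'sum, hu'eq⟩ := hex'
    have hmlem1 : (m : ℕ) ≤ (m1 : ℕ) := by
      obtain ⟨-, i', -, -, hi'le, hi'sum⟩ := HM1 u' hu'M1
      have : d m = d i' := by rw [← hu'sum, hi'sum]
      have : m = i' := hdmono.injective this
      omega
    have hq0 : L cA (dB d m) = 0 := hcAq m hmi1 (by omega)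
    obtain ⟨c, hc1, hc2⟩ := COMB (MP ∪ ZP) ⟨ut, Finset.mem_union_left _ hut⟩
      (dB d m) cA c'
      (fun u hu => by rw [hq0]; exact hAle u hu)
      (by
        intro u hu h0
        rw [hq0] at h0
        exact hle' u (hmemM1Z1 u hu h0))
    refine ⟨m, c, hmi1, hmi2, hc1,
      ⟨u', (Finset.mem_filter.1 hu'M1).1, hu'sum, ?_⟩, ?_⟩
    · rw [hc2 u' (Finset.mem_union_left _ (Finset.mem_filter.1 hu'M1).1)]
      exact ⟨by rw [hq0]; exact (Finset.mem_filter.1 hu'M1).2, hu'eq⟩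
    · intro u hu hequ
      obtain ⟨hA0, hB0⟩ := (hc2 u hu).1 hequ
      rw [hq0] at hA0
      have hmem := hmemM1Z1 u hu hA0
      obtain ⟨hM1mem, hsum⟩ := hchar' u hmem hB0
      exact ⟨(Finset.mem_filter.1 hM1mem).1, hsum⟩


end Stmt10

open Stmt10 in
/-- the degeneration-order combinatorial lemma.  Coordinates are
0-indexed, so the paper's `u_1` is `u 0` and the sets `S_2,…,S_{n-1}` are the
`S i` with `0 < i < n - 1`. -/
theorem stmt10 (n : ℕ) (hn : 3 ≤ n) (d : Fin n → ℕ)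
    (hd0 : 0 < d ⟨0, by omega⟩) (hdmono : StrictMono d)
    (S : Fin n → Finset (Fin n → ℕ))
    (hSdom : ∀ i : Fin n, ((i : ℕ) = 0 ∨ (i : ℕ) = n - 1) → S i = ∅)
    (h1 : ∀ i : Fin n, ∀ u ∈ S i, ∑ j, u j = d i)
    (h2 : ∀ i : Fin n, ∀ u ∈ S i, 1 ≤ u ⟨0, by omega⟩ ∨ 1 ≤ nuD d u)
    (h3 : ∀ i : Fin n, dB d i ∉ S i)
    (h4 : ∃ i : Fin n, ∃ u ∈ S i, nuD d u < 1) :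
    ∃ lam : (Fin n → ℤ) →ₗ[ℤ] ℤ, ∃! m : Fin n,
      (0 < (m : ℕ) ∧ (m : ℕ) < n - 1) ∧
      (∀ i : Fin n, i ≠ m → ∀ u ∈ S i,
        lam (fun j => (u j : ℤ)) < lam (fun j => (dB d m j : ℤ))) ∧
      (∀ u ∈ S m, lam (fun j => (u j : ℤ)) ≤ lam (fun j => (dB d m j : ℤ))) ∧
      (∃ u ∈ S m, lam (fun j => (u j : ℤ)) = lam (fun j => (dB d m j : ℤ))) ∧
      (∀ u ∈ S m, lam (fun j => (u j : ℤ)) = lam (fun j => (dB d m j : ℤ)) →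
        nuD d u < 1 ∧ 1 ≤ u ⟨0, by omega⟩) := by
  have hn0 : 0 < n := by omega
  set z : Fin n := ⟨0, hn0⟩ with hzdef
  have hdpos : ∀ j, 0 < d j := by
    intro j
    exact lt_of_lt_of_le hd0 (hdmono.monotone (show (⟨0, hn0⟩ : Fin n) ≤ j by simp [Fin.le_def]))
  have hDpos : 0 < Dprod d := Dprod_pos hdpos
  -- the union of all the S i
  set SU : Finset (Fin n → ℕ) := Finset.univ.biUnion S with hSUdef
  have hSU : ∀ u ∈ SU, ∃ i : Fin n, 0 < (i : ℕ) ∧ (i : ℕ) < n - 1 ∧ u ∈ S i ∧ ∑ j, u j = d i := by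
    intro u hu
    obtain ⟨i, -, hi⟩ := Finset.mem_biUnion.1 hu
    refine ⟨i, ?_, ?_, hi, h1 i u hi⟩
    · rcases Nat.eq_zero_or_pos (i : ℕ) with h | h
      · exact absurd hi (by rw [hSdom i (Or.inl h)]; exact Finset.notMem_empty u)
      · exact h
    · rcases eq_or_ne (i : ℕ) (n - 1) with h | h
      · exact absurd hi (by rw [hSdom i (Or.inr h)]; exact Finset.notMem_empty u)
      · have := i.isLt; omega
  have hmemSU : ∀ (i : Fin n), ∀ u ∈ S i, u ∈ SU := by
    intro i u hu
    exact Finset.mem_biUnion.2 ⟨i, Finset.mem_univ i, hu⟩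
  -- elements with ν < 1 have first coordinate ≥ 1
  have hT1 : ∀ u ∈ SU, 0 < eF d u → 1 ≤ u z := by
    intro u hu hpos
    obtain ⟨i, -, -, hi, -⟩ := hSU u hu
    rcases h2 i u hi with h | h
    · exact h
    · have := (eF_pos_iff hdpos u).1 hpos
      linarith
  -- ratio-maximal element of T
  have hTne : (SU.filter (fun u => 0 < eF d u)).Nonempty := by
    obtain ⟨i, u, hu, hnu⟩ := h4
    exact ⟨u, Finset.mem_filter.2 ⟨hmemSU i u hu, (eF_pos_iff hdpos u).2 hnu⟩⟩
  obtain ⟨u0, hu0, hu0max⟩ := Finset.exists_max_image (SU.filter (fun u => 0 < eF d u))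
    (fun u => (eF d u : ℚ) / (u z : ℚ)) hTne
  have hu0SU : u0 ∈ SU := (Finset.mem_filter.1 hu0).1
  have hapos : 0 < eF d u0 := (Finset.mem_filter.1 hu0).2
  have hbpos : 0 < u0 z := hT1 u0 hu0SU hapos
  set a : ℤ := eF d u0 with hadef
  set b : ℤ := (u0 z : ℤ) with hbdef
  have hbpos' : (0:ℤ) < b := by simp only [hbdef]; exact_mod_cast hbpos
  -- level-0 coefficients
  set c0 : Fin n → ℤ := fun j => (if j = z then -a else 0) - b * (Ecoef d j : ℤ) with hc0def
  have hLc0 : ∀ u : Fin n → ℕ, L c0 u = (b * eF d u - a * (u z : ℤ)) - b * (Dprod d : ℤ) := by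
    intro u
    have h1' : L c0 u = ∑ j, ((if j = z then -a else 0) * (u j : ℤ)
        - b * ((Ecoef d j : ℤ) * (u j : ℤ))) := by
      rw [L]
      refine Finset.sum_congr rfl fun j _ => ?_
      simp only [hc0def]
      split <;> ring
    rw [h1', Finset.sum_sub_distrib, ← Finset.mul_sum, Finset.sum_eq_single z]
    · have : eF d u = (Dprod d : ℤ) - ∑ j, (Ecoef d j : ℤ) * (u j : ℤ) := rfl
      have hsum : (∑ j, (Ecoef d j : ℤ) * (u j : ℤ)) = (Dprod d : ℤ) - eF d u := by omega
      rw [hsum, if_pos (rfl : z = z)]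
      ring
    · intro j _ hj; simp [hj]
    · simp
  have hc0q : ∀ m : Fin n, 0 < (m : ℕ) → L c0 (dB d m) = -(b * (Dprod d : ℤ)) := by
    intro m hm
    rw [L_dB]
    have hmz : m ≠ z := by
      intro h
      have : (m : ℕ) = 0 := by rw [h]
      omega
    simp only [hc0def, if_neg hmz]
    have : (Ecoef d m : ℤ) * (d m : ℤ) = (Dprod d : ℤ) := by exact_mod_cast Ecoef_mul d m
    nlinarith [this]
  have hphi0 : ∀ u ∈ SU, b * eF d u - a * (u z : ℤ) ≤ 0 := by
    intro u hu
    rcases le_or_gt (eF d u) 0 with h | h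
    · have h1' : (0:ℤ) ≤ (u z : ℤ) := by positivity
      nlinarith
    · have huT : u ∈ SU.filter (fun u => 0 < eF d u) := Finset.mem_filter.2 ⟨hu, h⟩
      have hz1 : (0:ℚ) < ((u0 z : ℕ) : ℚ) := by positivity
      have hzu : (0:ℚ) < ((u z : ℕ) : ℚ) := by
        have := hT1 u hu h; positivity
      have hmax := hu0max u huT
      rw [div_le_div_iff₀ hzu hz1] at hmax
      have : (eF d u : ℚ) * ((u0 z : ℕ) : ℚ) ≤ (eF d u0 : ℚ) * ((u z : ℕ) : ℚ) := hmax
      have h2' : eF d u * (u0 z : ℤ) ≤ eF d u0 * (u z : ℤ) := by exact_mod_cast hmax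
      have h3' : b * eF d u ≤ a * (u z : ℤ) := by
        simp only [hadef, hbdef]
        rw [mul_comm]
        exact h2'
      omega
  -- the two survivor classes
  set MP : Finset (Fin n → ℕ) :=
    SU.filter (fun u => 0 < eF d u ∧ b * eF d u - a * (u z : ℤ) = 0) with hMPdef
  set ZP : Finset (Fin n → ℕ) :=
    SU.filter (fun u => eF d u = 0 ∧ u z = 0) with hZPdef
  have hchar0 : ∀ u ∈ SU, b * eF d u - a * (u z : ℤ) = 0 → u ∈ MP ∪ ZP := by
    intro u hu h0
    rcases lt_trichotomy (eF d u) 0 with h | h | h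
    · exfalso
      have h1' : (0:ℤ) ≤ (u z : ℤ) := by positivity
      nlinarith
    · have huz : u z = 0 := by
        rw [h] at h0
        have : a * (u z : ℤ) = 0 := by omega
        rcases mul_eq_zero.1 this with h' | h'
        · omega
        · exact_mod_cast h'
      exact Finset.mem_union_right _ (Finset.mem_filter.2 ⟨hu, h, huz⟩)
    · exact Finset.mem_union_left _ (Finset.mem_filter.2 ⟨hu, h, h0⟩)
  have hMPne : MP.Nonempty := by
    refine ⟨u0, Finset.mem_filter.2 ⟨hu0SU, hapos, ?_⟩⟩
    simp only [← hadef, ← hbdef]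
    ring
  have hMPZPsub : ∀ u ∈ MP ∪ ZP, u ∈ SU := by
    intro u hu
    rcases Finset.mem_union.1 hu with h | h
    · exact (Finset.mem_filter.1 h).1
    · exact (Finset.mem_filter.1 h).1
  -- apply CORE
  obtain ⟨m, c', hm1, hm2, hle', hex', hchar'⟩ := CORE hn0 hdmono n MP ZP hMPne
    (by
      intro u hu
      obtain ⟨huSU, hpos, -⟩ := Finset.mem_filter.1 hu
      obtain ⟨i, hi1, hi2, -, hisum⟩ := hSU u huSU
      exact ⟨hT1 u huSU hpos, i, hi1, hi2, le_of_lt i.isLt |>.trans (le_refl n), hisum⟩)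
    (by
      intro u hu
      obtain ⟨huSU, hzero, huz⟩ := Finset.mem_filter.1 hu
      obtain ⟨i, hi1, hi2, hiS, hisum⟩ := hSU u huSU
      refine ⟨huz, i, hi1, hi2, hisum, ?_⟩
      by_contra hcon
      push_neg at hcon
      have := Zsupp hdpos hdmono hisum hzero (fun j hj => by
        have := hcon j hj
        omega)
      exact h3 i (this ▸ hiS))
  -- combine level 0 with the CORE functional
  have hq0 : L c0 (dB d m) = -(b * (Dprod d : ℤ)) := hc0q m hm1
  obtain ⟨c, hc1, hc2⟩ := COMB SU ⟨u0, hu0SU⟩ (dB d m) c0 c'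
    (by
      intro u hu
      rw [hq0, hLc0]
      have := hphi0 u hu
      omega)
    (by
      intro u hu heq
      rw [hq0, hLc0] at heq
      have h0 : b * eF d u - a * (u z : ℤ) = 0 := by omega
      exact hle' u (hchar0 u hu h0))
  have hiffSU : ∀ u ∈ SU, (L c u = L c (dB d m) ↔
      (b * eF d u - a * (u z : ℤ) = 0 ∧ L c' u = L c' (dB d m))) := by
    intro u hu
    rw [hc2 u hu, hq0, hLc0]
    constructor
    · rintro ⟨ha', hb'⟩
      exact ⟨by omega, hb'⟩
    · rintro ⟨ha', hb'⟩
      exact ⟨by omega, hb'⟩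
  -- the integral linear functional
  set lam : (Fin n → ℤ) →ₗ[ℤ] ℤ :=
    { toFun := fun x => ∑ j, c j * x j
      map_add' := by
        intro x y
        simp only [Pi.add_apply, mul_add]
        rw [Finset.sum_add_distrib]
      map_smul' := by
        intro r x
        simp only [Pi.smul_apply, smul_eq_mul, RingHom.id_apply]
        rw [Finset.mul_sum]
        exact Finset.sum_congr rfl fun j _ => by ring } with hlamdef
  have hev : ∀ v : Fin n → ℕ, lam (fun j => (v j : ℤ)) = L c v := fun v => rfl
  -- the main properties
  have hstrict : ∀ i : Fin n, i ≠ m → ∀ u ∈ S i,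
      lam (fun j => (u j : ℤ)) < lam (fun j => (dB d m j : ℤ)) := by
    intro i hne u hu
    rw [hev u, hev (dB d m)]
    have huSU := hmemSU i u hu
    refine lt_of_le_of_ne (hc1 u huSU) ?_
    intro heq
    obtain ⟨h0, hceq⟩ := (hiffSU u huSU).1 heq
    obtain ⟨-, hsum⟩ := hchar' u (hchar0 u huSU h0) hceq
    have hdi : d i = d m := by rw [← h1 i u hu, hsum]
    exact hne (hdmono.injective hdi)
  have hweak : ∀ u ∈ S m, lam (fun j => (u j : ℤ)) ≤ lam (fun j => (dB d m j : ℤ)) := by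
    intro u hu
    rw [hev u, hev (dB d m)]
    exact hc1 u (hmemSU m u hu)
  have hexx : ∃ u ∈ S m, lam (fun j => (u j : ℤ)) = lam (fun j => (dB d m j : ℤ)) := by
    obtain ⟨u', hu'MP, hu'sum, hu'eq⟩ := hex'
    have hu'fil := Finset.mem_filter.1 hu'MP
    have hu'SU : u' ∈ SU := hu'fil.1
    obtain ⟨i, -, -, hiS, hisum⟩ := hSU u' hu'SU
    have him : i = m := hdmono.injective (by rw [← hisum, hu'sum])
    refine ⟨u', him ▸ hiS, ?_⟩
    rw [hev u', hev (dB d m)]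
    exact (hiffSU u' hu'SU).2 ⟨hu'fil.2.2, hu'eq⟩
  have hatt : ∀ u ∈ S m, lam (fun j => (u j : ℤ)) = lam (fun j => (dB d m j : ℤ)) →
      nuD d u < 1 ∧ 1 ≤ u z := by
    intro u hu heq
    rw [hev u, hev (dB d m)] at heq
    have huSU := hmemSU m u hu
    obtain ⟨h0, hceq⟩ := (hiffSU u huSU).1 heq
    obtain ⟨huMP, -⟩ := hchar' u (hchar0 u huSU h0) hceq
    have hfil := Finset.mem_filter.1 huMP
    exact ⟨(eF_pos_iff hdpos u).1 hfil.2.1, hT1 u huSU hfil.2.1⟩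
  refine ⟨lam, m, ⟨⟨hm1, hm2⟩, hstrict, hweak, hexx, hatt⟩, ?_⟩
  -- uniqueness
  rintro m' ⟨-, hstrict', -, hex'', -⟩
  by_contra hne
  obtain ⟨v', hv', hv'eq⟩ := hex''
  obtain ⟨w', hw', hw'eq⟩ := hexx
  have h1' := hstrict m' (fun h => hne h) v' hv'
  have h2' := hstrict' m (fun h => hne h.symm) w' hw'
  rw [hv'eq] at h1'
  rw [hw'eq] at h2'
  exact absurd (h1'.trans h2') (lt_irrefl _)
end

section
/- Let k be an algebraically closed field, R = k[x_1,...,x_j], and q a homogeneous prime ideal of height j-1 with x_j ∉ q. Then with respect to the reverse lexicographic order, for all m > 0 the initial ideal of q^m equals (x_1,...,x_{j-1})^m. -/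
open MvPolynomial

/-- The reverse lexicographic order on exponent vectors: `a > b` iff the last
coordinates agree down to some index where `a` is *smaller*. -/
def rvGT {m : ℕ} (a b : Fin m →₀ ℕ) : Prop :=
  ∃ i : Fin m, (∀ j : Fin m, i < j → a j = b j) ∧ a i < b i

-- The initial term of a polynomial with respect to the reverse lexicographic order.
open scoped Classical in
noncomputable def iniT {k : Type*} [Field k] {m : ℕ} (f : MvPolynomial (Fin m) k) :
    MvPolynomial (Fin m) k :=
  ∑ a ∈ f.support.filter fun a => ∀ b ∈ f.support, ¬ rvGT b a,
    monomial a (MvPolynomial.coeff a f)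

/-- The initial ideal: generated by initial terms of elements of `J`. -/
noncomputable def iniIdeal {k : Type*} [Field k] {m : ℕ}
    (J : Ideal (MvPolynomial (Fin m) k)) : Ideal (MvPolynomial (Fin m) k) :=
  Ideal.span {g | ∃ f ∈ J, g = iniT f}

/-- The height of an ideal: the infimum of the heights of primes containing it. -/
noncomputable def htIdeal {R : Type*} [CommRing R] (I : Ideal R) : ℕ∞ :=
  ⨅ p ∈ {p : PrimeSpectrum R | I ≤ p.asIdeal}, Order.height p
namespace Stmt12Aux

open scoped Classical

section RvGT

variable {m : ℕ}

lemma rvGT_of_last {n : ℕ} {a b : Fin (n + 1) →₀ ℕ}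
    (h : a (Fin.last n) < b (Fin.last n)) : rvGT a b :=
  ⟨Fin.last n, fun j hj => absurd hj (not_lt.2 (Fin.le_last j)), h⟩

lemma rvGT_asymm {a b : Fin m →₀ ℕ} (h1 : rvGT a b) (h2 : rvGT b a) : False := by
  obtain ⟨i, hi, hi'⟩ := h1
  obtain ⟨j, hj, hj'⟩ := h2
  rcases lt_trichotomy i j with h | h | h
  · exact absurd (hi j h) (by omega)
  · subst h; omega
  · exact absurd (hj i h) (by omega)

lemma rvGT_irrefl {a : Fin m →₀ ℕ} (h : rvGT a a) : False := rvGT_asymm h h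

lemma rvGT_trans {a b c : Fin m →₀ ℕ} (h1 : rvGT a b) (h2 : rvGT b c) : rvGT a c := by
  obtain ⟨i, hi, hi'⟩ := h1
  obtain ⟨j, hj, hj'⟩ := h2
  rcases lt_trichotomy i j with h | h | h
  · exact ⟨j, fun l hl => (hi l (h.trans hl)).trans (hj l hl), by rw [hi j h]; exact hj'⟩
  · subst h; exact ⟨i, fun l hl => (hi l hl).trans (hj l hl), hi'.trans hj'⟩
  · exact ⟨i, fun l hl => (hi l hl).trans (hj l (h.trans hl)), by rw [← hj i h]; exact hi'⟩

lemma rvGT_total {a b : Fin m →₀ ℕ} (h : a ≠ b) : rvGT a b ∨ rvGT b a := by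
  have hne : ∃ i, a i ≠ b i := by
    by_contra hc; push_neg at hc
    exact h (Finsupp.ext hc)
  set s : Finset (Fin m) := Finset.univ.filter (fun i => a i ≠ b i) with hs
  have hsne : s.Nonempty := by
    obtain ⟨i, hi⟩ := hne
    exact ⟨i, by simp [hs, hi]⟩
  set i₀ := s.max' hsne with hi₀
  have hmem : a i₀ ≠ b i₀ := by
    have := s.max'_mem hsne
    simpa [hs] using this
  have hgt : ∀ j, i₀ < j → a j = b j := by
    intro j hj
    by_contra hc
    have : j ∈ s := by simp [hs, hc]
    exact absurd (s.le_max' j this) (by omega)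
  rcases lt_or_gt_of_ne hmem with h' | h'
  · exact Or.inl ⟨i₀, hgt, h'⟩
  · exact Or.inr ⟨i₀, fun j hj => (hgt j hj).symm, h'⟩

lemma exists_rv_max (s : Finset (Fin m →₀ ℕ)) (hs : s.Nonempty) :
    ∃ β ∈ s, ∀ α ∈ s, α ≠ β → rvGT β α := by
  classical
  induction s using Finset.induction_on with
  | empty => exact absurd hs (by simp)
  | @insert a s ha ih =>
    rcases s.eq_empty_or_nonempty with rfl | hs'
    · exact ⟨a, by simp, by intro α hα hne; simp at hα; exact absurd hα hne⟩
    · obtain ⟨β, hβs, hβ⟩ := ih hs'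
      have hane : a ≠ β := fun h => ha (h ▸ hβs)
      rcases rvGT_total hane with h' | h'
      · refine ⟨a, Finset.mem_insert_self _ _, ?_⟩
        intro α hα hne
        rcases Finset.mem_insert.1 hα with rfl | hαs
        · exact absurd rfl hne
        · rcases eq_or_ne α β with rfl | hαβ
          · exact h'
          · exact rvGT_trans h' (hβ α hαs hαβ)
      · refine ⟨β, Finset.mem_insert_of_mem hβs, ?_⟩
        intro α hα hne
        rcases Finset.mem_insert.1 hα with rfl | hαs
        · exact h'
        · exact hβ α hαs hne

end RvGT

section Wdeg

variable {k : Type*} [Field k] {n : ℕ}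

/-- sum of the first `n` exponents -/
def wdeg {n : ℕ} (β : Fin (n + 1) →₀ ℕ) : ℕ := ∑ i : Fin n, β i.castSucc

lemma wdeg_add {n : ℕ} (a b : Fin (n + 1) →₀ ℕ) : wdeg (a + b) = wdeg a + wdeg b := by
  simp [wdeg, Finset.sum_add_distrib]

lemma wdeg_single {n : ℕ} (i : Fin n) : wdeg (Finsupp.single i.castSucc 1) = 1 := by
  rw [wdeg]
  rw [Finset.sum_eq_single i]
  · simp
  · intro j _ hj
    rw [Finsupp.single_apply, if_neg (by simpa [Fin.castSucc_inj] using (Ne.symm hj))]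
  · intro h; exact absurd (Finset.mem_univ i) h

/-- the ideal (x_1, ..., x_n) -/
noncomputable def mIdeal (k : Type*) [Field k] (n : ℕ) : Ideal (MvPolynomial (Fin (n + 1)) k) :=
  Ideal.span {g : MvPolynomial (Fin (n + 1)) k | ∃ i : Fin n, g = X i.castSucc}

/-- the ideal of polynomials all whose monomials have `wdeg ≥ m` -/
def Wid (k : Type*) [Field k] (n m : ℕ) : Ideal (MvPolynomial (Fin (n + 1)) k) where
  carrier := {g | ∀ β ∈ g.support, m ≤ wdeg β}
  zero_mem' := by simp
  add_mem' := by
    intro a b ha hb β hβ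
    rcases Finset.mem_union.1 (MvPolynomial.support_add hβ) with h | h
    · exact ha β h
    · exact hb β h
  smul_mem' := by
    intro c g hg β hβ
    rw [smul_eq_mul] at hβ
    obtain ⟨γ, hγ, δ, hδ, rfl⟩ := Finset.mem_add.1 (MvPolynomial.support_mul _ _ hβ)
    rw [wdeg_add]
    exact le_add_of_nonneg_of_le (Nat.zero_le _) (hg δ hδ)

lemma mem_Wid {m : ℕ} {g : MvPolynomial (Fin (n + 1)) k} :
    g ∈ Wid k n m ↔ ∀ β ∈ g.support, m ≤ wdeg β := Iff.rfl

lemma mul_mem_Wid {a b : ℕ} {f g : MvPolynomial (Fin (n + 1)) k}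
    (hf : f ∈ Wid k n a) (hg : g ∈ Wid k n b) : f * g ∈ Wid k n (a + b) := by
  intro β hβ
  obtain ⟨γ, hγ, δ, hδ, rfl⟩ := Finset.mem_add.1 (MvPolynomial.support_mul _ _ hβ)
  rw [wdeg_add]
  exact add_le_add (hf γ hγ) (hg δ hδ)

lemma mIdeal_le_Wid_one : mIdeal k n ≤ Wid k n 1 := by
  rw [mIdeal, Ideal.span_le]
  rintro g ⟨i, rfl⟩
  intro β hβ
  rw [MvPolynomial.support_X, Finset.mem_singleton] at hβ
  subst hβ
  rw [wdeg_single]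

lemma mIdeal_pow_le_Wid (m : ℕ) : (mIdeal k n) ^ m ≤ Wid k n m := by
  induction m with
  | zero => intro g _; exact fun β _ => Nat.zero_le _
  | succ m ih =>
    rw [pow_succ]
    refine Ideal.mul_le.2 fun r hr s hs => ?_
    exact mul_mem_Wid (ih hr) (mIdeal_le_Wid_one hs)

lemma monomial_mem_mIdeal_pow (m : ℕ) (γ : Fin (n + 1) →₀ ℕ) (c : k) (h : m ≤ wdeg γ) :
    monomial γ c ∈ (mIdeal k n) ^ m := by
  induction m generalizing γ with
  | zero => simp [Ideal.one_eq_top]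
  | succ m ih =>
    have hpos : 0 < wdeg γ := lt_of_lt_of_le (Nat.succ_pos m) h
    have : ∃ i : Fin n, 0 < γ i.castSucc := by
      by_contra hc; push_neg at hc
      have : wdeg γ = 0 := Finset.sum_eq_zero fun i _ => by have := hc i; omega
      omega
    obtain ⟨i, hi⟩ := this
    set γ' := γ - Finsupp.single i.castSucc 1 with hγ'
    have hsum : γ = Finsupp.single i.castSucc 1 + γ' := by
      ext j
      rw [Finsupp.add_apply, hγ', Finsupp.tsub_apply, Finsupp.single_apply]
      by_cases hj : i.castSucc = j
      · subst hj; simp; omega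
      · simp [hj]
    have hwd : wdeg γ = 1 + wdeg γ' := by
      conv_lhs => rw [hsum]
      rw [wdeg_add, wdeg_single]
    have hmono : (monomial γ c : MvPolynomial (Fin (n + 1)) k)
        = X i.castSucc * monomial γ' c := by
      rw [X, monomial_mul, one_mul, ← hsum]
    rw [hmono, pow_succ']
    exact Ideal.mul_mem_mul (Ideal.subset_span ⟨i, rfl⟩) (ih γ' (by omega))

end Wdeg

end Stmt12Aux
namespace Stmt12Aux

open scoped Classical

section Tau

variable {k : Type*} [Field k] {n : ℕ}

/-- substitution x_i ↦ x_i - a_i x_last -/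
noncomputable def tau (a : Fin (n + 1) → k) :
    MvPolynomial (Fin (n + 1)) k →ₐ[k] MvPolynomial (Fin (n + 1)) k :=
  aeval (fun i => X i - C (a i) * X (Fin.last n))

lemma tau_comp (a : Fin (n + 1) → k) (ha : a (Fin.last n) = 0)
    (f : MvPolynomial (Fin (n + 1)) k) : tau a (tau (fun i => - a i) f) = f := by
  have hcomp : (tau a).comp (tau (fun i => - a i)) = AlgHom.id k _ := by
    apply MvPolynomial.algHom_ext
    intro i
    simp only [tau, AlgHom.comp_apply, aeval_X, AlgHom.id_apply]
    rw [map_sub, map_mul, aeval_X, aeval_X, aeval_C]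
    simp [ha]
  calc tau a (tau (fun i => - a i) f) = ((tau a).comp (tau (fun i => - a i))) f := rfl
  _ = f := by rw [hcomp]; rfl

lemma tau_surjective (a : Fin (n + 1) → k) (ha : a (Fin.last n) = 0) :
    Function.Surjective (tau a) := fun f => ⟨tau (fun i => - a i) f, tau_comp a ha f⟩

lemma tau_monomial (a : Fin (n + 1) → k) (ha : a (Fin.last n) = 0) :
    ∀ (N : ℕ) (γ : Fin (n + 1) →₀ ℕ), (∑ i, γ i) = N →
    ∃ r : MvPolynomial (Fin (n + 1)) k, tau a (monomial γ 1) = monomial γ 1 + r ∧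
      ∀ α ∈ r.support, γ (Fin.last n) < α (Fin.last n) := by
  intro N
  induction N with
  | zero =>
    intro γ hγ
    have : γ = 0 := by
      ext j
      have : γ j = 0 := by
        by_contra hc
        have h1 : 0 < γ j := Nat.pos_of_ne_zero hc
        have h2 : γ j ≤ ∑ i, γ i := Finset.single_le_sum (fun i _ => Nat.zero_le _)
          (Finset.mem_univ j)
        omega
      simpa using this
    subst this
    refine ⟨0, ?_, by simp⟩
    rw [monomial_zero', C_1, map_one, add_zero]
  | succ N ih =>
    intro γ hγ
    have : ∃ i, 0 < γ i := by
      by_contra hc; push_neg at hc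
      have : ∑ i, γ i = 0 := Finset.sum_eq_zero fun i _ => by have := hc i; omega
      omega
    obtain ⟨i, hi⟩ := this
    set γ' := γ - Finsupp.single i 1 with hγ'def
    have hsum : γ = Finsupp.single i 1 + γ' := by
      ext j
      rw [Finsupp.add_apply, hγ'def, Finsupp.tsub_apply, Finsupp.single_apply]
      by_cases hj : i = j
      · subst hj; simp; omega
      · simp [hj]
    have hγ'sum : (∑ j, γ' j) = N := by
      have h1 : (∑ j, γ j) = (∑ j, Finsupp.single i 1 j) + ∑ j, γ' j := by
        conv_lhs => rw [hsum]
        simp [Finset.sum_add_distrib]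
      have h2 : (∑ j, Finsupp.single i 1 j) = 1 := by
        rw [Finset.sum_eq_single i (fun j _ hj => Finsupp.single_eq_of_ne' (Ne.symm hj))
          (fun h => absurd (Finset.mem_univ i) h)]
        simp
      omega
    obtain ⟨r', hr', hsup'⟩ := ih γ' hγ'sum
    have hmono : (monomial γ (1:k)) = X i * monomial γ' 1 := by
      rw [X, monomial_mul, one_mul, ← hsum]
    rcases eq_or_ne i (Fin.last n) with rfl | hine
    · -- i = last : tau (X last) = X last
      have htX : tau a (X (Fin.last n)) = X (Fin.last n) := by
        simp [tau, ha]
      refine ⟨X (Fin.last n) * r', ?_, ?_⟩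
      · rw [hmono, map_mul, htX, hr', mul_add, ← hmono]
      · intro α hα
        have hsub := MvPolynomial.support_mul _ _ hα
        rw [MvPolynomial.support_X] at hsub
        obtain ⟨u, hu, β, hβ, rfl⟩ := Finset.mem_add.1 hsub
        rw [Finset.mem_singleton] at hu
        subst hu
        have h1 : γ (Fin.last n) = γ' (Fin.last n) + 1 := by
          conv_lhs => rw [hsum]
          rw [Finsupp.add_apply, Finsupp.single_eq_same]
          omega
        have h2 := hsup' β hβ
        rw [Finsupp.add_apply, Finsupp.single_eq_same]
        omega
    · -- i ≠ last
      have htX : tau a (X i) = X i - C (a i) * X (Fin.last n) := by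
        simp [tau]
      have hγlast : γ (Fin.last n) = γ' (Fin.last n) := by
        conv_lhs => rw [hsum]
        simp [Finsupp.single_apply, hine]
      refine ⟨X i * r' - (a i) • (X (Fin.last n) * monomial γ' 1)
          - (a i) • (X (Fin.last n) * r'), ?_, ?_⟩
      · rw [hmono, map_mul, htX, hr']
        simp only [← MvPolynomial.C_mul']
        ring
      · intro α hα
        have hsub1 : α ∈ (X i * r' - (a i) • (X (Fin.last n) * monomial γ' 1)).support
            ∪ ((a i) • (X (Fin.last n) * r')).support := MvPolynomial.support_sub _ _ _ hα
        have hlast_bound : ∀ β ∈ (X (Fin.last n) * r').support,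
            γ (Fin.last n) < β (Fin.last n) := by
          intro β hβ
          obtain ⟨u, hu, δ, hδ, rfl⟩ := Finset.mem_add.1 (MvPolynomial.support_mul _ _ hβ)
          rw [MvPolynomial.support_X, Finset.mem_singleton] at hu
          subst hu
          have := hsup' δ hδ
          rw [Finsupp.add_apply, Finsupp.single_eq_same]
          omega
        rcases Finset.mem_union.1 hsub1 with h | h
        · have hsub2 : α ∈ (X i * r').support ∪
              ((a i) • (X (Fin.last n) * monomial γ' (1:k))).support :=
            MvPolynomial.support_sub _ _ _ h
          rcases Finset.mem_union.1 hsub2 with h' | h'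
          · obtain ⟨u, hu, δ, hδ, rfl⟩ := Finset.mem_add.1 (MvPolynomial.support_mul _ _ h')
            rw [MvPolynomial.support_X, Finset.mem_singleton] at hu
            subst hu
            have := hsup' δ hδ
            rw [Finsupp.add_apply, Finsupp.single_eq_of_ne' hine, hγlast]
            omega
          · have h'' := MvPolynomial.support_smul h'
            obtain ⟨u, hu, δ, hδ, rfl⟩ := Finset.mem_add.1 (MvPolynomial.support_mul _ _ h'')
            rw [MvPolynomial.support_X, Finset.mem_singleton] at hu
            subst hu
            have hδ' : δ ∈ (monomial γ' (1:k)).support := hδ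
            rw [MvPolynomial.support_monomial, if_neg (one_ne_zero)] at hδ'
            rw [Finset.mem_singleton] at hδ'
            subst hδ'
            rw [Finsupp.add_apply, Finsupp.single_eq_same, hγlast]
            omega
        · have h'' := MvPolynomial.support_smul h
          exact hlast_bound α h''

end Tau

end Stmt12Aux
namespace Stmt12Aux

open scoped Classical

section Key

variable {k : Type*} [Field k] {n : ℕ}

lemma iniT_zero : iniT (0 : MvPolynomial (Fin (n + 1)) k) = 0 := by
  rw [iniT]
  simp

/-- Key lemma: the initial term of `tau a g` is the revlex-largest monomial of `g`. -/
lemma iniT_tau (a : Fin (n + 1) → k) (ha : a (Fin.last n) = 0)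
    (g : MvPolynomial (Fin (n + 1)) k) (hg : g ≠ 0) :
    ∃ β ∈ g.support, iniT (tau a g) = monomial β (MvPolynomial.coeff β g) := by
  obtain ⟨β, hβmem, hβmax⟩ := exists_rv_max g.support (MvPolynomial.support_nonempty.2 hg)
  have hmon := fun γ : Fin (n + 1) →₀ ℕ => tau_monomial a ha (∑ i, γ i) γ rfl
  choose r hr hrsup using hmon
  have hg' : tau a g = ∑ γ ∈ g.support,
      (monomial γ (MvPolynomial.coeff γ g) + (MvPolynomial.coeff γ g) • r γ) := by
    conv_lhs => rw [← MvPolynomial.support_sum_monomial_coeff g]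
    rw [map_sum]
    refine Finset.sum_congr rfl fun γ _ => ?_
    have h1 : (monomial γ (MvPolynomial.coeff γ g) : MvPolynomial (Fin (n + 1)) k)
        = (MvPolynomial.coeff γ g) • monomial γ 1 := by
      rw [MvPolynomial.smul_monomial, smul_eq_mul, mul_one]
    rw [h1, map_smul, hr, smul_add]
  -- the coefficient of β is preserved
  have hrcoeff : ∀ γ ∈ g.support, MvPolynomial.coeff β (r γ) = 0 := by
    intro γ hγ
    by_contra hc
    have hmem : β ∈ (r γ).support := MvPolynomial.mem_support_iff.2 hc
    have hlt : rvGT γ β := rvGT_of_last (hrsup γ β hmem)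
    rcases eq_or_ne γ β with rfl | hne
    · exact rvGT_irrefl hlt
    · exact rvGT_asymm (hβmax γ hγ hne) hlt
  have h1 : MvPolynomial.coeff β (tau a g) = MvPolynomial.coeff β g := by
    rw [hg', MvPolynomial.coeff_sum]
    rw [Finset.sum_eq_single β]
    · rw [MvPolynomial.coeff_add, MvPolynomial.coeff_monomial, if_pos rfl,
        MvPolynomial.coeff_smul, hrcoeff β hβmem, smul_zero, add_zero]
    · intro γ hγ hne
      rw [MvPolynomial.coeff_add, MvPolynomial.coeff_monomial, if_neg hne,
        MvPolynomial.coeff_smul, hrcoeff γ hγ, smul_zero, add_zero]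
    · intro h; exact absurd hβmem h
  have h2 : ∀ α ∈ (tau a g).support, α = β ∨ rvGT β α := by
    intro α hα
    by_contra hc
    push_neg at hc
    obtain ⟨hne, hngt⟩ := hc
    have hcoeff : MvPolynomial.coeff α (tau a g) ≠ 0 := MvPolynomial.mem_support_iff.1 hα
    rw [hg', MvPolynomial.coeff_sum] at hcoeff
    have : ∃ γ ∈ g.support,
        MvPolynomial.coeff α (monomial γ (MvPolynomial.coeff γ g)
          + (MvPolynomial.coeff γ g) • r γ) ≠ 0 := by
      by_contra hall; push_neg at hall
      exact hcoeff (Finset.sum_eq_zero hall)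
    obtain ⟨γ, hγ, hne0⟩ := this
    rw [MvPolynomial.coeff_add, MvPolynomial.coeff_monomial, MvPolynomial.coeff_smul] at hne0
    have : α = γ ∨ MvPolynomial.coeff α (r γ) ≠ 0 := by
      by_contra hb; push_neg at hb
      obtain ⟨hb1, hb2⟩ := hb
      rw [if_neg (fun h => hb1 h.symm), hb2, smul_zero, add_zero] at hne0
      exact hne0 rfl
    rcases this with rfl | hrα
    · rcases hβmax α hγ hne with h
      exact hngt h
    · have hgt : rvGT γ α := rvGT_of_last (hrsup γ α (MvPolynomial.mem_support_iff.2 hrα))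
      rcases eq_or_ne γ β with rfl | hγβ
      · exact hngt hgt
      · exact hngt (rvGT_trans (hβmax γ hγ hγβ) hgt)
  have hβsupp : β ∈ (tau a g).support := by
    rw [MvPolynomial.mem_support_iff, h1]
    exact MvPolynomial.mem_support_iff.1 hβmem
  refine ⟨β, hβmem, ?_⟩
  have hfilter : ((tau a g).support.filter
      fun α => ∀ b ∈ (tau a g).support, ¬ rvGT b α) = {β} := by
    ext α
    simp only [Finset.mem_filter, Finset.mem_singleton]
    constructor
    · rintro ⟨hαs, hmax'⟩
      rcases h2 α hαs with h | h
      · exact h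
      · exact absurd h (hmax' β hβsupp)
    · rintro rfl
      refine ⟨hβsupp, fun b hb hba => ?_⟩
      rcases h2 b hb with rfl | h
      · exact rvGT_irrefl hba
      · exact rvGT_asymm h hba
  rw [iniT]
  rw [show ((tau a g).support.filter fun α => ∀ b ∈ (tau a g).support, ¬ rvGT b α) = {β}
    from hfilter]
  rw [Finset.sum_singleton, h1]

/-- Part B : the initial ideal computation for the linear-prime power. -/
theorem partB (a : Fin (n + 1) → k) (ha : a (Fin.last n) = 0) (m : ℕ) :
    iniIdeal ((Ideal.map (tau a) (mIdeal k n)) ^ m) = (mIdeal k n) ^ m := by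
  have hqm : (Ideal.map (tau a) (mIdeal k n)) ^ m = Ideal.map (tau a) ((mIdeal k n) ^ m) :=
    (Ideal.map_pow _ _ _).symm
  apply le_antisymm
  · rw [iniIdeal, Ideal.span_le]
    rintro h ⟨f, hf, rfl⟩
    rw [hqm, Ideal.mem_map_iff_of_surjective _ (tau_surjective a ha)] at hf
    obtain ⟨g, hg, rfl⟩ := hf
    rcases eq_or_ne g 0 with rfl | hgne
    · rw [map_zero, iniT_zero]
      exact Submodule.zero_mem _
    · obtain ⟨β, hβ, hini⟩ := iniT_tau a ha g hgne
      rw [hini]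
      exact monomial_mem_mIdeal_pow m β _ (mIdeal_pow_le_Wid m hg β hβ)
  · -- M^m is generated by monomials of wdeg ≥ m
    have hgen : ∀ l : ℕ, (mIdeal k n) ^ l ≤
        Ideal.span ((fun γ => (monomial γ (1:k) : MvPolynomial (Fin (n+1)) k)) ''
          {γ | l ≤ wdeg γ}) := by
      intro l
      induction l with
      | zero =>
        have h1 : (1 : MvPolynomial (Fin (n+1)) k) ∈
            Ideal.span ((fun γ => (monomial γ (1:k) : MvPolynomial (Fin (n+1)) k)) ''
              {γ | 0 ≤ wdeg γ}) := by
          apply Ideal.subset_span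
          exact ⟨0, Nat.zero_le _, by simp⟩
        rw [pow_zero, Ideal.one_eq_top]
        exact fun x _ => (Ideal.eq_top_iff_one _).2 h1 ▸ trivial
      | succ l ih =>
        rw [pow_succ]
        calc (mIdeal k n) ^ l * mIdeal k n
            ≤ Ideal.span ((fun γ => (monomial γ (1:k) : MvPolynomial (Fin (n+1)) k)) ''
                {γ | l ≤ wdeg γ}) *
              Ideal.span ((fun γ => (monomial γ (1:k) : MvPolynomial (Fin (n+1)) k)) ''
                {γ | 1 ≤ wdeg γ}) := by
              apply Ideal.mul_mono ih
              rw [mIdeal, Ideal.span_le]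
              rintro g ⟨i, rfl⟩
              apply Ideal.subset_span
              exact ⟨Finsupp.single i.castSucc 1, by rw [Set.mem_setOf_eq, wdeg_single],
                by rw [X]⟩
          _ ≤ Ideal.span ((fun γ => (monomial γ (1:k) : MvPolynomial (Fin (n+1)) k)) ''
                {γ | l + 1 ≤ wdeg γ}) := by
              rw [Ideal.span_mul_span']
              apply Ideal.span_le.2
              rintro x ⟨u, ⟨γ, hγ, rfl⟩, v, ⟨δ, hδ, rfl⟩, rfl⟩
              apply Ideal.subset_span
              refine ⟨γ + δ, ?_, ?_⟩
              · rw [Set.mem_setOf_eq, wdeg_add]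
                rw [Set.mem_setOf_eq] at hγ hδ
                omega
              · show (monomial (γ + δ)) (1:k) = monomial γ 1 * monomial δ 1
                rw [monomial_mul, one_mul]
    refine le_trans (hgen m) (Ideal.span_le.2 ?_)
    rintro x ⟨γ, hγ, rfl⟩
    rw [iniIdeal]
    apply Ideal.subset_span
    refine ⟨tau a (monomial γ 1), ?_, ?_⟩
    · rw [hqm]
      exact Ideal.mem_map_of_mem _ (monomial_mem_mIdeal_pow m γ 1 hγ)
    · obtain ⟨β, hβ, hini⟩ := iniT_tau a ha (monomial γ (1:k)) (by
        intro h
        have := MvPolynomial.monomial_eq_zero.1 h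
        exact one_ne_zero this)
      rw [MvPolynomial.support_monomial, if_neg one_ne_zero, Finset.mem_singleton] at hβ
      subst hβ
      rw [hini, MvPolynomial.coeff_monomial, if_pos rfl]

end Key

end Stmt12Aux
namespace Stmt12Aux

section Dim

open scoped Classical

variable {K : Type*} [Field K]

/-- auxiliary: function to finsupp -/
noncomputable def toF {t : ℕ} (f : Fin t → ℕ) : Fin t →₀ ℕ :=
  Finsupp.equivFunOnFinite.symm f

lemma toF_apply {t : ℕ} (f : Fin t → ℕ) (i : Fin t) : toF f i = f i := rfl

lemma toF_inj {t : ℕ} : Function.Injective (toF (t := t)) :=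
  Finsupp.equivFunOnFinite.symm.injective

/-- Counting: `N+1` polynomials in `N` variables are algebraically dependent. -/
lemma notAlgIndep (N : ℕ) (p : Fin (N + 1) → MvPolynomial (Fin N) K) :
    ¬ AlgebraicIndependent K p := by
  intro hp
  set d0 := Finset.univ.sup (fun i => (p i).totalDegree) with hd0
  set c := (N + 1) * (d0 + 1) with hc
  set E := c ^ N with hE
  set M := (N + 1) * (E * d0) with hM
  -- the family of products of powers, exponents ≤ E
  set v : (Fin (N + 1) → Fin (E + 1)) → MvPolynomial (Fin N) K :=
    fun β => aeval p (monomial (toF fun i => (β i : ℕ)) (1 : K)) with hv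
  -- linear independence
  have hli : LinearIndependent K v := by
    have h0 : LinearIndependent K
        (fun s : Fin (N + 1) →₀ ℕ => (monomial s (1 : K) : MvPolynomial (Fin (N+1)) K)) := by
      have := (basisMonomials (Fin (N + 1)) K).linearIndependent
      rwa [coe_basisMonomials] at this
    have h1 : Function.Injective
        (fun β : Fin (N + 1) → Fin (E + 1) => toF fun i => (β i : ℕ)) := by
      intro x y hxy
      funext i
      have := congrArg (fun f => f i) hxy
      simpa [toF_apply, Fin.val_injective.eq_iff] using this
    have h2 := h0.comp _ h1
    have h3 : LinearIndependent K ((aeval p).toLinearMap ∘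
        ((fun s : Fin (N + 1) →₀ ℕ => (monomial s (1 : K) : MvPolynomial (Fin (N+1)) K)) ∘
          (fun β : Fin (N + 1) → Fin (E + 1) => toF fun i => (β i : ℕ)))) := by
      apply h2.map'
      rw [LinearMap.ker_eq_bot]
      exact hp
    have hfun : v = (⇑(aeval p).toLinearMap ∘
        ((fun s : Fin (N + 1) →₀ ℕ => (monomial s (1 : K) : MvPolynomial (Fin (N+1)) K)) ∘
          (fun β : Fin (N + 1) → Fin (E + 1) => toF fun i => (β i : ℕ)))) := by
      funext β
      rw [hv]
      rfl
    rwa [hfun]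
  -- total degree bound
  have hdeg : ∀ β, (v β).totalDegree ≤ M := by
    intro β
    have h1 : v β = ∏ i, p i ^ ((β i : ℕ)) := by
      rw [hv]
      simp only [aeval_monomial, map_one, one_mul]
      rw [Finsupp.prod_fintype]
      · rfl
      · intro i; exact pow_zero _
    rw [h1]
    calc (∏ i, p i ^ ((β i : ℕ))).totalDegree
        ≤ ∑ i, (p i ^ ((β i : ℕ))).totalDegree := totalDegree_finset_prod _ _
      _ ≤ ∑ _i : Fin (N + 1), E * d0 := by
          apply Finset.sum_le_sum
          intro i _
          calc (p i ^ ((β i : ℕ))).totalDegree ≤ (β i : ℕ) * (p i).totalDegree :=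
                totalDegree_pow _ _
            _ ≤ E * d0 := by
                apply Nat.mul_le_mul
                · exact Nat.lt_succ_iff.1 (β i).isLt
                · rw [hd0]
                  exact Finset.le_sup (f := fun i => (p i).totalDegree) (Finset.mem_univ i)
      _ = M := by rw [Finset.sum_const, Finset.card_univ, Fintype.card_fin, smul_eq_mul, hM]
  -- the monomial basis of degree ≤ M polynomials
  set T : Finset (MvPolynomial (Fin N) K) :=
    Finset.image (fun γ : Fin N → Fin (M + 1) => monomial (toF fun i => (γ i : ℕ)) (1 : K))
      Finset.univ with hT
  have hmemspan : ∀ f : MvPolynomial (Fin N) K, f.totalDegree ≤ M →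
      f ∈ Submodule.span K (T : Set (MvPolynomial (Fin N) K)) := by
    intro f hf
    rw [← MvPolynomial.support_sum_monomial_coeff f]
    apply Submodule.sum_mem
    intro γ hγ
    have h1 : (monomial γ (MvPolynomial.coeff γ f) : MvPolynomial (Fin N) K)
        = (MvPolynomial.coeff γ f) • monomial γ 1 := by
      rw [MvPolynomial.smul_monomial, smul_eq_mul, mul_one]
    rw [h1]
    apply Submodule.smul_mem
    apply Submodule.subset_span
    have hbound : ∀ i, γ i ≤ M := by
      intro i
      have h2 : (γ.sum fun _ e => e) ≤ f.totalDegree := MvPolynomial.le_totalDegree hγ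
      have h3 : γ i ≤ γ.sum fun _ e => e := by
        rcases eq_or_ne (γ i) 0 with h | h
        · omega
        · exact Finset.single_le_sum (f := fun j => γ j) (fun j _ => Nat.zero_le _)
            (Finsupp.mem_support_iff.2 h)
      omega
    rw [hT]
    simp only [Finset.coe_image, Set.mem_image, Finset.coe_univ, Set.mem_univ, true_and]
    refine ⟨fun i => ⟨γ i, by have := hbound i; omega⟩, ?_⟩
    have harg : (toF fun i => ((⟨γ i, by have := hbound i; omega⟩ : Fin (M + 1)) : ℕ)) = γ := by
      have : (fun i => ((⟨γ i, by have := hbound i; omega⟩ : Fin (M + 1)) : ℕ)) = ⇑γ := rfl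
      rw [this]
      exact Finsupp.equivFunOnFinite_symm_coe γ
    rw [harg]
  -- restrict the family to the span
  set V := Submodule.span K (T : Set (MvPolynomial (Fin N) K)) with hV
  set v' : (Fin (N + 1) → Fin (E + 1)) → V := fun β => ⟨v β, hmemspan _ (hdeg β)⟩ with hv'
  have hli' : LinearIndependent K v' := by
    apply LinearIndependent.of_comp V.subtype
    exact hli
  haveI : FiniteDimensional K V := by
    rw [hV]
    exact FiniteDimensional.span_finset K T
  have hcard1 : Fintype.card (Fin (N + 1) → Fin (E + 1)) ≤ Module.finrank K V :=
    hli'.fintype_card_le_finrank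
  have hcard2 : Module.finrank K V ≤ T.card := by
    have := finrank_span_finset_le_card (R := K) T
    rwa [Set.finrank, ← hV] at this
  have hcard3 : T.card ≤ (M + 1) ^ N := by
    calc T.card ≤ Finset.univ.card := Finset.card_image_le
      _ = (M + 1) ^ N := by
          rw [Finset.card_univ, Fintype.card_fun, Fintype.card_fin, Fintype.card_fin]
  have hcard0 : Fintype.card (Fin (N + 1) → Fin (E + 1)) = (E + 1) ^ (N + 1) := by
    rw [Fintype.card_fun, Fintype.card_fin, Fintype.card_fin]
  -- arithmetic contradiction
  have harith : (M + 1) ^ N < (E + 1) ^ (N + 1) := by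
    have h1 : M + 1 ≤ c * (E + 1) := by
      rw [hM, hc]
      nlinarith [Nat.zero_le E, Nat.zero_le d0, Nat.zero_le N]
    calc (M + 1) ^ N ≤ (c * (E + 1)) ^ N := Nat.pow_le_pow_left h1 N
      _ = c ^ N * (E + 1) ^ N := mul_pow _ _ _
      _ = E * (E + 1) ^ N := by rw [hE]
      _ < (E + 1) * (E + 1) ^ N := by
          have : (0:ℕ) < (E + 1) ^ N := Nat.pow_pos (Nat.succ_pos E)
          exact Nat.mul_lt_mul_of_lt_of_le (Nat.lt_succ_self E) le_rfl this
      _ = (E + 1) ^ (N + 1) := by rw [pow_succ, mul_comm]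
  omega

end Dim

end Stmt12Aux
namespace Stmt12Aux

section Chain

variable {K : Type*} [Field K]

/-- A nonzero polynomial relation over a field cannot vanish along a chain of primes. -/
lemma chainFalse (t : ℕ) :
    ∀ {A : Type*} [CommRing A] [Algebra K A] (P : Fin (t + 1) → Ideal A),
    (∀ i, (P i).IsPrime) → (∀ i : Fin t, P i.castSucc ≤ P i.succ) →
    ∀ (x : Fin t → A), (∀ i : Fin t, x i ∈ P i.succ) → (∀ i : Fin t, x i ∉ P i.castSucc) →
    ∀ F : MvPolynomial (Fin t) K, F ≠ 0 → (MvPolynomial.aeval x) F ∈ P 0 → False := by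
  induction t with
  | zero =>
    intro A _ _ P hP _ x _ _ F hF hmem
    obtain ⟨c, rfl⟩ := MvPolynomial.C_surjective (Fin 0) F
    have hc : c ≠ 0 := fun h => hF (by rw [h, map_zero])
    rw [MvPolynomial.aeval_C] at hmem
    have : IsUnit ((algebraMap K A) c) := (isUnit_iff_ne_zero.2 hc).map (algebraMap K A)
    exact (hP 0).ne_top (Ideal.eq_top_of_isUnit_mem _ hmem this)
  | succ t ih =>
    intro A _ _ P hP hmono x hxmem hxnot F hF hmem
    -- decompose F along the first variable
    set Φ := MvPolynomial.finSuccEquiv K t F with hΦdef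
    have hΦ : Φ ≠ 0 := fun h => hF ((map_eq_zero_iff _ (AlgEquiv.injective _)).1 h)
    set j0 := Φ.natTrailingDegree with hj0
    obtain ⟨Ψ, hΨ⟩ : (Polynomial.X : Polynomial (MvPolynomial (Fin t) K)) ^ j0 ∣ Φ :=
      Polynomial.X_pow_dvd_iff.2 fun d hd =>
        Polynomial.coeff_eq_zero_of_lt_natTrailingDegree hd
    set G := Ψ.coeff 0 with hG
    have hGne : G ≠ 0 := by
      have h1 : Φ.coeff j0 ≠ 0 := by
        rw [hj0]
        exact Polynomial.coeff_natTrailingDegree_ne_zero.2 hΦ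
      have h2 : Φ.coeff j0 = Ψ.coeff 0 := by
        rw [hΨ]
        have := Polynomial.coeff_X_pow_mul Ψ j0 0
        rwa [zero_add] at this
      rw [hG, ← h2]
      exact h1
    -- the evaluation homomorphism
    set Ξ : Polynomial (MvPolynomial (Fin t) K) →ₐ[K] A :=
      Polynomial.eval₂AlgHom (MvPolynomial.aeval (x ∘ Fin.succ)) (x 0)
        (fun a => Commute.all _ _) with hΞ
    have hΘ : (MvPolynomial.aeval x) F = Ξ Φ := by
      have hcomp : (Ξ.comp (MvPolynomial.finSuccEquiv K t).toAlgHom)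
          = MvPolynomial.aeval x := by
        apply MvPolynomial.algHom_ext
        intro j
        rw [AlgHom.comp_apply]
        change Ξ (MvPolynomial.finSuccEquiv K t (X j)) = MvPolynomial.aeval x (X j)
        rcases Fin.eq_zero_or_eq_succ j with rfl | ⟨i, rfl⟩
        · rw [MvPolynomial.finSuccEquiv_X_zero, MvPolynomial.aeval_X]
          simp [hΞ]
        · rw [MvPolynomial.finSuccEquiv_X_succ, MvPolynomial.aeval_X]
          simp [hΞ]
      rw [← hcomp]
      rfl
    have hXx : Ξ Polynomial.X = x 0 := by simp [hΞ]
    have hmem2 : (x 0) ^ j0 * Ξ Ψ ∈ P 0 := by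
      rw [← hXx, ← map_pow, ← map_mul, ← hΨ, ← hΘ]
      exact hmem
    have hx0 : x 0 ∉ P 0 := by
      have := hxnot 0
      rwa [Fin.castSucc_zero] at this
    have hΞΨ : Ξ Ψ ∈ P 0 := by
      rcases (hP 0).mul_mem_iff_mem_or_mem.1 hmem2 with h | h
      · exact absurd ((hP 0).mem_of_pow_mem j0 h) hx0
      · exact h
    -- peel off the constant coefficient of Ψ
    have hΨ0 : Polynomial.X * Ψ.divX + Polynomial.C G = Ψ := by
      rw [hG]; exact Polynomial.X_mul_divX_add Ψ
    have hx01 : x 0 ∈ P 1 := by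
      have := hxmem 0
      rwa [show (0 : Fin (t + 1)).succ = 1 from rfl] at this
    have hP01 : P 0 ≤ P 1 := by
      have := hmono 0
      rwa [Fin.castSucc_zero, show (0 : Fin (t + 1)).succ = 1 from rfl] at this
    have hGmem : (MvPolynomial.aeval (x ∘ Fin.succ)) G ∈ P 1 := by
      have h1 : Ξ (Polynomial.C G) = (MvPolynomial.aeval (x ∘ Fin.succ)) G := by simp [hΞ]
      have h2 : Ξ Ψ = x 0 * Ξ Ψ.divX + (MvPolynomial.aeval (x ∘ Fin.succ)) G := by
        rw [← h1, ← hXx, ← map_mul, ← map_add, hΨ0]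
      have h3 : (MvPolynomial.aeval (x ∘ Fin.succ)) G
          = Ξ Ψ - x 0 * Ξ Ψ.divX := by rw [h2]; ring
      rw [h3]
      exact Ideal.sub_mem _ (hP01 hΞΨ) (Ideal.mul_mem_right _ _ hx01)
    -- apply the inductive hypothesis to the shifted chain
    exact ih (fun j => P j.succ) (fun j => hP j.succ)
      (fun i => by
        have := hmono i.succ
        rwa [← Fin.succ_castSucc] at this)
      (x ∘ Fin.succ)
      (fun i => hxmem i.succ)
      (fun i => by
        have := hxnot i.succ
        rwa [← Fin.succ_castSucc] at this)
      G hGne hGmem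

/-- No strictly increasing chain of `N+2` primes in a polynomial ring in `N` variables. -/
lemma dimBound (N : ℕ) (C : Fin (N + 2) → Ideal (MvPolynomial (Fin N) K))
    (hC : ∀ i, (C i).IsPrime) (hmono : StrictMono C) : False := by
  have hex : ∀ i : Fin (N + 1), ∃ y, y ∈ C i.succ ∧ y ∉ C i.castSucc := by
    intro i
    obtain ⟨y, hy1, hy2⟩ := SetLike.exists_of_lt (hmono (Fin.castSucc_lt_succ (i := i)))
    exact ⟨y, hy1, hy2⟩
  choose x hxmem hxnot using hex
  have hdep := notAlgIndep (K := K) N x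
  rw [algebraicIndependent_iff] at hdep
  push_neg at hdep
  obtain ⟨F, hF0, hFne⟩ := hdep
  exact chainFalse (N + 1) C hC (fun i => (hmono (Fin.castSucc_lt_succ (i := i))).le) x hxmem hxnot
    F hFne (hF0 ▸ Ideal.zero_mem (C 0))

end Chain

end Stmt12Aux
namespace Stmt12Aux

section Hom

variable {k : Type*} [Field k]

lemma hom_eval₂ {B : Type*} [CommSemiring B] (f : k →+* B) {t e : ℕ}
    (g : MvPolynomial (Fin t) k) (hg : g.IsHomogeneous e) (s : B) (c : Fin t → B) :
    eval₂ f (fun i => s * c i) g = s ^ e * eval₂ f c g := by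
  rw [eval₂_eq, eval₂_eq, Finset.mul_sum]
  apply Finset.sum_congr rfl
  intro d hd
  have hdeg : (∑ i ∈ d.support, d i) = e := by
    have := hg (MvPolynomial.mem_support_iff.1 hd)
    simpa [Finsupp.weight, Finsupp.linearCombination, Finsupp.sum] using this
  calc f (MvPolynomial.coeff d g) * ∏ i ∈ d.support, (s * c i) ^ d i
      = f (MvPolynomial.coeff d g) *
        ((∏ i ∈ d.support, s ^ d i) * ∏ i ∈ d.support, c i ^ d i) := by
        rw [← Finset.prod_mul_distrib]
        congr 1
        exact Finset.prod_congr rfl fun i _ => mul_pow _ _ _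
    _ = s ^ e * (f (MvPolynomial.coeff d g) * ∏ i ∈ d.support, c i ^ d i) := by
        rw [Finset.prod_pow_eq_pow_sum, hdeg]
        ring

lemma eval_scale {t e : ℕ} (g : MvPolynomial (Fin t) k) (hg : g.IsHomogeneous e)
    (a : k) (z : Fin t → k) :
    eval (fun i => a * z i) g = a ^ e * eval z g := by
  have h := hom_eval₂ (RingHom.id k) g hg a z
  rwa [eval₂_id, eval₂_id] at h

lemma aeval_linear_of_homogeneous {t e : ℕ} (g : MvPolynomial (Fin t) k)
    (hg : g.IsHomogeneous e) (w : Fin t → k) :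
    aeval (fun i => Polynomial.C (w i) * Polynomial.X) g
      = Polynomial.C (eval w g) * Polynomial.X ^ e := by
  have h0 : (fun i : Fin t => Polynomial.C (w i) * Polynomial.X)
      = fun i : Fin t => Polynomial.X * Polynomial.C (w i) := by
    funext i; ring
  rw [MvPolynomial.aeval_def, Polynomial.algebraMap_eq, h0,
    hom_eval₂ Polynomial.C g hg Polynomial.X (fun i => Polynomial.C (w i))]
  have h1 : eval₂ Polynomial.C (fun i => Polynomial.C (w i)) g
      = Polynomial.C (eval w g) := by
    have h2 := MvPolynomial.eval₂_comp_left (Polynomial.C (R := k)) (RingHom.id k) w g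
    rw [eval₂_id, RingHomCompTriple.comp_eq] at h2
    rw [h2]
    rfl
  rw [h1]
  ring

end Hom

end Stmt12Aux
open Stmt12Aux in
/-- over an algebraically closed field, if `q ⊆ k[x_1,…,x_{n+1}]`
is a homogeneous prime of height `n` with `x_{n+1} ∉ q`, then for all `m > 0`
the reverse-lexicographic initial ideal of `q^m` is `(x_1,…,x_n)^m`. -/
theorem stmt12 (k : Type*) [Field k] [IsAlgClosed k] (n : ℕ)
    (q : Ideal (MvPolynomial (Fin (n + 1)) k)) (hq : q.IsPrime)
    (hhom : ∃ G : Set (MvPolynomial (Fin (n + 1)) k),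
      (∀ g ∈ G, ∃ e : ℕ, g.IsHomogeneous e) ∧ q = Ideal.span G)
    (hht : htIdeal q = n)
    (hx : X (Fin.last n) ∉ q)
    (m : ℕ) (hm : 0 < m) :
    iniIdeal (q ^ m) =
      (Ideal.span {g : MvPolynomial (Fin (n + 1)) k | ∃ i : Fin n, g = X i.castSucc}) ^ m := by
  classical
  haveI := hq
  obtain ⟨G, hGhom, hGspan⟩ := hhom
  -- a point in the zero locus with nonzero last coordinate
  have hzex : ∃ z ∈ MvPolynomial.zeroLocus k q, z (Fin.last n) ≠ 0 := by
    by_contra h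
    push_neg at h
    have hXlast : (X (Fin.last n) : MvPolynomial (Fin (n + 1)) k) ∈
        MvPolynomial.vanishingIdeal k (MvPolynomial.zeroLocus k q) := by
      intro z hz
      rw [aeval_X]
      exact h z hz
    rw [MvPolynomial.IsPrime.vanishingIdeal_zeroLocus q] at hXlast
    exact hx hXlast
  obtain ⟨z, hzZ, hzl⟩ := hzex
  set w : Fin (n + 1) → k := fun i => (z (Fin.last n))⁻¹ * z i with hw
  have hwl : w (Fin.last n) = 1 := inv_mul_cancel₀ hzl
  have hweval : ∀ g ∈ q, eval w g = 0 := by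
    have hle : q ≤ MvPolynomial.vanishingIdeal k {w} := by
      rw [hGspan, Ideal.span_le]
      intro g hg
      obtain ⟨e, hge⟩ := hGhom g hg
      rw [SetLike.mem_coe, MvPolynomial.mem_vanishingIdeal_singleton_iff, MvPolynomial.aeval_eq_eval, hw]
      rw [eval_scale g hge _ z]
      have hz0 : eval z g = 0 := hzZ g (hGspan ▸ Ideal.subset_span hg)
      rw [hz0, mul_zero]
    intro g hg
    exact (MvPolynomial.mem_vanishingIdeal_singleton_iff w g).1 (hle hg)
  set φ : MvPolynomial (Fin (n + 1)) k →ₐ[k] Polynomial k :=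
    aeval (fun i => Polynomial.C (w i) * Polynomial.X) with hφ
  have hqker : q ≤ RingHom.ker φ := by
    rw [hGspan, Ideal.span_le]
    intro g hg
    obtain ⟨e, hge⟩ := hGhom g hg
    rw [SetLike.mem_coe, RingHom.mem_ker, hφ]
    rw [aeval_linear_of_homogeneous g hge w,
      hweval g (hGspan ▸ Ideal.subset_span hg), map_zero, zero_mul]
  set av : Fin (n + 1) → k := fun i => if i = Fin.last n then 0 else w i with hav
  have hav_last : av (Fin.last n) = 0 := by rw [hav]; simp
  set p : Ideal (MvPolynomial (Fin (n + 1)) k) := Ideal.map (tau av) (mIdeal k n) with hpd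
  have hptau : ∀ i : Fin n, tau av (X i.castSucc) =
      X i.castSucc - C (w i.castSucc) * X (Fin.last n) := by
    intro i
    rw [tau, aeval_X]
    have hne : i.castSucc ≠ Fin.last n := (Fin.castSucc_lt_last i).ne
    rw [hav]
    simp [hne]
  have hpgen : p = Ideal.span
      (Set.range fun i : Fin n =>
        (X i.castSucc - C (w i.castSucc) * X (Fin.last n) : MvPolynomial (Fin (n + 1)) k)) := by
    rw [hpd, mIdeal, Ideal.map_span]
    congr 1
    ext f
    constructor
    · rintro ⟨g, ⟨i, rfl⟩, rfl⟩
      exact ⟨i, (hptau i).symm⟩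
    · rintro ⟨i, rfl⟩
      exact ⟨X i.castSucc, ⟨i, rfl⟩, hptau i⟩
  have hgen_mem : ∀ i : Fin (n + 1),
      (X i - C (w i) * X (Fin.last n) : MvPolynomial (Fin (n + 1)) k) ∈ p := by
    intro i
    rcases eq_or_ne i (Fin.last n) with rfl | hne
    · rw [hwl, C_1, one_mul, sub_self]
      exact Ideal.zero_mem p
    · obtain ⟨j, rfl⟩ := Fin.exists_castSucc_eq.2 hne
      rw [hpgen]
      exact Ideal.subset_span ⟨j, rfl⟩
  set ρ : MvPolynomial (Fin (n + 1)) k →ₐ[k] MvPolynomial (Fin (n + 1)) k :=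
    aeval (fun i => C (w i) * X (Fin.last n)) with hρ
  have hsub : ∀ f : MvPolynomial (Fin (n + 1)) k, f - ρ f ∈ p := by
    intro f
    induction f using MvPolynomial.induction_on with
    | C c =>
      rw [hρ, aeval_C, MvPolynomial.algebraMap_eq, sub_self]
      exact Ideal.zero_mem p
    | add f g hf hg =>
      rw [map_add]
      have h := Ideal.add_mem p hf hg
      convert h using 1
      ring
    | mul_X f i hf =>
      have hXi : ρ (X i) = C (w i) * X (Fin.last n) := by rw [hρ, aeval_X]
      have hrw : f * X i - ρ f * (C (w i) * X (Fin.last n)) =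
          X i * (f - ρ f) + ρ f * (X i - C (w i) * X (Fin.last n)) := by ring
      rw [map_mul, hXi, hrw]
      exact Ideal.add_mem p (Ideal.mul_mem_left _ _ hf) (Ideal.mul_mem_left _ _ (hgen_mem i))
  have hker_le : RingHom.ker φ ≤ p := by
    intro f hf
    have hcomp : ((Polynomial.aeval (X (Fin.last n) : MvPolynomial (Fin (n + 1)) k) :
        Polynomial k →ₐ[k] MvPolynomial (Fin (n + 1)) k).comp φ) = ρ := by
      rw [hφ, hρ, MvPolynomial.comp_aeval]
      congr 1
      funext i
      rw [map_mul, Polynomial.aeval_C, Polynomial.aeval_X, MvPolynomial.algebraMap_eq]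
    have hρφ : ρ f = (Polynomial.aeval (X (Fin.last n) : MvPolynomial (Fin (n + 1)) k)) (φ f) := by
      rw [← hcomp]; rfl
    rw [RingHom.mem_ker] at hf
    have hρ0 : ρ f = 0 := by rw [hρφ, hf, map_zero]
    have h2 := hsub f
    rwa [hρ0, sub_zero] at h2
  have hp_le_ker : p ≤ RingHom.ker φ := by
    rw [hpgen, Ideal.span_le]
    rintro f ⟨i, rfl⟩
    rw [SetLike.mem_coe, RingHom.mem_ker]
    have e1 : φ (X i.castSucc) = Polynomial.C (w i.castSucc) * Polynomial.X := by
      rw [hφ, aeval_X]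
    have e2 : φ (X (Fin.last n)) = Polynomial.C (w (Fin.last n)) * Polynomial.X := by
      rw [hφ, aeval_X]
    have e3 : φ (C (w i.castSucc)) = Polynomial.C (w i.castSucc) := by
      rw [hφ, aeval_C, Polynomial.algebraMap_eq]
    rw [map_sub, map_mul, e1, e2, e3, hwl, Polynomial.C_1, one_mul, sub_self]
  have hpker : p = RingHom.ker φ := le_antisymm hp_le_ker hker_le
  have hqlep : q ≤ p := hpker ▸ hqker
  have hqp : q = p := by
    by_contra hne
    have hhq : (n : ℕ∞) ≤ Order.height (⟨q, hq⟩ : PrimeSpectrum _) := by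
      have h1 : htIdeal q ≤ Order.height (⟨q, hq⟩ : PrimeSpectrum _) :=
        iInf₂_le (⟨q, hq⟩ : PrimeSpectrum _) (le_refl q)
      exact hht ▸ h1
    obtain ⟨ser, hserlast, hserlen⟩ := Order.exists_series_of_le_height _ hhq
    haveI hpprime : p.IsPrime := hpker ▸ RingHom.ker_isPrime φ
    have hmw_prime : (MvPolynomial.vanishingIdeal k {w}).IsPrime :=
      inferInstance
    have hp_le_mw : p ≤ MvPolynomial.vanishingIdeal k {w} := by
      rw [hpgen, Ideal.span_le]
      rintro f ⟨i, rfl⟩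
      rw [SetLike.mem_coe, MvPolynomial.mem_vanishingIdeal_singleton_iff]
      simp [hwl]
    have hp_ne_mw : p ≠ MvPolynomial.vanishingIdeal k {w} := by
      intro h
      have h1 : (X (Fin.last n) - C 1 : MvPolynomial (Fin (n + 1)) k) ∈
          MvPolynomial.vanishingIdeal k {w} := by
        rw [MvPolynomial.mem_vanishingIdeal_singleton_iff]
        simp [hwl]
      rw [← h, hpker, RingHom.mem_ker] at h1
      have e2 : φ (X (Fin.last n)) = Polynomial.C (w (Fin.last n)) * Polynomial.X := by
        rw [hφ, aeval_X]
      have e3 : φ (C (1 : k)) = Polynomial.C (1 : k) := by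
        rw [hφ, aeval_C, Polynomial.algebraMap_eq]
      rw [map_sub, e2, e3, hwl, Polynomial.C_1, one_mul] at h1
      exact Polynomial.X_sub_C_ne_zero (1 : k) h1
    have hlt1 : ser.last < (⟨p, hpprime⟩ : PrimeSpectrum _) := by
      rw [hserlast]
      exact (PrimeSpectrum.asIdeal_lt_asIdeal _ _).1 (lt_of_le_of_ne hqlep hne)
    set ser2 := ser.snoc (⟨p, hpprime⟩ : PrimeSpectrum _) hlt1 with hser2
    have hlt2 : ser2.last < (⟨MvPolynomial.vanishingIdeal k {w}, hmw_prime⟩ : PrimeSpectrum _) := by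
      rw [hser2, RelSeries.last_snoc]
      exact (PrimeSpectrum.asIdeal_lt_asIdeal _ _).1 (lt_of_le_of_ne hp_le_mw hp_ne_mw)
    set ser3 := ser2.snoc (⟨MvPolynomial.vanishingIdeal k {w}, hmw_prime⟩ : PrimeSpectrum _) hlt2
      with hser3
    have hlen3 : (n + 1) + 2 = ser3.length + 1 := by
      have h2 : ser2.length = n + 1 := by rw [hser2, RelSeries.snoc_length, hserlen]
      have h3 : ser3.length = n + 2 := by rw [hser3, RelSeries.snoc_length, h2]
      omega
    set C : Fin ((n + 1) + 2) → Ideal (MvPolynomial (Fin (n + 1)) k) :=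
      fun i => (ser3.toFun (Fin.cast hlen3 i)).asIdeal with hC
    refine dimBound (n + 1) C (fun i => (ser3.toFun (Fin.cast hlen3 i)).isPrime) ?_
    intro i j hij
    rw [hC]
    exact (PrimeSpectrum.asIdeal_lt_asIdeal _ _).2
      (LTSeries.strictMono ser3 (by
        simp only [Fin.lt_def, Fin.coe_cast]
        exact Fin.lt_def.1 hij))
  show iniIdeal (q ^ m) = (mIdeal k n) ^ m
  rw [hqp, hpd]
  exact partB av hav_last m
end

section
/- Let k be a field of characteristic p > 0, t ∈ k an element with no p-th root in k, R = k[x,y], and I = (x^p + t y^p). Then I is integrally closed, and there is no k-linear change of coordinates γ ∈ GL_2(k) such that γ(I) is a monomial ideal. -/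
open MvPolynomial

/-- The integral closure of an ideal `I`: elements `r` satisfying an equation
`r^n + a_1 r^{n-1} + ⋯ + a_n = 0` with `a_i ∈ I^i`. -/
def icl {R : Type*} [CommRing R] (I : Ideal R) : Set R :=
  {r | ∃ n : ℕ, 0 < n ∧ ∃ a : ℕ → R, (∀ i, a i ∈ I ^ i) ∧
    r ^ n + ∑ i ∈ Finset.range n, a (i + 1) * r ^ (n - (i + 1)) = 0}

/-- In an integrally closed domain (here: a UFD), every principal ideal
generated by a nonzero element is integrally closed. -/
lemma icl_principal {R : Type*} [CommRing R] [IsDomain R] [UniqueFactorizationMonoid R]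
    {f : R} (hf : f ≠ 0) : icl (Ideal.span {f}) = Ideal.span {f} := by
  apply Set.Subset.antisymm
  · rintro r ⟨n, hn, a, ha, heq⟩
    have hdvd : ∀ i, ∃ c, a i = f ^ i * c := by
      intro i
      have h := ha i
      rw [Ideal.span_singleton_pow, Ideal.mem_span_singleton] at h
      exact h
    choose c hc using hdvd
    set K := FractionRing R
    set φ : R →+* K := algebraMap R K with hφ
    have hφinj : Function.Injective φ := IsFractionRing.injective R K
    have hfK : φ f ≠ 0 := fun h => hf (hφinj (by simpa using h))
    set z : K := φ r / φ f with hz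
    have hzf : z * φ f = φ r := div_mul_cancel₀ _ hfK
    have hint : IsIntegral R z := by
      refine ⟨Polynomial.X ^ n + ∑ i ∈ Finset.range n,
        Polynomial.C (c (i + 1)) * Polynomial.X ^ (n - (i + 1)), ?_, ?_⟩
      · apply Polynomial.monic_X_pow_add
        apply lt_of_le_of_lt (Polynomial.degree_sum_le _ _)
        apply Finset.sup_lt_iff (by exact_mod_cast WithBot.bot_lt_coe n) |>.mpr
        intro i hi
        refine lt_of_le_of_lt (Polynomial.degree_C_mul_X_pow_le _ _) ?_
        have hlt : n - (i + 1) < n := by have := Finset.mem_range.mp hi; omega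
        exact_mod_cast hlt
      · have heval : Polynomial.eval₂ φ z (Polynomial.X ^ n + ∑ i ∈ Finset.range n,
            Polynomial.C (c (i + 1)) * Polynomial.X ^ (n - (i + 1))) =
            z ^ n + ∑ i ∈ Finset.range n, φ (c (i + 1)) * z ^ (n - (i + 1)) := by
          simp [Polynomial.eval₂_finset_sum]
        rw [heval]
        have key : (φ f) ^ n * (z ^ n + ∑ i ∈ Finset.range n,
            φ (c (i + 1)) * z ^ (n - (i + 1))) = 0 := by
          have hterm : ∀ i ∈ Finset.range n,
              (φ f) ^ n * (φ (c (i + 1)) * z ^ (n - (i + 1))) =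
              φ (a (i + 1) * r ^ (n - (i + 1))) := by
            intro i hi
            have hin : i < n := Finset.mem_range.mp hi
            have hsplit : (φ f) ^ n = (φ f) ^ (i + 1) * (φ f) ^ (n - (i + 1)) := by
              rw [← pow_add]; congr 1; omega
            have hzr : (φ f) ^ (n - (i + 1)) * z ^ (n - (i + 1)) = (φ r) ^ (n - (i + 1)) := by
              rw [← mul_pow, mul_comm (φ f) z, hzf]
            calc (φ f) ^ n * (φ (c (i + 1)) * z ^ (n - (i + 1)))
                = (φ f) ^ (i + 1) * φ (c (i + 1)) *
                  ((φ f) ^ (n - (i + 1)) * z ^ (n - (i + 1))) := by rw [hsplit]; ring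
              _ = (φ f) ^ (i + 1) * φ (c (i + 1)) * (φ r) ^ (n - (i + 1)) := by rw [hzr]
              _ = φ (a (i + 1) * r ^ (n - (i + 1))) := by
                  rw [hc (i + 1), map_mul, map_mul, map_pow, map_pow]; try ring
          rw [mul_add, Finset.mul_sum]
          rw [Finset.sum_congr rfl hterm]
          have h0 : (φ f) ^ n * z ^ n = φ (r ^ n) := by
            rw [← mul_pow, mul_comm (φ f) z, hzf, map_pow]
          rw [h0, ← map_sum, ← map_add, heq, map_zero]
        have hfn : (φ f) ^ n ≠ 0 := pow_ne_zero _ hfK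
        exact (mul_eq_zero.mp key).resolve_left hfn
    obtain ⟨s, hs⟩ := IsIntegrallyClosed.isIntegral_iff.mp hint
    have : φ (s * f) = φ r := by rw [map_mul, hφ] at *; rw [hs, hzf]
    have hr : r = f * s := by rw [← hφinj this]; ring
    exact Ideal.mem_span_singleton.mpr ⟨s, hr⟩
  · intro r hr
    refine ⟨1, one_pos, fun i => if i = 1 then -r else 0, ?_, ?_⟩
    · intro i
      by_cases h : i = 1
      · subst h; simpa using neg_mem hr
      · simp [h]
    · simp

/-- A polynomial `a x^p + b y^p` with `a b ≠ 0` cannot divide a power of `x`. -/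
lemma aux_not_dvd {k : Type*} [Field k] {p : ℕ} (hp : p.Prime) {a b : k}
    (hb : b ≠ 0) (m : ℕ) :
    ¬ ((C a * X 0 ^ p + C b * X 1 ^ p : MvPolynomial (Fin 2) k) ∣ X 0 ^ m) := by
  intro hdvd
  set χ : MvPolynomial (Fin 2) k →ₐ[k] Polynomial k :=
    aeval (fun i => if i = 0 then 1 else Polynomial.X) with hχ
  have h1 : χ ((X 0 : MvPolynomial (Fin 2) k) ^ m) = 1 := by simp [hχ]
  have h2 : χ (C a * X 0 ^ p + C b * X 1 ^ p) =
      Polynomial.C b * Polynomial.X ^ p + Polynomial.C a := by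
    simp [hχ, Polynomial.algebraMap_eq]
    ring
  have hu : IsUnit (Polynomial.C b * Polynomial.X ^ p + Polynomial.C a) :=
    isUnit_of_dvd_one (by rw [← h1, ← h2]; exact map_dvd χ hdvd)
  have hdeg := Polynomial.degree_eq_zero_of_isUnit hu
  have hlt : (Polynomial.C a).degree < (Polynomial.C b * Polynomial.X ^ p).degree := by
    rw [Polynomial.degree_C_mul_X_pow _ hb]
    exact lt_of_le_of_lt Polynomial.degree_C_le (by exact_mod_cast hp.pos)
  rw [Polynomial.degree_add_eq_left_of_degree_lt hlt,
    Polynomial.degree_C_mul_X_pow _ hb] at hdeg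
  exact hp.ne_zero (by exact_mod_cast hdeg)

/-- in `k[x,y]` with `char k = p` and `t ∈ k` with no `p`-th root,
the ideal `I = (x^p + t y^p)` is integrally closed, and no invertible `k`-linear
change of coordinates turns `I` into a monomial ideal. -/
theorem stmt14 (k : Type*) [Field k] (p : ℕ) (hp : p.Prime) [CharP k p]
    (t : k) (ht : ∀ c : k, c ^ p ≠ t) :
    icl (Ideal.span {(X 0 : MvPolynomial (Fin 2) k) ^ p + C t * X 1 ^ p}) =
        ((Ideal.span {(X 0 : MvPolynomial (Fin 2) k) ^ p + C t * X 1 ^ p} : Ideal _) : Set _) ∧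
      ¬ ∃ M : Matrix (Fin 2) (Fin 2) k, IsUnit M.det ∧
        ∃ A : Set (Fin 2 →₀ ℕ),
          Ideal.map
              (aeval (fun i : Fin 2 => ∑ jj : Fin 2, C (M i jj) * X jj) :
                MvPolynomial (Fin 2) k →ₐ[k] MvPolynomial (Fin 2) k)
              (Ideal.span {(X 0 : MvPolynomial (Fin 2) k) ^ p + C t * X 1 ^ p}) =
            Ideal.span ((fun e => monomial e (1 : k)) '' A) := by
  haveI : Fact p.Prime := ⟨hp⟩
  have ht0 : t ≠ 0 := fun h => ht 0 (by simp [h, hp.ne_zero])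
  set f : MvPolynomial (Fin 2) k := X 0 ^ p + C t * X 1 ^ p with hfdef
  have hf0 : f ≠ 0 := by
    intro h
    have := congrArg (coeff (Finsupp.single 0 p)) h
    rw [hfdef] at this
    simp [coeff_X_pow, Finsupp.single_eq_single_iff, hp.ne_zero] at this
  constructor
  · exact icl_principal hf0
  · rintro ⟨M, hMdet, A, hmap⟩
    set σ : Fin 2 → MvPolynomial (Fin 2) k := fun i => ∑ jj : Fin 2, C (M i jj) * X jj with hσ
    set a : k := M 0 0 ^ p + t * M 1 0 ^ p with hadef
    set b : k := M 0 1 ^ p + t * M 1 1 ^ p with hbdef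
    set g : MvPolynomial (Fin 2) k := C a * X 0 ^ p + C b * X 1 ^ p with hgdef
    have himg : aeval σ f = g := by
      rw [hfdef, hgdef, hσ]
      simp only [map_add, map_mul, map_pow, aeval_X, aeval_C, algebraMap_eq]
      rw [Fin.sum_univ_two, Fin.sum_univ_two, add_pow_char, add_pow_char]
      simp only [mul_pow, ← C_pow, hadef, hbdef, map_add, map_mul]
      ring
    -- a ≠ 0 and b ≠ 0
    have hdet : M.det = M 0 0 * M 1 1 - M 0 1 * M 1 0 := Matrix.det_fin_two M
    have hcol : ∀ u v : k, u ^ p + t * v ^ p = 0 → u = 0 ∧ v = 0 := by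
      intro u v huv
      by_cases hv : v = 0
      · subst hv
        rw [zero_pow hp.ne_zero, mul_zero, add_zero] at huv
        exact ⟨pow_eq_zero_iff hp.ne_zero |>.mp huv, rfl⟩
      · exfalso
        apply ht (-u / v)
        have : (-u) ^ p = t * v ^ p := by
          rw [neg_pow, neg_one_pow_char k p]
          linear_combination -huv
        rw [div_pow, this, mul_div_assoc, div_self (pow_ne_zero _ hv), mul_one]
    have ha0 : a ≠ 0 := by
      intro h
      obtain ⟨h1, h2⟩ := hcol _ _ (hadef ▸ h)
      rw [hdet, h1, h2] at hMdet
      simp at hMdet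
    have hb0 : b ≠ 0 := by
      intro h
      obtain ⟨h1, h2⟩ := hcol _ _ (hbdef ▸ h)
      rw [hdet, h1, h2] at hMdet
      simp at hMdet
    -- the mapped ideal is (g)
    have hmapspan : Ideal.map (aeval σ : MvPolynomial (Fin 2) k →ₐ[k] MvPolynomial (Fin 2) k)
        (Ideal.span {f}) = Ideal.span {g} := by
      rw [Ideal.map_span, Set.image_singleton]
      congr 1
      rw [Set.singleton_eq_singleton_iff]
      exact himg
    rw [hmapspan] at hmap
    -- g lies in the span of the monomials
    have hg_mem : g ∈ Ideal.span ((fun e => monomial e (1 : k)) '' A) := by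
      rw [← hmap]
      exact Ideal.subset_span rfl
    obtain ⟨cf, hcf, hsum⟩ := Submodule.mem_span_set.mp hg_mem
    -- coefficient of x^p in g is a ≠ 0
    have hcoeffg : coeff (Finsupp.single 0 p) g = a := by
      rw [hgdef]
      simp [coeff_X_pow, Finsupp.single_eq_single_iff, hp.ne_zero]
    have hexists : ∃ mi ∈ cf.support, coeff (Finsupp.single 0 p) (cf mi * mi) ≠ 0 := by
      by_contra hno
      push_neg at hno
      have : coeff (Finsupp.single 0 p) g = 0 := by
        rw [← hsum, Finsupp.sum]
        rw [coeff_sum]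
        exact Finset.sum_eq_zero (by intro mi hmi; rw [smul_eq_mul]; exact hno mi hmi)
      rw [hcoeffg] at this
      exact ha0 this
    obtain ⟨mi, hmi, hmicoeff⟩ := hexists
    obtain ⟨e, heA, hemi⟩ := hcf hmi
    -- e ≤ single 0 p
    have hle : e ≤ Finsupp.single 0 p := by
      by_contra hle
      rw [← hemi] at hmicoeff
      rw [coeff_mul_monomial'] at hmicoeff
      simp [hle] at hmicoeff
    have he1 : e 1 = 0 := by
      have := (Finsupp.le_def.mp hle) 1
      simpa [Finsupp.single_apply] using this
    have hesingle : e = Finsupp.single 0 (e 0) := by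
      ext j
      fin_cases j
      · simp
      · simp [he1, Finsupp.single_apply]
    obtain ⟨m, hm⟩ : ∃ m, e = Finsupp.single 0 m := ⟨e 0, hesingle⟩
    have hmono : (monomial e (1 : k) : MvPolynomial (Fin 2) k) = X 0 ^ m := by
      rw [hm]; exact X_pow_eq_monomial.symm
    -- monomial e 1 ∈ (g), so g ∣ x^(e 0)
    have hmem : (monomial e (1 : k) : MvPolynomial (Fin 2) k) ∈ Ideal.span {g} := by
      rw [hmap]
      exact Ideal.subset_span ⟨e, heA, rfl⟩
    rw [hmono, Ideal.mem_span_singleton] at hmem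
    exact aux_not_dvd hp hb0 m hmem
end

section
/- Let L be a field, let x_{i,j} (1 ≤ i ≤ r, 1 ≤ j ≤ a_i) and y_1,...,y_s be variables, S the polynomial ring in all of them, and e_1 < ... < e_r positive integers. Let D be the integral closure of the ideal generated by all x_{i,j}^{e_i}. If γ ∈ GL over L fixes the flag 0 ⊆ span(x_{1,*}) ⊆ span(x_{1,*}, x_{2,*}) ⊆ ... ⊆ span(x_{1,*},...,x_{r,*}), then γD = D. -/
open MvPolynomial

namespace S15

/-! ### Weights -/

def wt {σ : Type*} (w : σ → ℕ) (d : σ →₀ ℕ) : ℕ := d.sum fun v c => c * w v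

variable {L : Type*} [Field L] {σ : Type*}

lemma wt_add (w : σ → ℕ) (d1 d2 : σ →₀ ℕ) : wt w (d1 + d2) = wt w d1 + wt w d2 :=
  Finsupp.sum_add_index' (fun _ => zero_mul _) (fun _ b c => add_mul b c _)

lemma wt_single (w : σ → ℕ) (v : σ) (b : ℕ) : wt w (Finsupp.single v b) = b * w v :=
  Finsupp.sum_single_index (zero_mul _)

noncomputable def phi (w : σ → ℕ) : MvPolynomial σ L →ₐ[L] Polynomial (MvPolynomial σ L) :=
  aeval fun v => Polynomial.C (X v) * Polynomial.X ^ w v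

lemma phi_X (w : σ → ℕ) (v : σ) :
    phi (L := L) w (X v) = Polynomial.C (X v) * Polynomial.X ^ w v := by
  simp [phi]

lemma phi_monomial (w : σ → ℕ) (d : σ →₀ ℕ) (c : L) :
    phi w (monomial d c) = Polynomial.C (monomial d c) * Polynomial.X ^ wt w d := by
  induction d using Finsupp.induction with
  | zero =>
      simp only [monomial_zero', wt]
      simp [phi, aeval_C, Polynomial.algebraMap_apply, algebraMap_eq, Finsupp.sum_zero_index]
  | single_add v b d hvd hb ih =>
      rw [monomial_single_add, map_mul, map_pow, phi_X, ih, wt_add, wt_single,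
        mul_pow, ← Polynomial.C_pow, ← pow_mul, Polynomial.C_mul, pow_add,
        mul_comm (w v) b]
      ring

lemma phi_eq_sum (w : σ → ℕ) (f : MvPolynomial σ L) :
    phi w f = ∑ d ∈ f.support, Polynomial.C (monomial d (coeff d f)) * Polynomial.X ^ wt w d := by
  conv_lhs => rw [f.as_sum, map_sum]
  exact Finset.sum_congr rfl fun d _ => phi_monomial w d _

lemma mem_W_of_dvd {w : σ → ℕ} {E : ℕ} {f : MvPolynomial σ L}
    (h : (Polynomial.X : Polynomial (MvPolynomial σ L)) ^ E ∣ phi w f) :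
    ∀ d ∈ f.support, E ≤ wt w d := by
  classical
  intro d0 hd0
  by_contra hlt
  push_neg at hlt
  have h0 : (phi (L := L) w f).coeff (wt w d0) = 0 :=
    Polynomial.X_pow_dvd_iff.1 h _ hlt
  rw [phi_eq_sum, Polynomial.finset_sum_coeff] at h0
  simp only [Polynomial.coeff_C_mul, Polynomial.coeff_X_pow] at h0
  have := congrArg (coeff d0) h0
  rw [MvPolynomial.coeff_sum] at this
  simp only [MvPolynomial.coeff_zero] at this
  rw [Finset.sum_eq_single d0 (fun d _ hne => by
        split_ifs <;> simp [coeff_monomial, hne]) (fun h => absurd hd0 h)] at this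
  simp [coeff_monomial] at this
  exact (MvPolynomial.mem_support_iff.1 hd0) this

/-! ### Trailing degree argument -/

lemma natTrailingDegree_pow {S : Type*} [CommRing S] [IsDomain S] {g : Polynomial S}
    (hg : g ≠ 0) (n : ℕ) : (g ^ n).natTrailingDegree = n * g.natTrailingDegree := by
  induction n with
  | zero => simp
  | succ n ih =>
      rw [pow_succ, Polynomial.natTrailingDegree_mul (pow_ne_zero _ hg) hg, ih]
      ring

lemma tord {S : Type*} [CommRing S] [IsDomain S] {g : Polynomial S} {n E : ℕ}
    (hE : 0 < E) (b : ℕ → Polynomial S)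
    (hb : ∀ i, (Polynomial.X : Polynomial S) ^ (E * i) ∣ b i)
    (heq : g ^ n + ∑ i ∈ Finset.range n, b (i + 1) * g ^ (n - (i + 1)) = 0) :
    (Polynomial.X : Polynomial S) ^ E ∣ g := by
  rcases eq_or_ne g 0 with rfl | hg
  · exact dvd_zero _
  by_contra hnd
  set k := g.natTrailingDegree with hk
  have hXk : (Polynomial.X : Polynomial S) ^ k ∣ g := by
    rw [Polynomial.X_pow_dvd_iff]
    exact fun d hd => Polynomial.coeff_eq_zero_of_lt_natTrailingDegree hd
  have hkE : k + 1 ≤ E := by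
    by_contra hh
    push_neg at hh
    exact hnd (dvd_trans (pow_dvd_pow _ (by omega)) hXk)
  have hcoeff : (g ^ n).coeff (n * k) ≠ 0 := by
    have h1 : (g ^ n).natTrailingDegree = n * k := natTrailingDegree_pow hg n
    have h2 : (g ^ n) ≠ 0 := pow_ne_zero _ hg
    have := Polynomial.trailingCoeff_nonzero_iff_nonzero.2 h2
    rwa [Polynomial.trailingCoeff, h1] at this
  apply hcoeff
  have hgn : g ^ n = -∑ i ∈ Finset.range n, b (i + 1) * g ^ (n - (i + 1)) := by
    linear_combination heq
  rw [hgn, Polynomial.coeff_neg, Polynomial.finset_sum_coeff]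
  rw [Finset.sum_eq_zero, neg_zero]
  intro i hi
  rw [Finset.mem_range] at hi
  have hdvd : (Polynomial.X : Polynomial S) ^ (n * k + 1) ∣ b (i + 1) * g ^ (n - (i + 1)) := by
    have h1 := hb (i + 1)
    have h2 : (Polynomial.X : Polynomial S) ^ (k * (n - (i + 1))) ∣ g ^ (n - (i + 1)) := by
      rw [pow_mul]
      exact pow_dvd_pow_of_dvd hXk _
    have h3 := mul_dvd_mul h1 h2
    rw [← pow_add] at h3
    refine dvd_trans (pow_dvd_pow _ ?_) h3
    have hn' : n = (n - (i + 1)) + (i + 1) := by omega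
    have hmul : (k + 1) * (i + 1) ≤ E * (i + 1) := Nat.mul_le_mul_right _ hkE
    nlinarith [hn', hmul]
  exact Polynomial.X_pow_dvd_iff.1 hdvd _ (Nat.lt_succ_self _)

lemma icl_sub_W {w : σ → ℕ} {G : Set (MvPolynomial σ L)} {E : ℕ} (hE : 0 < E)
    (hG : ∀ g ∈ G, (Polynomial.X : Polynomial (MvPolynomial σ L)) ^ E ∣ phi w g)
    {f : MvPolynomial σ L} (hf : f ∈ icl (Ideal.span G)) :
    ∀ d ∈ f.support, E ≤ wt w d := by
  obtain ⟨n, hn, a, ha, heq⟩ := hf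
  apply mem_W_of_dvd (E := E)
  have hmap : ∀ i : ℕ, (Polynomial.X : Polynomial (MvPolynomial σ L)) ^ (E * i) ∣
      phi w (a i) := by
    intro i
    have h1 : phi (L := L) w (a i) ∈ Ideal.map (phi (L := L) w) ((Ideal.span G) ^ i) :=
      Ideal.mem_map_of_mem _ (ha i)
    rw [Ideal.map_pow, Ideal.map_span] at h1
    have h2 : Ideal.span ((phi (L := L) w) '' G)
        ≤ Ideal.span {(Polynomial.X : Polynomial (MvPolynomial σ L)) ^ E} := by
      rw [Ideal.span_le]
      rintro _ ⟨g, hg, rfl⟩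
      exact Ideal.mem_span_singleton.2 (hG g hg)
    have h3 := Ideal.pow_right_mono h2 i h1
    rw [Ideal.span_singleton_pow, ← pow_mul] at h3
    exact Ideal.mem_span_singleton.1 h3
  have heq2 : (phi (L := L) w f) ^ n + ∑ i ∈ Finset.range n,
      (phi (L := L) w (a (i + 1))) * (phi (L := L) w f) ^ (n - (i + 1)) = 0 := by
    have := congrArg (phi (L := L) w) heq
    rw [map_add, map_pow, map_sum, map_zero] at this
    simpa [map_mul, map_pow] using this
  exact tord hE _ hmap heq2

/-! ### Rees algebra -/

noncomputable def rees {R : Type*} [CommRing R] (G : Set R) : Subalgebra R (Polynomial R) :=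
  Algebra.adjoin R ((fun g => Polynomial.C g * Polynomial.X) '' G)

lemma rees_coeff {R : Type*} [CommRing R] {G : Set R} {b : Polynomial R}
    (hb : b ∈ rees G) (j : ℕ) : b.coeff j ∈ (Ideal.span G) ^ j := by
  induction hb using Algebra.adjoin_induction generalizing j with
  | mem x hx =>
      obtain ⟨g, hg, rfl⟩ := hx
      rw [Polynomial.coeff_C_mul, Polynomial.coeff_X]
      by_cases h1 : (1 : ℕ) = j
      · subst h1
        simpa using Ideal.subset_span hg
      · simp [h1]
  | algebraMap r =>
      rcases Nat.eq_zero_or_pos j with rfl | hj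
      · simp [Polynomial.coeff_C]
      · rw [Polynomial.algebraMap_apply, Polynomial.coeff_C, if_neg (by omega)]
        exact Submodule.zero_mem _
  | add x y hx hy ihx ihy => simpa [Polynomial.coeff_add] using add_mem (ihx j) (ihy j)
  | mul x y hx hy ihx ihy =>
      rw [Polynomial.coeff_mul]
      refine Submodule.sum_mem _ fun p hp => ?_
      rw [Finset.HasAntidiagonal.mem_antidiagonal] at hp
      have := Ideal.mul_mem_mul (ihx p.1) (ihy p.2)
      rwa [← pow_add, hp] at this

lemma rees_CX_mem {R : Type*} [CommRing R] (G : Set R) :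
    ∀ (k : ℕ) (h : R), h ∈ (Ideal.span G) ^ k →
      Polynomial.C h * Polynomial.X ^ k ∈ rees G := by
  intro k
  induction k with
  | zero =>
      intro h _
      simpa using (rees G).algebraMap_mem h
  | succ k ih =>
      intro h hh
      rw [pow_succ] at hh
      refine Submodule.mul_induction_on
        (C := fun r => Polynomial.C r * Polynomial.X ^ (k + 1) ∈ rees G) hh
        (fun m hm n hn => ?_) (fun x y hx hy => ?_)
      · have h1 : Polynomial.C n * Polynomial.X ∈ rees G := by
          induction hn using Submodule.span_induction with
          | mem g hg => exact Algebra.subset_adjoin ⟨g, hg, rfl⟩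
          | zero => simpa using (rees G).zero_mem
          | add x y _ _ hx hy => rw [map_add, add_mul]; exact add_mem hx hy
          | smul r x _ hx =>
              rw [smul_eq_mul, map_mul, mul_assoc]
              exact (rees G).mul_mem ((rees G).algebraMap_mem r) hx
        have h2 := (rees G).mul_mem (ih m hm) h1
        rw [show Polynomial.C m * Polynomial.X ^ k * (Polynomial.C n * Polynomial.X)
            = Polynomial.C (m * n) * Polynomial.X ^ (k + 1) by
          rw [Polynomial.C_mul]; ring] at h2
        exact h2
      · show Polynomial.C (x + y) * Polynomial.X ^ (k + 1) ∈ rees G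
        rw [map_add, add_mul]
        exact add_mem hx hy

lemma icl_of_CX_integral {R : Type*} [CommRing R] [Nontrivial R] {G : Set R} {f : R}
    (h : (Polynomial.C f * Polynomial.X) ∈ integralClosure (rees G) (Polynomial R)) :
    f ∈ icl (Ideal.span G) := by
  classical
  obtain ⟨p, hp, hev⟩ := h
  set n := p.natDegree with hn
  set z : Polynomial R := Polynomial.C f * Polynomial.X with hz
  have hev' : z ^ n + ∑ i ∈ Finset.range n, ((p.coeff i : Polynomial R)) * z ^ i = 0 := by
    rw [Polynomial.eval₂_eq_sum_range, Finset.sum_range_succ,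
      hp.coeff_natDegree, map_one, one_mul] at hev
    rw [add_comm]
    exact hev
  have hn0 : n ≠ 0 := by
    intro h0
    rw [h0] at hev'
    simp at hev'
  have hzpow : ∀ m : ℕ, z ^ m = Polynomial.C (f ^ m) * Polynomial.X ^ m := by
    intro m; rw [hz, mul_pow, Polynomial.C_pow]
  have hcoeff : f ^ n + ∑ i ∈ Finset.range n,
      ((p.coeff i : Polynomial R).coeff (n - i)) * f ^ i = 0 := by
    have h5 := congrArg (fun q => Polynomial.coeff q n) hev'
    simp only [Polynomial.coeff_add, Polynomial.finset_sum_coeff, Polynomial.coeff_zero] at h5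
    have h4 : (z ^ n).coeff n = f ^ n := by
      rw [hzpow n, Polynomial.coeff_C_mul, Polynomial.coeff_X_pow, if_pos rfl, mul_one]
    rw [h4] at h5
    rw [← h5]
    congr 1
    refine Finset.sum_congr rfl fun i hi => ?_
    rw [Finset.mem_range] at hi
    rw [hzpow i, show ((p.coeff i : Polynomial R)) * (Polynomial.C (f ^ i) * Polynomial.X ^ i)
      = ((p.coeff i : Polynomial R)) * Polynomial.C (f ^ i) * Polynomial.X ^ i by ring,
      Polynomial.coeff_mul_X_pow', if_pos (le_of_lt hi), Polynomial.coeff_mul_C]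
  set A : ℕ → R := fun j => if j ≤ n then ((p.coeff (n - j) : Polynomial R)).coeff j else 0
    with hA
  refine ⟨n, Nat.pos_of_ne_zero hn0, A, ?_, ?_⟩
  · intro j
    by_cases hj : j ≤ n
    · rw [hA]
      simp only [hj, if_true]
      exact rees_coeff (SetLike.coe_mem _) j
    · rw [hA]
      simp only [hj, if_false]
      exact Submodule.zero_mem _
  · have hsum : (∑ i ∈ Finset.range n, A (i + 1) * f ^ (n - (i + 1)))
        = ∑ i ∈ Finset.range n, ((p.coeff i : Polynomial R)).coeff (n - i) * f ^ i := by
      rw [← Finset.sum_range_reflect (fun i => ((p.coeff i : Polynomial R)).coeff (n - i) * f ^ i) n]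
      refine Finset.sum_congr rfl fun i hi => ?_
      rw [Finset.mem_range] at hi
      rw [hA]
      simp only []
      rw [if_pos (show i + 1 ≤ n by omega)]
      rw [show n - 1 - i = n - (i + 1) by omega,
        show n - (n - (i + 1)) = i + 1 by omega]
    rw [hsum]
    exact hcoeff

/-! ### Membership of small-weight polynomials in the integral closure -/

lemma mono_mem {w : σ → ℕ} {G : Set (MvPolynomial σ L)} {E : ℕ}
    (hvar : ∀ (v : σ) (b : ℕ), (X v : MvPolynomial σ L) ^ (E * b) ∈ (Ideal.span G) ^ (b * w v))
    (d : σ →₀ ℕ) :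
    (monomial (E • d) (1 : L) : MvPolynomial σ L) ∈ (Ideal.span G) ^ (wt w d) := by
  induction d using Finsupp.induction with
  | zero => simp [wt]
  | single_add v b d hvd hb ih =>
      rw [smul_add, Finsupp.smul_single, smul_eq_mul, monomial_single_add,
        wt_add, wt_single, pow_add]
      exact Ideal.mul_mem_mul (hvar v b) ih

lemma W_subset_icl {w : σ → ℕ} {G : Set (MvPolynomial σ L)} {E : ℕ} (hE : 0 < E)
    (hvar : ∀ (v : σ) (b : ℕ), (X v : MvPolynomial σ L) ^ (E * b) ∈ (Ideal.span G) ^ (b * w v))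
    {f : MvPolynomial σ L} (hf : ∀ d ∈ f.support, E ≤ wt w d) :
    f ∈ icl (Ideal.span G) := by
  apply icl_of_CX_integral (G := G)
  have hsum : (Polynomial.C f * Polynomial.X : Polynomial (MvPolynomial σ L))
      = ∑ d ∈ f.support, Polynomial.C (monomial d (coeff d f)) * Polynomial.X := by
    conv_lhs => rw [f.as_sum, map_sum, Finset.sum_mul]
  rw [hsum]
  refine sum_mem fun d hd => ?_
  have hm : ((monomial d (coeff d f) : MvPolynomial σ L)) ^ E ∈ (Ideal.span G) ^ E := by
    have h1 := mono_mem (L := L) hvar d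
    have h2 : (monomial d (coeff d f) : MvPolynomial σ L) ^ E
        = C ((coeff d f) ^ E) * monomial (E • d) (1 : L) := by
      rw [monomial_pow, C_mul_monomial, mul_one]
    rw [h2]
    exact Ideal.mul_mem_left _ _ (Ideal.pow_le_pow_right (hf d hd) h1)
  have hpowmem : (Polynomial.C (monomial d (coeff d f)) * Polynomial.X :
      Polynomial (MvPolynomial σ L)) ^ E ∈ rees G := by
    rw [mul_pow, ← Polynomial.C_pow]
    exact rees_CX_mem G E _ hm
  have hint : IsIntegral (rees G)
      ((Polynomial.C (monomial d (coeff d f)) * Polynomial.X :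
        Polynomial (MvPolynomial σ L)) ^ E) := by
    have := isIntegral_algebraMap (R := rees G) (A := Polynomial (MvPolynomial σ L))
      (x := ⟨_, hpowmem⟩)
    simpa using this
  exact IsIntegral.of_pow hE hint

end S15

/-- with variables `x_{i,j}` (`1 ≤ i ≤ r`, `1 ≤ j ≤ a_i`) and
`y_1,…,y_s`, `e_1 < ⋯ < e_r` positive, and `D` the integral closure of the
ideal generated by all `x_{i,j}^{e_i}`: any graded automorphism `γ` acting
linearly on the variables and fixing the flag
`span(x_{1,*}) ⊆ span(x_{1,*},x_{2,*}) ⊆ ⋯` satisfies `γ D = D`. -/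
theorem stmt15 (L : Type*) [Field L] (r s : ℕ) (a : Fin r → ℕ) (e : Fin r → ℕ)
    (hpos : ∀ i, 0 < e i) (hmono : StrictMono e)
    (γ : MvPolynomial ((Σ i : Fin r, Fin (a i)) ⊕ Fin s) L ≃ₐ[L]
          MvPolynomial ((Σ i : Fin r, Fin (a i)) ⊕ Fin s) L)
    (hlin : ∀ v, γ (X v) ∈ Submodule.span L
      (Set.range (X : ((Σ i : Fin r, Fin (a i)) ⊕ Fin s) →
        MvPolynomial ((Σ i : Fin r, Fin (a i)) ⊕ Fin s) L)))
    (hflag : ∀ (i : Fin r) (j : Fin (a i)),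
      γ (X (Sum.inl ⟨i, j⟩)) ∈ Submodule.span L
        {f : MvPolynomial ((Σ i : Fin r, Fin (a i)) ⊕ Fin s) L |
          ∃ (i' : Fin r) (j' : Fin (a i')), i' ≤ i ∧ f = X (Sum.inl ⟨i', j'⟩)}) :
    ⇑γ '' icl (Ideal.span
        {g : MvPolynomial ((Σ i : Fin r, Fin (a i)) ⊕ Fin s) L |
          ∃ (i : Fin r) (j : Fin (a i)), g = X (Sum.inl ⟨i, j⟩) ^ e i}) =
      icl (Ideal.span
        {g : MvPolynomial ((Σ i : Fin r, Fin (a i)) ⊕ Fin s) L |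
          ∃ (i : Fin r) (j : Fin (a i)), g = X (Sum.inl ⟨i, j⟩) ^ e i}) := by
  classical
  open S15 in
  -- main inclusion, proved for any automorphism fixing the flag
  have main : ∀ (δ : MvPolynomial ((Σ i : Fin r, Fin (a i)) ⊕ Fin s) L ≃ₐ[L]
          MvPolynomial ((Σ i : Fin r, Fin (a i)) ⊕ Fin s) L),
      (∀ (i : Fin r) (j : Fin (a i)),
        δ (X (Sum.inl ⟨i, j⟩)) ∈ Submodule.span L
          {f : MvPolynomial ((Σ i : Fin r, Fin (a i)) ⊕ Fin s) L |
            ∃ (i' : Fin r) (j' : Fin (a i')), i' ≤ i ∧ f = X (Sum.inl ⟨i', j'⟩)}) →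
      ⇑δ '' icl (Ideal.span
        {g : MvPolynomial ((Σ i : Fin r, Fin (a i)) ⊕ Fin s) L |
          ∃ (i : Fin r) (j : Fin (a i)), g = X (Sum.inl ⟨i, j⟩) ^ e i}) ⊆
      icl (Ideal.span
        {g : MvPolynomial ((Σ i : Fin r, Fin (a i)) ⊕ Fin s) L |
          ∃ (i : Fin r) (j : Fin (a i)), g = X (Sum.inl ⟨i, j⟩) ^ e i}) := by
    intro δ hδ
    set G : Set (MvPolynomial ((Σ i : Fin r, Fin (a i)) ⊕ Fin s) L) :=
      {g | ∃ (i : Fin r) (j : Fin (a i)), g = X (Sum.inl ⟨i, j⟩) ^ e i} with hG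
    set E : ℕ := ∏ i, e i with hE
    have hEpos : 0 < E := Finset.prod_pos fun i _ => hpos i
    have hdvd : ∀ i : Fin r, e i ∣ E := fun i => Finset.dvd_prod_of_mem e (Finset.mem_univ i)
    have hwmul : ∀ i : Fin r, E / e i * e i = E := fun i => Nat.div_mul_cancel (hdvd i)
    set w : ((Σ i : Fin r, Fin (a i)) ⊕ Fin s) → ℕ :=
      Sum.elim (fun p => E / e p.1) (fun _ => 0) with hw
    have hvar : ∀ (v : (Σ i : Fin r, Fin (a i)) ⊕ Fin s) (b : ℕ),
        (X v : MvPolynomial ((Σ i : Fin r, Fin (a i)) ⊕ Fin s) L) ^ (E * b) ∈ (Ideal.span G) ^ (b * w v) := by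
      rintro (⟨i, j⟩ | y) b
      · have hpow : (X (Sum.inl ⟨i, j⟩) : MvPolynomial ((Σ i : Fin r, Fin (a i)) ⊕ Fin s) L) ^ (E * b)
            = (X (Sum.inl ⟨i, j⟩) ^ e i) ^ (b * (E / e i)) := by
          rw [← pow_mul]
          congr 1
          rw [show e i * (b * (E / e i)) = b * (E / e i * e i) by ring, hwmul i]
          ring
        rw [hpow]
        have hg : (X (Sum.inl ⟨i, j⟩) : MvPolynomial ((Σ i : Fin r, Fin (a i)) ⊕ Fin s) L) ^ e i ∈ Ideal.span G :=
          Ideal.subset_span ⟨i, j, rfl⟩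
        have := Ideal.pow_mem_pow hg (b * (E / e i))
        simpa [hw] using this
      · simp [hw]
    have hphiflag : ∀ (i : Fin r) (x : MvPolynomial ((Σ i : Fin r, Fin (a i)) ⊕ Fin s) L),
        x ∈ Submodule.span L
          {f : MvPolynomial ((Σ i : Fin r, Fin (a i)) ⊕ Fin s) L |
            ∃ (i' : Fin r) (j' : Fin (a i')), i' ≤ i ∧ f = X (Sum.inl ⟨i', j'⟩)} →
        phi w x ∈ Ideal.span
          {(Polynomial.X : Polynomial (MvPolynomial ((Σ i : Fin r, Fin (a i)) ⊕ Fin s) L))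
            ^ (E / e i)} := by
      intro i x hx
      induction hx using Submodule.span_induction with
      | mem g hg =>
          obtain ⟨i', j', hle, rfl⟩ := hg
          rw [phi_X]
          refine Ideal.mem_span_singleton.2 (Dvd.dvd.mul_left (pow_dvd_pow _ ?_) _)
          show E / e i ≤ w (Sum.inl ⟨i', j'⟩)
          simp only [hw, Sum.elim_inl]
          exact Nat.div_le_div_left (hmono.monotone hle) (hpos i')
      | zero => simp
      | add x y _ _ hx hy => rw [map_add]; exact add_mem hx hy
      | smul c x _ hx =>
          rw [map_smul, Algebra.smul_def]
          exact Ideal.mul_mem_left _ _ hx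
    have hG' : ∀ g ∈ (⇑δ '' G),
        (Polynomial.X : Polynomial (MvPolynomial ((Σ i : Fin r, Fin (a i)) ⊕ Fin s) L)) ^ E
          ∣ phi w g := by
      rintro _ ⟨g, ⟨i, j, rfl⟩, rfl⟩
      rw [map_pow, map_pow]
      have h1 := hphiflag i _ (hδ i j)
      have h2 := Ideal.pow_mem_pow h1 (e i)
      rw [Ideal.span_singleton_pow, ← pow_mul, hwmul i] at h2
      exact Ideal.mem_span_singleton.1 h2
    rintro _ ⟨f, hf, rfl⟩
    obtain ⟨n, hn, aa, haa, heq⟩ := hf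
    have hδf : δ f ∈ icl (Ideal.span (⇑δ '' G)) := by
      refine ⟨n, hn, fun i => δ (aa i), fun i => ?_, ?_⟩
      · have h1 : δ (aa i) ∈ Ideal.map δ ((Ideal.span G) ^ i) :=
          Ideal.mem_map_of_mem _ (haa i)
        rwa [Ideal.map_pow, Ideal.map_span] at h1
      · have := congrArg δ heq
        rw [map_add, map_pow, map_sum, map_zero] at this
        simpa [map_mul, map_pow] using this
    exact W_subset_icl hEpos hvar (icl_sub_W hEpos hG' hδf)
  -- flag property for the inverse automorphism
  have hflag' : ∀ (i : Fin r) (j : Fin (a i)),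
      γ.symm (X (Sum.inl ⟨i, j⟩)) ∈ Submodule.span L
        {f : MvPolynomial ((Σ i : Fin r, Fin (a i)) ⊕ Fin s) L |
          ∃ (i' : Fin r) (j' : Fin (a i')), i' ≤ i ∧ f = X (Sum.inl ⟨i', j'⟩)} := by
    intro i j
    set Si : Set (MvPolynomial ((Σ i : Fin r, Fin (a i)) ⊕ Fin s) L) :=
      {f | ∃ (i' : Fin r) (j' : Fin (a i')), i' ≤ i ∧ f = X (Sum.inl ⟨i', j'⟩)} with hSi
    set F : Submodule L (MvPolynomial ((Σ i : Fin r, Fin (a i)) ⊕ Fin s) L) :=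
      Submodule.span L Si with hF
    have hmap : ∀ x ∈ F, γ.toLinearMap x ∈ F := by
      intro x hx
      induction hx using Submodule.span_induction with
      | mem g hg =>
          obtain ⟨i', j', hle, rfl⟩ := hg
          show γ (X (Sum.inl ⟨i', j'⟩)) ∈ F
          refine Submodule.span_mono ?_ (hflag i' j')
          rintro _ ⟨i'', j'', hle', rfl⟩
          exact ⟨i'', j'', le_trans hle' hle, rfl⟩
      | zero => simp
      | add x y _ _ hx hy => rw [map_add]; exact add_mem hx hy
      | smul c x _ hx => rw [map_smul]; exact Submodule.smul_mem _ _ hx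
    have hfin : Si.Finite := by
      refine Set.Finite.subset (Set.finite_range
        (fun p : Σ i' : Fin r, Fin (a i') =>
          (X (Sum.inl p) : MvPolynomial ((Σ i : Fin r, Fin (a i)) ⊕ Fin s) L))) ?_
      rintro _ ⟨i', j', _, rfl⟩
      exact ⟨⟨i', j'⟩, rfl⟩
    have hfd : FiniteDimensional L F := FiniteDimensional.span_of_finite L hfin
    set T := γ.toLinearMap.restrict hmap with hT
    have hTinj : Function.Injective T := by
      intro x y hxy
      apply Subtype.ext
      apply γ.injective
      have := congrArg Subtype.val hxy
      simpa [hT, LinearMap.restrict_apply] using this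
    have hTsurj := LinearMap.injective_iff_surjective.mp hTinj
    have hXmem : (X (Sum.inl ⟨i, j⟩) : MvPolynomial ((Σ i : Fin r, Fin (a i)) ⊕ Fin s) L) ∈ F :=
      Submodule.subset_span ⟨i, j, le_refl i, rfl⟩
    obtain ⟨z, hz⟩ := hTsurj ⟨X (Sum.inl ⟨i, j⟩), hXmem⟩
    have hz' : γ (z : MvPolynomial ((Σ i : Fin r, Fin (a i)) ⊕ Fin s) L)
        = X (Sum.inl ⟨i, j⟩) := by
      have := congrArg Subtype.val hz
      simpa [hT, LinearMap.restrict_apply] using this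
    have : γ.symm (X (Sum.inl ⟨i, j⟩)) = (z : MvPolynomial _ L) := by
      rw [← hz']
      exact γ.symm_apply_apply _
    rw [this]
    exact z.2
  refine Set.Subset.antisymm (main γ hflag) fun f hf => ?_
  refine ⟨γ.symm f, main γ.symm hflag' ⟨f, hf, rfl⟩, ?_⟩
  simp
end

section
/- Let R = k[x_1,...,x_n] be a polynomial ring over a field of characteristic p > 0, m the homogeneous maximal ideal, and I_1, I_2 homogeneous ideals generated in degrees d_1 < d_2 respectively such that I = I_1 + I_2 is m-primary with m^{d_2} ⊆ integral closure of I. Then for all e, ν_I(p^e) = (n p^e - n)/d_2 + ν_{I_1}(p^e)·(d_2 - d_1)/d_2 rounded appropriately, and consequently the F-pure threshold satisfies c(I) = n/d_2 + c(I_1)·(d_2 - d_1)/d_2. -/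
open MvPolynomial Filter

/-- `ν_J(q) = max { t : J^t ⊄ (x_1^q,…,x_n^q) }`. -/
noncomputable def nuF {k : Type*} [Field k] {n : ℕ}
    (J : Ideal (MvPolynomial (Fin n) k)) (q : ℕ) : ℕ :=
  sSup {t : ℕ | ¬ J ^ t ≤ Ideal.span (Set.range fun i : Fin n => (X i : MvPolynomial (Fin n) k) ^ q)}

namespace Stmt16Aux

open Pointwise

variable {k : Type*} [Field k] {n : ℕ}

/-- the Frobenius-power ideal -/
noncomputable def mq (k : Type*) [Field k] (n q : ℕ) : Ideal (MvPolynomial (Fin n) k) :=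
  Ideal.span (Set.range fun i : Fin n => (X i : MvPolynomial (Fin n) k) ^ q)

lemma mem_mq {q : ℕ} {f : MvPolynomial (Fin n) k} :
    f ∈ mq k n q ↔ ∀ d ∈ f.support, ∃ i, q ≤ d i := by
  have h1 : (Set.range fun i : Fin n => (X i : MvPolynomial (Fin n) k) ^ q)
      = (fun s => monomial s (1:k)) '' (Set.range fun i : Fin n => Finsupp.single i q) := by
    rw [← Set.range_comp]
    exact congrArg _ (funext fun i => X_pow_eq_monomial)
  rw [mq, h1, mem_ideal_span_monomial_image]
  constructor
  · intro h d hd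
    obtain ⟨si, ⟨i, rfl⟩, hle⟩ := h d hd
    exact ⟨i, by simpa using (Finsupp.single_le_iff).1 hle⟩
  · intro h d hd
    obtain ⟨i, hi⟩ := h d hd
    exact ⟨Finsupp.single i q, ⟨i, rfl⟩, Finsupp.single_le_iff.2 hi⟩

lemma one_not_mem_mq {q : ℕ} (hq : 1 ≤ q) : (1 : MvPolynomial (Fin n) k) ∉ mq k n q := by
  rw [mem_mq]
  intro h
  obtain ⟨i, hi⟩ := h 0 (by
    rw [mem_support_iff]
    classical
    simp [coeff_one])
  simp at hi; omega

/-- The ideal of polynomials all of whose monomials have degree at least `D`. -/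
def Kdeg (k : Type*) [Field k] (n D : ℕ) : Ideal (MvPolynomial (Fin n) k) where
  carrier := {f | ∀ d ∈ f.support, D ≤ d.degree}
  zero_mem' := by simp
  add_mem' := by
    intro a b ha hb d hd
    rcases Finset.mem_union.1 (MvPolynomial.support_add hd) with h | h
    · exact ha d h
    · exact hb d h
  smul_mem' := by
    intro r f hf d hd
    rw [smul_eq_mul] at hd
    classical
    obtain ⟨da, hda, db, hdb, rfl⟩ := Finset.mem_add.1 (MvPolynomial.support_mul r f hd)
    calc D ≤ db.degree := hf db hdb
    _ ≤ da.degree + db.degree := le_add_self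
    _ = (da + db).degree := by
        rw [Finsupp.degree_eq_weight_one, map_add]

lemma mem_Kdeg {D : ℕ} {f : MvPolynomial (Fin n) k} :
    f ∈ Kdeg k n D ↔ ∀ d ∈ f.support, D ≤ d.degree := Iff.rfl

lemma Kdeg_anti {D D' : ℕ} (h : D ≤ D') : Kdeg k n D' ≤ Kdeg k n D :=
  fun _ hf d hd => le_trans h (hf d hd)

lemma Kdeg_zero : Kdeg k n 0 = ⊤ := by
  ext f; simp [mem_Kdeg]

lemma Kdeg_mul {D1 D2 : ℕ} : Kdeg k n D1 * Kdeg k n D2 ≤ Kdeg k n (D1 + D2) := by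
  refine Ideal.mul_le.2 fun a ha b hb => ?_
  intro d hd
  classical
  obtain ⟨da, hda, db, hdb, rfl⟩ := Finset.mem_add.1 (MvPolynomial.support_mul a b hd)
  have : (da + db).degree = da.degree + db.degree := by
    rw [Finsupp.degree_eq_weight_one, map_add]
  rw [this]
  exact add_le_add (ha da hda) (hb db hdb)

lemma Kdeg_pow {D a : ℕ} {P : Ideal (MvPolynomial (Fin n) k)} (hP : P ≤ Kdeg k n D) :
    P ^ a ≤ Kdeg k n (D * a) := by
  induction a with
  | zero => simp [Kdeg_zero]
  | succ a ih =>
      calc P ^ (a+1) = P ^ a * P := pow_succ P a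
      _ ≤ Kdeg k n (D * a) * Kdeg k n D := Ideal.mul_mono ih hP
      _ ≤ Kdeg k n (D * a + D) := Kdeg_mul
      _ = Kdeg k n (D * (a+1)) := by ring_nf

lemma Kdeg_le_mq {q : ℕ} (hq : 1 ≤ q) : Kdeg k n (n * (q-1) + 1) ≤ mq k n q := by
  intro f hf
  rw [mem_mq]
  intro d hd
  by_contra hcon
  push_neg at hcon
  have hdeg : d.degree ≤ n * (q-1) := by
    have hdd : d.degree = ∑ i : Fin n, d i := by
      rw [show d.degree = ∑ i ∈ d.support, d i from rfl]
      exact Finset.sum_subset (Finset.subset_univ _)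
        (fun x _ hx => Finsupp.notMem_support_iff.1 hx)
    rw [hdd]
    calc ∑ i : Fin n, d i ≤ ∑ _i : Fin n, (q-1) :=
          Finset.sum_le_sum (fun i _ => by have := hcon i; omega)
    _ = n * (q-1) := by simp [Finset.sum_const, mul_comm]
  have := hf d hd
  omega

end Stmt16Aux

namespace Stmt16Aux

open Pointwise

variable {k : Type*} [Field k] {n : ℕ}

/-- the irrelevant maximal ideal -/
noncomputable def mI (k : Type*) [Field k] (n : ℕ) : Ideal (MvPolynomial (Fin n) k) :=
  Ideal.span (Set.range (X : Fin n → MvPolynomial (Fin n) k))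

lemma degree_coe (d : Fin n →₀ ℕ) : d.degree = Finsupp.weight 1 d := by
  rw [Finsupp.degree_eq_weight_one]; rfl

lemma homog_mem_Kdeg {D : ℕ} {g : MvPolynomial (Fin n) k} (hg : g.IsHomogeneous D) :
    g ∈ Kdeg k n D := by
  intro d hd
  rw [degree_coe, hg (mem_support_iff.1 hd)]

lemma monomial_mem_mI_pow {c : ℕ} {e : Fin n →₀ ℕ} (he : e.degree = c) :
    monomial e (1:k) ∈ mI k n ^ c := by
  induction c generalizing e with
  | zero => simp
  | succ c ih =>
      have hne : e ≠ 0 := by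
        intro h; rw [h] at he; simp at he
      obtain ⟨i, hi⟩ : ∃ i, e i ≠ 0 := by
        by_contra hcon; push_neg at hcon
        exact hne (Finsupp.ext fun i => hcon i)
      have hdecomp : Finsupp.single i 1 + (e - Finsupp.single i 1) = e := by
        ext j
        classical
        simp only [Finsupp.coe_add, Finsupp.coe_tsub, Pi.add_apply, Pi.sub_apply]
        rcases eq_or_ne j i with rfl | hji
        · simp; omega
        · simp [Finsupp.single_apply, Ne.symm hji]
      have hdeg : (e - Finsupp.single i 1).degree = c := by
        have h1 : e.degree = (Finsupp.single i 1).degree + (e - Finsupp.single i 1).degree := by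
          conv_lhs => rw [← hdecomp]
          simp only [degree_coe, map_add]
        have h2 : (Finsupp.single i 1).degree = 1 := by
          rw [show (Finsupp.single i 1 : Fin n →₀ ℕ).degree
            = ∑ j ∈ (Finsupp.single i 1 : Fin n →₀ ℕ).support, Finsupp.single i 1 j from rfl]
          simp [Finsupp.support_single_ne_zero]
        omega
      have : monomial e (1:k) = X i * monomial (e - Finsupp.single i 1) (1:k) := by
        rw [X, monomial_mul, hdecomp, one_mul]
      rw [this, pow_succ, mul_comm ((mI k n) ^ c) (mI k n)]
      exact Ideal.mul_mem_mul (Ideal.subset_span ⟨i, rfl⟩) (ih hdeg)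

lemma homog_mem_mI_pow {D : ℕ} {g : MvPolynomial (Fin n) k} (hg : g.IsHomogeneous D) :
    g ∈ mI k n ^ D := by
  rw [← support_sum_monomial_coeff g]
  refine Ideal.sum_mem _ fun d hd => ?_
  have hdeg : d.degree = D := by
    rw [degree_coe]; exact hg (mem_support_iff.1 hd)
  have : monomial d (coeff d g) = C (coeff d g) * monomial d (1:k) := by
    rw [C_mul_monomial, mul_one]
  rw [this]
  exact Ideal.mul_mem_left _ _ (monomial_mem_mI_pow hdeg)

lemma span_homog_le_mI_pow {D : ℕ} {G : Set (MvPolynomial (Fin n) k)}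
    (hG : ∀ g ∈ G, g.IsHomogeneous D) : Ideal.span G ≤ mI k n ^ D :=
  Ideal.span_le.2 fun g hg => homog_mem_mI_pow (hG g hg)

lemma exists_witness {G : Set (MvPolynomial (Fin n) k)} {d1 a q : ℕ}
    (hhom : ∀ g ∈ G, g.IsHomogeneous d1)
    (h : ¬ Ideal.span G ^ a ≤ mq k n q) :
    ∃ w : MvPolynomial (Fin n) k,
      w ∈ Ideal.span G ^ a ∧ w.IsHomogeneous (d1 * a) ∧ w ∉ mq k n q := by
  have hsp : Ideal.span G ^ a = Ideal.span (G ^ a) := Submodule.span_pow G a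
  rw [hsp, Ideal.span_le] at h
  obtain ⟨w, hwG, hwq⟩ := Set.not_subset.1 h
  refine ⟨w, ?_, ?_, hwq⟩
  · rw [hsp]; exact Ideal.subset_span hwG
  · obtain ⟨f, hf⟩ := Set.mem_pow.1 hwG
    have : w = ∏ i : Fin a, (f i : MvPolynomial (Fin n) k) := by
      rw [← hf, List.prod_ofFn]
    rw [this]
    have := MvPolynomial.IsHomogeneous.prod Finset.univ
      (fun i : Fin a => (f i : MvPolynomial (Fin n) k)) (fun _ => d1)
      (fun i _ => hhom _ (f i).2)
    simpa [mul_comm, Finset.sum_const] using this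

lemma exists_fill (g : Fin n → ℕ) (s : ℕ) (hs : s ≤ ∑ i, g i) :
    ∃ e : Fin n → ℕ, (∀ i, e i ≤ g i) ∧ ∑ i, e i = s := by
  induction s with
  | zero => exact ⟨0, fun i => Nat.zero_le _, by simp⟩
  | succ s ih =>
      obtain ⟨e, he, hesum⟩ := ih (le_trans (Nat.le_succ s) hs)
      obtain ⟨i, hi⟩ : ∃ i, e i < g i := by
        by_contra hcon; push_neg at hcon
        have : ∑ i, g i ≤ ∑ i, e i := Finset.sum_le_sum fun i _ => hcon i
        omega
      refine ⟨Function.update e i (e i + 1), fun j => ?_, ?_⟩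
      · rcases eq_or_ne j i with rfl | hji
        · simp; omega
        · simp [Function.update_of_ne hji]; exact he j
      · rw [Finset.sum_update_of_mem (Finset.mem_univ i), ← Finset.erase_eq]
        have h2 : ∑ x ∈ Finset.univ.erase i, e x + e i = ∑ x, e x :=
          Finset.sum_erase_add _ _ (Finset.mem_univ i)
        omega

end Stmt16Aux

namespace Stmt16Aux

open Pointwise

variable {k : Type*} [Field k] {n : ℕ}

lemma degree_eq_sum_univ (d : Fin n →₀ ℕ) : d.degree = ∑ i : Fin n, d i := by
  rw [show d.degree = ∑ i ∈ d.support, d i from rfl]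
  exact Finset.sum_subset (Finset.subset_univ _)
    (fun x _ hx => Finsupp.notMem_support_iff.1 hx)

lemma add_pow_le_ideal {R : Type*} [CommRing R] (P Q L : Ideal R) (t : ℕ)
    (h : ∀ a ≤ t, P ^ a * Q ^ (t - a) ≤ L) : (P + Q) ^ t ≤ L := by
  rw [add_pow, Ideal.sum_eq_sup]
  apply Finset.sup_le
  intro i hi
  have hit : i ≤ t := by
    have := Finset.mem_range.1 hi; omega
  exact Ideal.mul_le_left.trans (h i hit)

lemma nuF_eq_of {q t0 : ℕ} {J : Ideal (MvPolynomial (Fin n) k)}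
    (ht0 : ¬ J ^ t0 ≤ mq k n q) (ht1 : J ^ (t0 + 1) ≤ mq k n q) :
    nuF J q = t0 := by
  have hdc : ∀ s, ¬ J ^ s ≤ mq k n q → s ≤ t0 := by
    intro s hs
    by_contra hcon
    exact hs (le_trans (Ideal.pow_le_pow_right (by omega)) ht1)
  apply le_antisymm
  · exact csSup_le ⟨t0, ht0⟩ hdc
  · exact le_csSup ⟨t0, fun s hs => hdc s hs⟩ ht0

/-- specification of `ν₁ = nuF I1 q`. -/
lemma nu1_spec {q d1 : ℕ} {G : Set (MvPolynomial (Fin n) k)}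
    {I1 : Ideal (MvPolynomial (Fin n) k)} (hq : 1 ≤ q)
    (hhom : ∀ g ∈ G, g.IsHomogeneous d1) (hGI : I1 = Ideal.span G)
    (hI1 : I1 = ⊥ ∨ 1 ≤ d1) :
    ¬ I1 ^ (nuF I1 q) ≤ mq k n q ∧ I1 ^ (nuF I1 q + 1) ≤ mq k n q ∧
      d1 * nuF I1 q ≤ n * (q - 1) := by
  have hKd : I1 ≤ Kdeg k n d1 := by
    rw [hGI]; exact Ideal.span_le.2 fun g hg => homog_mem_Kdeg (hhom g hg)
  have h0 : ¬ I1 ^ 0 ≤ mq k n q := by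
    intro h
    refine one_not_mem_mq hq (h ?_)
    rw [pow_zero, Ideal.one_eq_top]
    trivial
  have hbdd : BddAbove {t : ℕ | ¬ I1 ^ t ≤ mq k n q} := by
    refine ⟨n * (q - 1), fun t ht => ?_⟩
    rcases hI1 with hbot | hd1
    · by_contra hcon
      refine ht ?_
      rw [hbot, ← Ideal.zero_eq_bot, zero_pow (by omega : t ≠ 0)]
      exact bot_le
    · by_contra hcon
      push_neg at hcon
      refine ht (le_trans (le_trans (Kdeg_pow hKd) (Kdeg_anti ?_)) (Kdeg_le_mq hq))
      calc n * (q-1) + 1 ≤ t := hcon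
      _ ≤ d1 * t := Nat.le_mul_of_pos_left t hd1
  have hmem : nuF I1 q ∈ {t : ℕ | ¬ I1 ^ t ≤ mq k n q} :=
    Nat.sSup_mem ⟨0, h0⟩ hbdd
  have hrfl : nuF I1 q = sSup {t : ℕ | ¬ I1 ^ t ≤ mq k n q} := rfl
  have hsucc : I1 ^ (nuF I1 q + 1) ≤ mq k n q := by
    by_contra hcon
    have h2 := le_csSup hbdd (show nuF I1 q + 1 ∈ {t : ℕ | ¬ I1 ^ t ≤ mq k n q} from hcon)
    rw [← hrfl] at h2
    omega
  refine ⟨hmem, hsucc, ?_⟩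
  by_contra hcon
  push_neg at hcon
  exact hmem (le_trans (le_trans (Kdeg_pow hKd) (Kdeg_anti (by omega))) (Kdeg_le_mq hq))

end Stmt16Aux

namespace Stmt16Aux

open Pointwise

variable {k : Type*} [Field k] {n : ℕ}

lemma nu_formula {q d1 d2 : ℕ} {G : Set (MvPolynomial (Fin n) k)}
    {I1 : Ideal (MvPolynomial (Fin n) k)} (hq : 1 ≤ q) (hd2 : 1 ≤ d2) (hd12 : d1 ≤ d2)
    (hhom : ∀ g ∈ G, g.IsHomogeneous d1) (hGI : I1 = Ideal.span G)
    (hI1 : I1 = ⊥ ∨ 1 ≤ d1) :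
    nuF (I1 + mI k n ^ d2) q
      = nuF I1 q + (n * (q - 1) - d1 * nuF I1 q) / d2 := by
  obtain ⟨hnu1, hnu2, hnu3⟩ := nu1_spec hq hhom hGI hI1
  set ν1 := nuF I1 q with hν1
  set M := n * (q - 1) with hM
  set A := d1 * ν1 with hA
  set b0 := (M - A) / d2 with hb0
  apply nuF_eq_of
  · -- non-containment at ν1 + b0
    rw [hGI] at hnu1
    obtain ⟨w, hw1, hw2, hw3⟩ := exists_witness hhom hnu1
    rw [← hGI] at hw1
    have hw3' := hw3
    rw [mem_mq] at hw3'
    push_neg at hw3'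
    obtain ⟨d, hd, hdq⟩ := hw3'
    have hdeg : d.degree = d1 * ν1 := by
      rw [degree_coe]; exact hw2 (mem_support_iff.1 hd)
    have hsum : ∑ i : Fin n, d i = A := by rw [← degree_eq_sum_univ, hdeg]
    have hfill : d2 * b0 ≤ ∑ i : Fin n, (q - 1 - d i) := by
      have hdle : ∀ i, d i ≤ q - 1 := fun i => by have := hdq i; omega
      have hsum2 : ∑ i : Fin n, ((q - 1 - d i) + d i) = M := by
        have : ∀ i : Fin n, (q - 1 - d i) + d i = q - 1 := fun i => by
          have := hdle i; omega
        simp only [this, Finset.sum_const, Finset.card_univ, Fintype.card_fin, smul_eq_mul, hM]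
      rw [Finset.sum_add_distrib, hsum] at hsum2
      have hdiv : d2 * b0 ≤ M - A := by
        rw [hb0, mul_comm]
        exact Nat.div_mul_le_self _ _
      omega
    obtain ⟨e, he1, he2⟩ := exists_fill (fun i => q - 1 - d i) (d2 * b0) hfill
    set ef := Finsupp.equivFunOnFinite.symm e with hef
    have hefdeg : ef.degree = d2 * b0 := by
      rw [degree_eq_sum_univ]
      exact he2
    have hlam : monomial ef (1:k) ∈ (mI k n ^ d2) ^ b0 := by
      rw [← pow_mul]
      exact monomial_mem_mI_pow hefdeg
    intro hle
    have hwl : w * monomial ef 1 ∈ (I1 + mI k n ^ d2) ^ (ν1 + b0) := by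
      rw [pow_add]
      exact Ideal.mul_mono (Ideal.pow_right_mono le_sup_left _)
        (Ideal.pow_right_mono le_sup_right _) (Ideal.mul_mem_mul hw1 hlam)
    have hin := hle hwl
    rw [mem_mq] at hin
    have hsup : d + ef ∈ (w * monomial ef (1:k)).support := by
      rw [mem_support_iff, coeff_mul_monomial, mul_one]
      exact mem_support_iff.1 hd
    obtain ⟨i, hi⟩ := hin (d + ef) hsup
    have h1 := hdq i
    have h2 := he1 i
    have h3 : (d + ef) i = d i + e i := rfl
    rw [h3] at hi
    omega
  · -- containment at ν1 + b0 + 1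
    refine add_pow_le_ideal _ _ _ _ fun a ha => ?_
    by_cases hcase : a ≤ ν1
    · have hKd : I1 ≤ Kdeg k n d1 := by
        rw [hGI]; exact Ideal.span_le.2 fun g hg => homog_mem_Kdeg (hhom g hg)
      have hmIK : mI k n ≤ Kdeg k n 1 := by
        refine Ideal.span_le.2 ?_
        rintro g ⟨i, rfl⟩
        intro dd hdd
        have : dd = Finsupp.single i 1 := by
          have := support_X (R := k) (n := i)
          rw [this] at hdd
          simpa using hdd
        rw [this, degree_eq_sum_univ]
        calc 1 = Finsupp.single i 1 i := by simp
        _ ≤ ∑ j : Fin n, Finsupp.single i 1 j :=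
            Finset.single_le_sum (fun j _ => Nat.zero_le _) (Finset.mem_univ i)
      set b := ν1 + b0 + 1 - a with hb
      have hterm : I1 ^ a * (mI k n ^ d2) ^ b ≤ Kdeg k n (d1 * a + d2 * b) := by
        refine le_trans (Ideal.mul_mono (Kdeg_pow hKd) ?_) Kdeg_mul
        rw [← pow_mul]
        have := Kdeg_pow (k := k) (n := n) (a := d2 * b) hmIK
        simpa [one_mul] using this
      refine le_trans hterm (le_trans (Kdeg_anti ?_) (Kdeg_le_mq hq))
      -- arithmetic : M + 1 ≤ d1 * a + d2 * b
      have hbsplit : b = (ν1 - a) + (b0 + 1) := by omega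
      have h1 : d1 * (ν1 - a) ≤ d2 * (ν1 - a) := Nat.mul_le_mul_right _ hd12
      have h2 : M - A + 1 ≤ d2 * (b0 + 1) := by
        have hdm := Nat.div_add_mod (M - A) d2
        rw [← hb0] at hdm
        have hmlt : (M - A) % d2 < d2 := Nat.mod_lt _ (by omega)
        rw [Nat.mul_succ]
        omega
      have h3 : d1 * a + d1 * (ν1 - a) = A := by
        rw [← Nat.mul_add, hA]
        congr 1
        omega
      calc M + 1 ≤ A + (M - A + 1) := by omega
      _ ≤ (d1 * a + d1 * (ν1 - a)) + d2 * (b0 + 1) := add_le_add (le_of_eq h3.symm) h2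
      _ ≤ (d1 * a + d2 * (ν1 - a)) + d2 * (b0 + 1) :=
          add_le_add (add_le_add le_rfl h1) le_rfl
      _ = d1 * a + (d2 * (ν1 - a) + d2 * (b0 + 1)) := by ring
      _ = d1 * a + d2 * b := by rw [← Nat.mul_add, ← hbsplit]
    · exact le_trans Ideal.mul_le_left
        (le_trans (Ideal.pow_le_pow_right (by omega)) hnu2)

end Stmt16Aux

namespace Stmt16Aux

open Pointwise

variable {k : Type*} [Field k] {n : ℕ}

lemma pow_mem_of_icl {R : Type*} [CommRing R] {I : Ideal R} {r : R} (hr : r ∈ icl I) :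
    ∃ N, 1 ≤ N ∧ ∀ s, r ^ s ∈ I ^ (s + 1 - N) := by
  obtain ⟨N, hN, a, ha, heq⟩ := hr
  refine ⟨N, hN, ?_⟩
  intro s
  induction s using Nat.strong_induction_on with
  | _ s IH =>
    by_cases hs : s + 1 ≤ N
    · rw [show s + 1 - N = 0 by omega, pow_zero, Ideal.one_eq_top]
      trivial
    · have hsN : N ≤ s := by omega
      have hrN : r ^ N = -∑ i ∈ Finset.range N, a (i + 1) * r ^ (N - (i + 1)) := by
        linear_combination heq
      have hrs : r ^ s = -∑ i ∈ Finset.range N, a (i + 1) * r ^ (s - (i + 1)) := by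
        calc r ^ s = r ^ (s - N) * r ^ N := by rw [← pow_add]; congr 1; omega
        _ = -∑ i ∈ Finset.range N, a (i + 1) * (r ^ (s - N) * r ^ (N - (i + 1))) := by
            rw [hrN, mul_neg, Finset.mul_sum]
            congr 1
            refine Finset.sum_congr rfl fun i _ => by ring
        _ = -∑ i ∈ Finset.range N, a (i + 1) * r ^ (s - (i + 1)) := by
            congr 1
            refine Finset.sum_congr rfl fun i hi => ?_
            have hiN : i + 1 ≤ N := Finset.mem_range.1 hi
            rw [← pow_add]
            congr 2
            omega
      rw [hrs]
      refine neg_mem (Ideal.sum_mem _ fun i hi => ?_)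
      have hiN : i + 1 ≤ N := Finset.mem_range.1 hi
      have h1 := Ideal.mul_mem_mul (ha (i + 1)) (IH (s - (i + 1)) (by omega))
      rw [← pow_add] at h1
      exact Ideal.pow_le_pow_right (by omega) h1

lemma span_finset_pow_le {R : Type*} [CommRing R] (I : Ideal R) (N : R → ℕ)
    (F : Finset R) (hN : ∀ g ∈ F, 1 ≤ N g ∧ ∀ s, g ^ s ∈ I ^ (s + 1 - N g)) :
    ∀ b, (Ideal.span (F : Set R)) ^ b ≤ I ^ (b - ∑ g ∈ F, (N g - 1)) := by
  classical
  induction F using Finset.induction with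
  | empty =>
      intro b
      rcases Nat.eq_zero_or_pos b with rfl | hb
      · simp
      · rw [Finset.coe_empty, Ideal.span_empty, ← Ideal.zero_eq_bot,
          zero_pow (by omega : b ≠ 0)]
        exact bot_le
  | @insert g F hg IH =>
      intro b
      have hNg := hN g (Finset.mem_insert_self g F)
      have hIH := IH fun g' hg' => hN g' (Finset.mem_insert_of_mem hg')
      rw [Finset.coe_insert, Ideal.span_insert, ← Ideal.add_eq_sup]
      rw [Finset.sum_insert hg]
      refine add_pow_le_ideal _ _ _ _ fun a ha => ?_
      have h1 : Ideal.span {g} ^ a ≤ I ^ (a + 1 - N g) := by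
        rw [Ideal.span_singleton_pow, Ideal.span_singleton_le_iff_mem]
        exact hNg.2 a
      have h2 := hIH (b - a)
      refine le_trans (Ideal.mul_mono h1 h2) ?_
      rw [← pow_add]
      exact Ideal.pow_le_pow_right (by omega)

lemma mI_pow_le_of_icl {d2 : ℕ} {I : Ideal (MvPolynomial (Fin n) k)}
    (hic : ((mI k n ^ d2 : Ideal (MvPolynomial (Fin n) k)) : Set _) ⊆ icl I) :
    ∃ C : ℕ, ∀ b, (mI k n ^ d2) ^ b ≤ I ^ (b - C) := by
  obtain ⟨F, hF⟩ : (mI k n ^ d2).FG := IsNoetherian.noetherian _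
  have hmem : ∀ g ∈ F, g ∈ icl I := by
    intro g hg
    exact hic (by rw [← hF]; exact Ideal.subset_span hg)
  have hNex : ∀ g ∈ F, ∃ N, 1 ≤ N ∧ ∀ s, g ^ s ∈ I ^ (s + 1 - N) :=
    fun g hg => pow_mem_of_icl (hmem g hg)
  classical
  choose! N hN1 hN2 using hNex
  refine ⟨∑ g ∈ F, (N g - 1), fun b => ?_⟩
  rw [← hF]
  exact span_finset_pow_le I N F (fun g hg => ⟨hN1 g hg, hN2 g hg⟩) b

lemma bdd_of_le_Kdeg1 {q : ℕ} {J : Ideal (MvPolynomial (Fin n) k)} (hq : 1 ≤ q)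
    (h : J ≤ Kdeg k n 1) : BddAbove {t : ℕ | ¬ J ^ t ≤ mq k n q} := by
  refine ⟨n * (q - 1), fun t ht => ?_⟩
  by_contra hcon
  push_neg at hcon
  refine ht (le_trans (le_trans (Kdeg_pow h) (Kdeg_anti (by omega))) (Kdeg_le_mq hq))

lemma mem_nuF_set {q : ℕ} {J : Ideal (MvPolynomial (Fin n) k)} (hq : 1 ≤ q)
    (hbdd : BddAbove {t : ℕ | ¬ J ^ t ≤ mq k n q}) :
    ¬ J ^ (nuF J q) ≤ mq k n q := by
  have h0 : ¬ J ^ 0 ≤ mq k n q := by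
    intro h
    refine one_not_mem_mq hq (h ?_)
    rw [pow_zero, Ideal.one_eq_top]
    trivial
  exact Nat.sSup_mem ⟨0, h0⟩ hbdd

lemma nuF_mono {q : ℕ} {J1 J2 : Ideal (MvPolynomial (Fin n) k)} (hq : 1 ≤ q)
    (h : J1 ≤ J2) (hbdd : BddAbove {t : ℕ | ¬ J2 ^ t ≤ mq k n q}) :
    nuF J1 q ≤ nuF J2 q := by
  have h0 : ¬ J1 ^ 0 ≤ mq k n q := by
    intro h
    refine one_not_mem_mq hq (h ?_)
    rw [pow_zero, Ideal.one_eq_top]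
    trivial
  refine csSup_le_csSup hbdd ⟨0, h0⟩ ?_
  intro t ht hle
  exact ht (le_trans (Ideal.pow_right_mono h t) hle)

lemma nuF_ge_sub {q C : ℕ} {J1 J2 : Ideal (MvPolynomial (Fin n) k)} (hq : 1 ≤ q)
    (h : ∀ t, J2 ^ t ≤ J1 ^ (t - C))
    (hbdd1 : BddAbove {t : ℕ | ¬ J1 ^ t ≤ mq k n q})
    (hbdd2 : BddAbove {t : ℕ | ¬ J2 ^ t ≤ mq k n q}) :
    nuF J2 q - C ≤ nuF J1 q := by
  have hmem := mem_nuF_set hq hbdd2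
  have h1 : ¬ J1 ^ (nuF J2 q - C) ≤ mq k n q := fun hle => hmem (le_trans (h _) hle)
  exact le_csSup hbdd1 h1

end Stmt16Aux


open Stmt16Aux

/-- with `I = I_1 + I_2` an `m`-primary homogeneous ideal,
`I_1` generated by `d_1`-forms, `I_2` by `d_2`-forms, `d_1 < d_2`, and
`m^{d_2}` contained in the integral closure of `I`, the F-pure thresholds
satisfy `c(I) = n/d_2 + c(I_1)·(d_2 - d_1)/d_2`. -/
theorem stmt16 (k : Type*) [Field k] (p : ℕ) (hp : p.Prime) [CharP k p] (n : ℕ)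
    (I1 I2 : Ideal (MvPolynomial (Fin n) k)) (d1 d2 : ℕ) (hd : d1 < d2)
    (h1 : ∃ G : Set (MvPolynomial (Fin n) k),
      (∀ g ∈ G, g.IsHomogeneous d1) ∧ I1 = Ideal.span G)
    (h2 : ∃ G : Set (MvPolynomial (Fin n) k),
      (∀ g ∈ G, g.IsHomogeneous d2) ∧ I2 = Ideal.span G)
    (hprim : (I1 + I2).radical =
      Ideal.span (Set.range (X : Fin n → MvPolynomial (Fin n) k)))
    (hic : ((Ideal.span (Set.range (X : Fin n → MvPolynomial (Fin n) k)) ^ d2 :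
        Ideal (MvPolynomial (Fin n) k)) : Set _) ⊆ icl (I1 + I2))
    (c1 : ℝ)
    (hc1 : Tendsto (fun e : ℕ => (nuF I1 (p ^ e) : ℝ) / ((p : ℝ) ^ e)) atTop (nhds c1)) :
    Tendsto (fun e : ℕ => (nuF (I1 + I2) (p ^ e) : ℝ) / ((p : ℝ) ^ e)) atTop
      (nhds ((n : ℝ) / (d2 : ℝ) + c1 * (((d2 : ℝ) - (d1 : ℝ)) / (d2 : ℝ)))) := by
  obtain ⟨G1, hG1hom, hG1span⟩ := h1
  obtain ⟨G2, hG2hom, hG2span⟩ := h2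
  set I : Ideal (MvPolynomial (Fin n) k) := I1 + I2 with hI
  have hd2 : 1 ≤ d2 := by omega
  have hd12 : d1 ≤ d2 := by omega
  -- `1 ∉ Kdeg 1`
  have hone : (1 : MvPolynomial (Fin n) k) ∉ Kdeg k n 1 := by
    intro h
    have h0 : (0 : Fin n →₀ ℕ) ∈ (1 : MvPolynomial (Fin n) k).support := by
      rw [mem_support_iff]
      classical
      simp [coeff_one]
    have := h 0 h0
    simp at this
  have hmIK : mI k n ≤ Kdeg k n 1 := by
    refine Ideal.span_le.2 ?_
    rintro g ⟨i, rfl⟩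
    intro dd hdd
    have hdX : dd = Finsupp.single i 1 := by
      have hsX := support_X (R := k) (n := i)
      rw [hsX] at hdd
      simpa using hdd
    rw [hdX, degree_eq_sum_univ]
    calc 1 = Finsupp.single i 1 i := by simp
    _ ≤ ∑ j : Fin n, Finsupp.single i 1 j :=
        Finset.single_le_sum (fun j _ => Nat.zero_le _) (Finset.mem_univ i)
  -- `I1 = ⊥ ∨ 1 ≤ d1`
  have hI1alt : I1 = ⊥ ∨ 1 ≤ d1 := by
    rcases Nat.eq_zero_or_pos d1 with hd1 | hd1
    · left
      by_contra hbot
      rw [hG1span, Ideal.span_eq_bot] at hbot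
      push_neg at hbot
      obtain ⟨g, hgG, hgne⟩ := hbot
      have hhg := hG1hom g hgG
      -- g is a nonzero constant, hence a unit, hence 1 ∈ I1
      have hgC : g = C (constantCoeff g) := by
        ext d
        rcases eq_or_ne d 0 with rfl | hdne
        · simp [constantCoeff_eq]
        · rw [coeff_C, if_neg (Ne.symm hdne)]
          by_contra hcoeff
          have := hhg hcoeff
          rw [hd1] at this
          have : d = 0 := by
            have hdeg0 : d.degree = 0 := by rw [degree_coe, this]
            exact (Finsupp.degree_eq_zero_iff d).1 hdeg0
          exact hdne this
      have hc0 : constantCoeff g ≠ 0 := by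
        intro hc
        rw [hc, map_zero] at hgC
        exact hgne hgC
      have hone_mem : (1 : MvPolynomial (Fin n) k) ∈ I1 := by
        have hg_mem : C (constantCoeff g) ∈ I1 := by
          rw [← hgC, hG1span]; exact Ideal.subset_span hgG
        have hmul := Ideal.mul_mem_left I1 (C (constantCoeff g)⁻¹) hg_mem
        rwa [← map_mul, inv_mul_cancel₀ hc0, map_one] at hmul
      have h1rad : (1 : MvPolynomial (Fin n) k) ∈ I.radical :=
        Ideal.le_radical (Submodule.mem_sup_left hone_mem)
      rw [hprim] at h1rad
      exact hone (hmIK h1rad)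
    · right; exact hd1
  -- relation between I and J = I1 + mI^d2
  set J : Ideal (MvPolynomial (Fin n) k) := I1 + mI k n ^ d2 with hJ
  have hI2m : I2 ≤ mI k n ^ d2 := by
    rw [hG2span]; exact span_homog_le_mI_pow hG2hom
  have hIJ : I ≤ J := by
    rw [hI, hJ, Ideal.add_eq_sup, Ideal.add_eq_sup]
    exact sup_le_sup_left hI2m I1
  have hI1K : I1 ≤ Kdeg k n 1 := by
    rcases hI1alt with hbot | hd1
    · rw [hbot]; exact bot_le
    · refine le_trans ?_ (Kdeg_anti hd1)
      rw [hG1span]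
      exact Ideal.span_le.2 fun g hg => homog_mem_Kdeg (hG1hom g hg)
  have hJK1 : J ≤ Kdeg k n 1 := by
    rw [hJ, Ideal.add_eq_sup]
    refine sup_le hI1K ?_
    refine le_trans (Kdeg_pow hmIK) (Kdeg_anti ?_)
    omega
  obtain ⟨C, hC⟩ := mI_pow_le_of_icl (d2 := d2) (I := I) hic
  have hJI : ∀ t, J ^ t ≤ I ^ (t - C) := by
    intro t
    rw [hJ]
    refine add_pow_le_ideal _ _ _ _ fun a ha => ?_
    have hh1 : I1 ^ a ≤ I ^ a := Ideal.pow_right_mono le_sup_left a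
    refine le_trans (Ideal.mul_mono hh1 (hC (t - a))) ?_
    rw [← pow_add]
    exact Ideal.pow_le_pow_right (by omega)
  -- positivity of p
  have hp2 : 2 ≤ p := hp.two_le
  have hpR : (1:ℝ) < (p:ℝ) := by exact_mod_cast hp2.trans_lt' (by norm_num)
  have hd2R : (0:ℝ) < (d2:ℝ) := by exact_mod_cast hd2
  -- key pointwise estimate
  have key : ∀ e : ℕ,
      |(nuF I (p ^ e) : ℝ) / ((p:ℝ) ^ e) -
        ((nuF I1 (p ^ e) : ℝ) / ((p:ℝ) ^ e) * (1 - (d1:ℝ)/(d2:ℝ)) +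
          ((n:ℝ)/(d2:ℝ)) * (1 - ((p:ℝ)⁻¹) ^ e))| ≤ ((C:ℝ) + 1) * ((p:ℝ)⁻¹) ^ e := by
    intro e
    set q := p ^ e with hqdef
    have hq : 1 ≤ q := Nat.one_le_pow _ _ (by omega)
    have hbddJ : BddAbove {t : ℕ | ¬ J ^ t ≤ mq k n q} := bdd_of_le_Kdeg1 hq hJK1
    have hSsub : {t : ℕ | ¬ I ^ t ≤ mq k n q} ⊆ {t : ℕ | ¬ J ^ t ≤ mq k n q} := by
      intro t ht hle
      exact ht (le_trans (Ideal.pow_right_mono hIJ t) hle)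
    have hbddI : BddAbove {t : ℕ | ¬ I ^ t ≤ mq k n q} := hbddJ.mono hSsub
    have hle1 : nuF I q ≤ nuF J q := nuF_mono hq hIJ hbddJ
    have hle2 : nuF J q - C ≤ nuF I q := nuF_ge_sub hq hJI hbddI hbddJ
    have hform : nuF J q = nuF I1 q + (n * (q - 1) - d1 * nuF I1 q) / d2 :=
      nu_formula hq hd2 hd12 hG1hom hG1span hI1alt
    obtain ⟨-, -, hAM⟩ := nu1_spec hq hG1hom hG1span hI1alt
    set ν1 := nuF I1 q with hν1
    set M := n * (q - 1) with hM
    set A := d1 * ν1 with hA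
    set B := (M - A) / d2 with hB
    have hBl : d2 * B ≤ M - A := by rw [hB]; exact Nat.mul_div_le _ _
    have hBu : M - A < d2 * B + d2 := by
      have hdm := Nat.div_add_mod (M - A) d2
      rw [← hB] at hdm
      have hmlt : (M - A) % d2 < d2 := Nat.mod_lt _ (by omega)
      omega
    -- real versions
    set Q : ℝ := (p:ℝ) ^ e with hQ
    have hQpos : (0:ℝ) < Q := by positivity
    have hqQ : (q : ℝ) = Q := by rw [hqdef, hQ]; push_cast; ring
    have hx1 : (B:ℝ) ≤ ((M:ℝ) - (A:ℝ)) / (d2:ℝ) := by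
      rw [le_div_iff₀ hd2R]
      have : ((d2 * B : ℕ) : ℝ) ≤ ((M - A : ℕ) : ℝ) := by exact_mod_cast hBl
      rw [Nat.cast_sub hAM] at this
      push_cast at this
      linarith
    have hx2 : ((M:ℝ) - (A:ℝ)) / (d2:ℝ) < (B:ℝ) + 1 := by
      rw [div_lt_iff₀ hd2R]
      have : ((M - A : ℕ) : ℝ) < ((d2 * B + d2 : ℕ) : ℝ) := by exact_mod_cast hBu
      rw [Nat.cast_sub hAM] at this
      push_cast at this
      linarith
    have hn1 : (nuF I q : ℝ) ≤ (ν1:ℝ) + ((M:ℝ) - (A:ℝ)) / (d2:ℝ) := by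
      have : (nuF I q : ℝ) ≤ (ν1:ℝ) + (B:ℝ) := by
        have : nuF I q ≤ ν1 + B := by omega
        exact_mod_cast this
      linarith
    have hn2 : (ν1:ℝ) + ((M:ℝ) - (A:ℝ)) / (d2:ℝ) - ((C:ℝ) + 1) ≤ (nuF I q : ℝ) := by
      have : (ν1:ℝ) + (B:ℝ) - (C:ℝ) ≤ (nuF I q : ℝ) := by
        have : ν1 + B ≤ nuF I q + C := by omega
        have := (Nat.cast_le (α := ℝ)).2 this
        push_cast at this
        linarith
      linarith
    have hGeq : (ν1:ℝ) / Q * (1 - (d1:ℝ)/(d2:ℝ)) + ((n:ℝ)/(d2:ℝ)) * (1 - (Q)⁻¹)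
        = ((ν1:ℝ) + ((M:ℝ) - (A:ℝ)) / (d2:ℝ)) / Q := by
      have hMR : (M:ℝ) = (n:ℝ) * ((q:ℝ) - 1) := by
        rw [hM, Nat.cast_mul, Nat.cast_sub hq]
        push_cast; ring
      have hAR : (A:ℝ) = (d1:ℝ) * (ν1:ℝ) := by rw [hA]; push_cast; ring
      rw [hMR, hAR, hqQ]
      field_simp
      ring
    have hQinv : ((p:ℝ)⁻¹) ^ e = Q⁻¹ := by rw [hQ, ← inv_pow]
    rw [hQinv, hGeq, div_sub_div_same, abs_div, abs_of_pos hQpos]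
    rw [div_le_iff₀ hQpos]
    have hQQ : ((C:ℝ) + 1) * Q⁻¹ * Q = (C:ℝ) + 1 := by
      field_simp
    rw [hQQ]
    rw [abs_le]
    constructor <;> linarith
  -- pass to the limit
  have hu0 : Tendsto (fun e : ℕ => ((p:ℝ)⁻¹) ^ e) atTop (nhds 0) := by
    apply tendsto_pow_atTop_nhds_zero_of_lt_one
    · positivity
    · rw [inv_lt_one_iff₀]; right; exact hpR
  have hGlim : Tendsto (fun e : ℕ =>
      (nuF I1 (p ^ e) : ℝ) / ((p:ℝ) ^ e) * (1 - (d1:ℝ)/(d2:ℝ)) +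
        ((n:ℝ)/(d2:ℝ)) * (1 - ((p:ℝ)⁻¹) ^ e)) atTop
      (nhds (c1 * (1 - (d1:ℝ)/(d2:ℝ)) + ((n:ℝ)/(d2:ℝ)) * (1 - 0))) :=
    (hc1.mul_const _).add (((tendsto_const_nhds.sub hu0)).const_mul _)
  have herr : Tendsto (fun e : ℕ =>
      (nuF I (p ^ e) : ℝ) / ((p:ℝ) ^ e) -
        ((nuF I1 (p ^ e) : ℝ) / ((p:ℝ) ^ e) * (1 - (d1:ℝ)/(d2:ℝ)) +
          ((n:ℝ)/(d2:ℝ)) * (1 - ((p:ℝ)⁻¹) ^ e))) atTop (nhds 0) := by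
    apply squeeze_zero_norm (fun e => key e)
    simpa using hu0.const_mul ((C:ℝ) + 1)
  have hfinal := hGlim.add herr
  have heq1 : (fun e : ℕ =>
      ((nuF I1 (p ^ e) : ℝ) / ((p:ℝ) ^ e) * (1 - (d1:ℝ)/(d2:ℝ)) +
        ((n:ℝ)/(d2:ℝ)) * (1 - ((p:ℝ)⁻¹) ^ e)) +
      ((nuF I (p ^ e) : ℝ) / ((p:ℝ) ^ e) -
        ((nuF I1 (p ^ e) : ℝ) / ((p:ℝ) ^ e) * (1 - (d1:ℝ)/(d2:ℝ)) +
          ((n:ℝ)/(d2:ℝ)) * (1 - ((p:ℝ)⁻¹) ^ e))))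
      = fun e : ℕ => (nuF I (p ^ e) : ℝ) / ((p:ℝ) ^ e) := by
    funext e; ring
  rw [heq1] at hfinal
  have heq2 : c1 * (1 - (d1:ℝ)/(d2:ℝ)) + ((n:ℝ)/(d2:ℝ)) * (1 - 0)
      = (n:ℝ) / (d2:ℝ) + c1 * (((d2:ℝ) - (d1:ℝ)) / (d2:ℝ)) := by
    field_simp
    ring
  rw [heq2] at hfinal
  rw [add_zero] at hfinal
  exact hfinal
end
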